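/- arXiv:1012.4927 — 8 statements merged into one kernel-verified Lean document; each statement's English description precedes it below -/
import Mathlib

section
/- The adjoint of the densely defined operator T : H_A ⊇ dom(A*A) → H₁, T f = A*(A f), is the operator J_A : H₁ ⊇ dom(A) → H_A acting as the identity map f ↦ f; conversely, the adjoint of J_A equals T, i.e., (A*A ι_A)* = J_A and J_A* = A*A ι_A. -/
open scoped InnerProductSpace

/-- Lemma 2.7. Let `A : dom(A) ⊆ H₁ → H₂` be densely defined, closed with
`A*A ≥ ε I` for some `ε > 0`.  Let `HA` be the Hilbert space consisting of `dom(A)` with the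
inner product `(f,g)_A = ⟪Af, Ag⟫`, realized via the linear bijection `ι : HA → dom(A) ⊆ H₁`
(so `ι = ι_A` is the embedding and `J = J_A = ι_A⁻¹ : H₁ ⊇ dom(A) → HA` is the identity map).
Let `T = A* A ι_A` be the operator `HA ⊇ dom(A*A) → H₁`, `f ↦ A*(A f)`.
Then `(A*A ι_A)* = J_A` and `J_A* = A*A ι_A`. -/
theorem adjoint_of_AstarA_iota_eq_J
    {H₁ H₂ HA : Type*}
    [NormedAddCommGroup H₁] [InnerProductSpace ℂ H₁] [CompleteSpace H₁]
    [TopologicalSpace.SeparableSpace H₁]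
    [NormedAddCommGroup H₂] [InnerProductSpace ℂ H₂] [CompleteSpace H₂]
    [TopologicalSpace.SeparableSpace H₂]
    [NormedAddCommGroup HA] [InnerProductSpace ℂ HA] [CompleteSpace HA]
    (A : H₁ →ₗ.[ℂ] H₂)
    (hdense : Dense (A.domain : Set H₁))
    (hclosed : A.IsClosed)
    (ε : ℝ) (hε : 0 < ε)
    (hcoercive : ∀ f : A.domain, ε * ‖(f : H₁)‖ ^ 2 ≤ ‖A f‖ ^ 2)
    -- `ι = ι_A : HA → H₁`, a linear bijection from `HA` onto `dom(A)`:
    (ι : HA →ₗ[ℂ] H₁)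
    (hmem : ∀ f : HA, ι f ∈ A.domain)
    (hsurj : ∀ x ∈ A.domain, ∃ f : HA, ι f = x)
    (hinj : Function.Injective ι)
    -- the inner product of `HA` is `(f,g)_A = ⟪A ι f, A ι g⟫`:
    (hinner : ∀ f g : HA, ⟪f, g⟫_ℂ = ⟪A ⟨ι f, hmem f⟩, A ⟨ι g, hmem g⟩⟫_ℂ)
    -- `T = A* A ι_A : HA ⊇ dom(A* A ι_A) → H₁`:
    (T : HA →ₗ.[ℂ] H₁)
    (hTdom : ∀ f : HA, f ∈ T.domain ↔ A ⟨ι f, hmem f⟩ ∈ A.adjoint.domain)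
    (hTval : ∀ (f : T.domain) (h : A ⟨ι (f : HA), hmem (f : HA)⟩ ∈ A.adjoint.domain),
      T f = A.adjoint ⟨A ⟨ι (f : HA), hmem (f : HA)⟩, h⟩)
    -- `J = J_A : H₁ ⊇ dom(A) → HA`, `f ↦ f` (i.e. `ι (J f) = f`):
    (J : H₁ →ₗ.[ℂ] HA)
    (hJdom : J.domain = A.domain)
    (hJval : ∀ f : J.domain, ι (J f) = (f : H₁)) :
    Dense (T.domain : Set HA) ∧ T.adjoint = J ∧ J.adjoint = T := by
  -- the HA-norm equals the graph norm
  have hnorm : ∀ g : HA, ‖g‖ ^ 2 = ‖A ⟨ι g, hmem g⟩‖ ^ 2 := by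
    intro g
    have h := hinner g g
    rw [inner_self_eq_norm_sq_to_K, inner_self_eq_norm_sq_to_K] at h
    exact_mod_cast h
  -- `ι` is bounded
  have hb : ∀ g : HA, ‖ι g‖ ≤ (Real.sqrt ε)⁻¹ * ‖g‖ := by
    intro g
    have h1 : ε * ‖ι g‖ ^ 2 ≤ ‖g‖ ^ 2 := by
      have := hcoercive ⟨ι g, hmem g⟩
      rw [← hnorm g] at this
      exact this
    have h2 : ‖ι g‖ ^ 2 ≤ ε⁻¹ * ‖g‖ ^ 2 := by
      rw [inv_mul_eq_div, le_div_iff₀ hε]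
      linarith [h1]
    have h3 := Real.sqrt_le_sqrt h2
    rwa [Real.sqrt_sq (norm_nonneg _), Real.sqrt_mul (inv_nonneg.mpr hε.le),
      Real.sqrt_sq (norm_nonneg _), Real.sqrt_inv] at h3
  let ιL : HA →L[ℂ] H₁ := ι.mkContinuous ((Real.sqrt ε)⁻¹) hb
  have hιL : ∀ g : HA, ιL g = ι g := fun _ => rfl
  -- surjectivity of T
  have hTsurj : ∀ y : H₁, ∃ f : T.domain, T f = y := by
    intro y
    set u : HA := (InnerProductSpace.toDual ℂ HA).symm ((innerSL ℂ y).comp ιL) with hu_def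
    have hu : ∀ g : HA, ⟪u, g⟫_ℂ = ⟪y, ι g⟫_ℂ := fun g =>
      InnerProductSpace.toDual_symm_apply
    have key1 : ∀ x : A.domain, ⟪y, (x : H₁)⟫_ℂ = ⟪A ⟨ι u, hmem u⟩, A x⟫_ℂ := by
      intro x
      obtain ⟨g, hg⟩ := hsurj x x.2
      have hxg : (⟨ι g, hmem g⟩ : A.domain) = x := Subtype.ext hg
      rw [← hxg]
      calc ⟪y, ι g⟫_ℂ = ⟪u, g⟫_ℂ := (hu g).symm
        _ = ⟪A ⟨ι u, hmem u⟩, A ⟨ι g, hmem g⟩⟫_ℂ := hinner u g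
    have hmemadj : A ⟨ι u, hmem u⟩ ∈ A.adjoint.domain :=
      LinearPMap.mem_adjoint_domain_of_exists _ ⟨y, fun x => key1 x⟩
    have hudom : u ∈ T.domain := (hTdom u).mpr hmemadj
    refine ⟨⟨u, hudom⟩, ?_⟩
    rw [hTval ⟨u, hudom⟩ hmemadj]
    exact LinearPMap.adjoint_apply_eq hdense _ (fun x => key1 x)
  -- the key identity ⟪T f, ι g⟫ = ⟪f, g⟫
  have hkey : ∀ (f : T.domain) (g : HA), ⟪T f, ι g⟫_ℂ = ⟪(f : HA), g⟫_ℂ := by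
    intro f g
    have hf := (hTdom f).mp f.2
    rw [hTval f hf]
    have h := LinearPMap.adjoint_isFormalAdjoint hdense
      ⟨A ⟨ι (f : HA), hmem (f : HA)⟩, hf⟩ ⟨ι g, hmem g⟩
    rw [h]
    exact (hinner f g).symm
  -- T is a formal adjoint of J
  have hTJ : T.IsFormalAdjoint J := by
    intro f y
    have h := hkey f (J y)
    rwa [hJval y] at h
  -- density of T.domain
  have hdenseT : Dense (T.domain : Set HA) := by
    rw [Submodule.dense_iff_topologicalClosure_eq_top,
      Submodule.topologicalClosure_eq_top_iff]
    rw [Submodule.eq_bot_iff]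
    intro v hv
    have h0 : ι v = 0 := by
      rw [← inner_self_eq_zero (𝕜 := ℂ)]
      obtain ⟨f, hf⟩ := hTsurj (ι v)
      have h := hkey f v
      rw [hf] at h
      rw [h]
      exact hv _ f.2
    exact hinj (by rw [h0, map_zero])
  -- `J ≤ T.adjoint`
  have le1 : J ≤ T.adjoint := hTJ.le_adjoint hdenseT
  -- key: `ι (T.adjoint x) = x`
  have hadj : ∀ x : T.adjoint.domain, ι (T.adjoint x) = (x : H₁) := by
    intro x
    apply ext_inner_left ℂ
    intro y
    obtain ⟨f, hf⟩ := hTsurj y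
    have h1 := hkey f (T.adjoint x)
    rw [hf] at h1
    have h2 := LinearPMap.adjoint_isFormalAdjoint hdenseT x f
    calc ⟪y, ι (T.adjoint x)⟫_ℂ = ⟪(f : HA), T.adjoint x⟫_ℂ := h1
      _ = starRingEnd ℂ ⟪T.adjoint x, (f : HA)⟫_ℂ := (inner_conj_symm _ _).symm
      _ = starRingEnd ℂ ⟪(x : H₁), T f⟫_ℂ := by rw [h2]
      _ = ⟪T f, (x : H₁)⟫_ℂ := inner_conj_symm _ _
      _ = ⟪y, (x : H₁)⟫_ℂ := by rw [hf]
  have le2 : T.adjoint ≤ J := by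
    constructor
    · intro x hx
      have := hmem (T.adjoint ⟨x, hx⟩)
      rw [hadj ⟨x, hx⟩] at this
      rw [hJdom]
      exact this
    · intro x y hxy
      have h1 : ι (J y) = ι (T.adjoint x) := by
        rw [hJval y, hadj x, hxy]
      exact (hinj h1).symm
  -- `J.adjoint = T`
  have hJdense : Dense (J.domain : Set H₁) := by rw [hJdom]; exact hdense
  have le3 : T ≤ J.adjoint := hTJ.symm.le_adjoint hJdense
  have hval : ∀ (u : J.adjoint.domain) (x : A.domain),
      ⟪(J.adjoint u : H₁), (x : H₁)⟫_ℂ = ⟪A ⟨ι (u : HA), hmem (u : HA)⟩, A x⟫_ℂ := by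
    intro u x
    have hx' : (x : H₁) ∈ J.domain := by rw [hJdom]; exact x.2
    have hfa := LinearPMap.adjoint_isFormalAdjoint hJdense u ⟨(x : H₁), hx'⟩
    rw [hfa, hinner (u : HA) (J ⟨(x : H₁), hx'⟩)]
    have hsub : (⟨ι (J ⟨(x : H₁), hx'⟩), hmem _⟩ : A.domain) = x :=
      Subtype.ext (hJval ⟨(x : H₁), hx'⟩)
    rw [hsub]
  have le4 : J.adjoint ≤ T := by
    constructor
    · intro u hu
      exact (hTdom u).mpr (LinearPMap.mem_adjoint_domain_of_exists _
        ⟨J.adjoint ⟨u, hu⟩, fun x => hval ⟨u, hu⟩ x⟩)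
    · intro u f huf
      have hf := (hTdom f).mp f.2
      rw [hTval f hf]
      symm
      apply LinearPMap.adjoint_apply_eq hdense
      intro x
      have h := hval u x
      have hsub : (⟨ι (u : HA), hmem (u : HA)⟩ : A.domain)
          = ⟨ι (f : HA), hmem (f : HA)⟩ := Subtype.ext (by rw [huf])
      rw [hsub] at h
      exact h
  exact ⟨hdenseT, le_antisymm le2 le1, le_antisymm le4 le3⟩
end

section
/- The operator G_{A,0} in H_A ⊕ H₁ defined by G_{A,0}(f,g) = (g, −A*(Af)) with domain dom(G_{A,0}) = dom(A*A) ⊕ dom(A) (where the first component is regarded as an element of H_A and the second of H₁) has the property that i·G_{A,0} is self-adjoint in H_A ⊕ H₁. Moreover, with K_A = ran(A) (a closed subspace of H₂), Ã : H_A → K_A the unitary operator f ↦ Af, and U = [[0, I_{H₁}],[−iÃ, 0]] : H_A ⊕ H₁ → H₁ ⊕ K_A (a unitary operator), one has the operator equality U (i G_{A,0}) U^{-1} = [[0, A*(I_{H₂} − P_{ker(A*)})],[A, 0]], the latter having domain dom(A) ⊕ {g ∈ dom(A*) : g ∈ K_A}. -/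
open scoped InnerProductSpace

section Aux
open LinearPMap

theorem WithLp.equiv_symm_fst {p : ENNReal} {α β : Type*} (x : α × β) :
    ((WithLp.equiv p (α × β)).symm x).fst = x.fst := rfl

theorem WithLp.equiv_symm_snd {p : ENNReal} {α β : Type*} (x : α × β) :
    ((WithLp.equiv p (α × β)).symm x).snd = x.snd := rfl

variable {H₁ H₂ : Type*}
    [NormedAddCommGroup H₁] [InnerProductSpace ℂ H₁] [CompleteSpace H₁]
    [NormedAddCommGroup H₂] [InnerProductSpace ℂ H₂] [CompleteSpace H₂]

/-- If `A` is densely defined and closed, then whenever `⟪A† v, x⟫ = ⟪v, y⟫` for all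
`v ∈ dom A†`, we have `(x, y) ∈ graph A` (this is `A** = A`). -/
theorem mem_graph_of_adjoint_forall (A : H₁ →ₗ.[ℂ] H₂) (hdense : Dense (A.domain : Set H₁))
    (hclosed : A.IsClosed) (x : H₁) (y : H₂)
    (h : ∀ v : A.adjoint.domain, ⟪(A.adjoint v : H₁), x⟫_ℂ = ⟪(v : H₂), y⟫_ℂ) :
    (x, y) ∈ A.graph := by
  set e := WithLp.prodContinuousLinearEquiv 2 ℂ H₁ H₂ with he
  set Gr : Submodule ℂ (WithLp 2 (H₁ × H₂)) := A.graph.comap (e : WithLp 2 (H₁ × H₂) →ₗ[ℂ] H₁ × H₂) with hGr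
  have hGrmem : ∀ z : WithLp 2 (H₁ × H₂), z ∈ Gr ↔ (z.fst, z.snd) ∈ A.graph := fun z => Iff.rfl
  have hGrclosed : IsClosed (Gr : Set (WithLp 2 (H₁ × H₂))) := by
    have : (Gr : Set (WithLp 2 (H₁ × H₂))) = e ⁻¹' (A.graph : Set (H₁ × H₂)) := rfl
    rw [this]
    exact hclosed.preimage e.continuous
  have key : (WithLp.equiv 2 (H₁ × H₂)).symm (x, y) ∈ Grᗮᗮ := by
    intro w hw
    -- `w ∈ Grᗮ` implies `w.snd ∈ dom A†` and `A† w.snd = -w.fst`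
    have hw2 : w.snd ∈ A.adjoint.domain := by
      apply LinearPMap.mem_adjoint_domain_of_exists
      refine ⟨-w.fst, fun u => ?_⟩
      have := hw ((WithLp.equiv 2 (H₁ × H₂)).symm ((u : H₁), A u))
        ((hGrmem _).2 (A.mem_graph u))
      simp only [WithLp.prod_inner_apply] at this ⊢
      have h1 : ⟪(u : H₁), w.fst⟫_ℂ + ⟪A u, w.snd⟫_ℂ = 0 := this
      have := congrArg (starRingEnd ℂ) h1
      simp only [_root_.map_add, inner_conj_symm, _root_.map_zero] at this
      rw [inner_neg_left]
      linear_combination -this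
    have hval : A.adjoint ⟨w.snd, hw2⟩ = -w.fst := by
      apply LinearPMap.adjoint_apply_eq hdense
      intro u
      have := hw ((WithLp.equiv 2 (H₁ × H₂)).symm ((u : H₁), A u))
        ((hGrmem _).2 (A.mem_graph u))
      simp only [WithLp.prod_inner_apply] at this
      have h1 : ⟪(u : H₁), w.fst⟫_ℂ + ⟪A u, w.snd⟫_ℂ = 0 := this
      have h2 := congrArg (starRingEnd ℂ) h1
      simp only [_root_.map_add, inner_conj_symm, _root_.map_zero] at h2
      rw [inner_neg_left]
      linear_combination -h2
    -- now show the inner product vanishes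
    simp only [WithLp.prod_inner_apply, WithLp.ofLp_fst, WithLp.ofLp_snd]
    have := h ⟨w.snd, hw2⟩
    rw [hval] at this
    simp only [inner_neg_left] at this
    have hx : ((WithLp.equiv 2 (H₁ × H₂)).symm (x, y)).fst = x := rfl
    have hy : ((WithLp.equiv 2 (H₁ × H₂)).symm (x, y)).snd = y := rfl
    rw [hx, hy]
    linear_combination -this
  rw [Submodule.orthogonal_orthogonal_eq_closure, hGrclosed.submodule_topologicalClosure_eq] at key
  exact (hGrmem _).1 key

theorem eq_zero_of_orth_adjoint_domain (A : H₁ →ₗ.[ℂ] H₂) (hdense : Dense (A.domain : Set H₁))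
    (hclosed : A.IsClosed) (z : H₂)
    (h : ∀ v : A.adjoint.domain, ⟪(v : H₂), z⟫_ℂ = 0) : z = 0 := by
  have := mem_graph_of_adjoint_forall A hdense hclosed 0 z (fun v => by
    rw [inner_zero_right, h v])
  exact A.graph_fst_eq_zero_snd this rfl

end Aux

/-- Theorem 2.8. Let `A : dom(A) ⊆ H₁ → H₂` be densely defined, closed with
`A*A ≥ ε I`, `ε > 0`.  Let `HA` be the Hilbert space `dom(A)` with inner product
`(f,g)_A = ⟪Af, Ag⟫` (realized via the bijection `ι : HA → dom(A)`), `K = ran(A)` (a closed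
subspace of `H₂`), `Ã : HA → K` the unitary `f ↦ Af`, `P` the orthogonal projection of `H₂`
onto `ker(A*)`, `U = [[0, 1],[−iÃ, 0]] : HA ⊕ H₁ → H₁ ⊕ K` the unitary operator, `G = G_{A,0}`
the generator `(f,g) ↦ (g, −A*(Af))` with domain `dom(A*A) ⊕ dom(A)`, and `D` the Dirac-type
operator `[[0, A*(1−P)],[A,0]]` with domain `dom(A) ⊕ {g ∈ dom(A*) : g ∈ K}`.
Then `i G` is self-adjoint in `HA ⊕ H₁` and `U (i G) U⁻¹ = D`. -/
theorem iG_selfAdjoint_and_unitarily_equivalent_to_Dirac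
    {H₁ H₂ HA : Type*}
    [NormedAddCommGroup H₁] [InnerProductSpace ℂ H₁] [CompleteSpace H₁]
    [TopologicalSpace.SeparableSpace H₁]
    [NormedAddCommGroup H₂] [InnerProductSpace ℂ H₂] [CompleteSpace H₂]
    [TopologicalSpace.SeparableSpace H₂]
    [NormedAddCommGroup HA] [InnerProductSpace ℂ HA] [CompleteSpace HA]
    (A : H₁ →ₗ.[ℂ] H₂)
    (hdense : Dense (A.domain : Set H₁))
    (hclosed : A.IsClosed)
    (ε : ℝ) (hε : 0 < ε)
    (hcoercive : ∀ f : A.domain, ε * ‖(f : H₁)‖ ^ 2 ≤ ‖A f‖ ^ 2)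
    -- `ι = ι_A : HA → H₁`, a linear bijection from `HA` onto `dom(A)`:
    (ι : HA →ₗ[ℂ] H₁)
    (hmem : ∀ f : HA, ι f ∈ A.domain)
    (hsurj : ∀ x ∈ A.domain, ∃ f : HA, ι f = x)
    (hinj : Function.Injective ι)
    (hinner : ∀ f g : HA, ⟪f, g⟫_ℂ = ⟪A ⟨ι f, hmem f⟩, A ⟨ι g, hmem g⟩⟫_ℂ)
    -- `K = K_A = ran(A)`, a closed subspace of `H₂`:
    (K : Submodule ℂ H₂)
    (hK : K = LinearMap.range A.toFun)
    (hKclosed : IsClosed (K : Set H₂))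
    (hKA : ∀ x : A.domain, A x ∈ K)
    -- `Ã : HA → K`, the unitary operator `f ↦ A f`:
    (Atil : HA ≃ₗᵢ[ℂ] K)
    (hAtil : ∀ f : HA, (Atil f : H₂) = A ⟨ι f, hmem f⟩)
    -- `P = P_{ker(A*)}`, the orthogonal projection of `H₂` onto `ker(A*)`:
    (P : H₂ →L[ℂ] H₂)
    (hPran : ∀ x : H₂, (P x, (0 : H₁)) ∈ A.adjoint.graph)
    (hPfix : ∀ x : H₂, (x, (0 : H₁)) ∈ A.adjoint.graph → P x = x)
    (hPorth : ∀ x y : H₂, (y, (0 : H₁)) ∈ A.adjoint.graph → ⟪x - P x, y⟫_ℂ = 0)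
    -- `U = [[0, I],[−iÃ, 0]] : HA ⊕ H₁ → H₁ ⊕ K`, a unitary operator:
    (U : WithLp 2 (HA × H₁) ≃ₗᵢ[ℂ] WithLp 2 (H₁ × ↥K))
    (hU : ∀ x : WithLp 2 (HA × H₁),
      U x = (WithLp.equiv 2 (H₁ × ↥K)).symm (x.snd, (-Complex.I) • Atil x.fst))
    -- `G = G_{A,0} : (f,g) ↦ (g, −A*(Af))` with domain `dom(A*A) ⊕ dom(A)` in `HA ⊕ H₁`:
    (G : WithLp 2 (HA × H₁) →ₗ.[ℂ] WithLp 2 (HA × H₁))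
    (hGdom : ∀ x : WithLp 2 (HA × H₁), x ∈ G.domain ↔
      (A ⟨ι x.fst, hmem x.fst⟩ ∈ A.adjoint.domain ∧ x.snd ∈ A.domain))
    (hGval : ∀ (x : G.domain)
      (hf : A ⟨ι (x : WithLp 2 (HA × H₁)).fst, hmem (x : WithLp 2 (HA × H₁)).fst⟩ ∈
        A.adjoint.domain)
      (g' : HA) (hg' : ι g' = (x : WithLp 2 (HA × H₁)).snd),
      G x = (WithLp.equiv 2 (HA × H₁)).symm
        (g', -(A.adjoint ⟨A ⟨ι (x : WithLp 2 (HA × H₁)).fst,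
          hmem (x : WithLp 2 (HA × H₁)).fst⟩, hf⟩)))
    -- `D = [[0, A*(1−P)],[A, 0]]` with domain `dom(A) ⊕ {g ∈ dom(A*) : g ∈ K}` in `H₁ ⊕ K`:
    (D : WithLp 2 (H₁ × ↥K) →ₗ.[ℂ] WithLp 2 (H₁ × ↥K))
    (hDdom : ∀ y : WithLp 2 (H₁ × ↥K), y ∈ D.domain ↔
      (y.fst ∈ A.domain ∧ ((y.snd : H₂) ∈ A.adjoint.domain)))
    (hDval : ∀ (y : D.domain)
      (h1 : (y : WithLp 2 (H₁ × ↥K)).fst ∈ A.domain)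
      (h2 : ((y : WithLp 2 (H₁ × ↥K)).snd : H₂) -
        P ((y : WithLp 2 (H₁ × ↥K)).snd : H₂) ∈ A.adjoint.domain),
      D y = (WithLp.equiv 2 (H₁ × ↥K)).symm
        (A.adjoint ⟨((y : WithLp 2 (H₁ × ↥K)).snd : H₂) -
            P ((y : WithLp 2 (H₁ × ↥K)).snd : H₂), h2⟩,
          ⟨A ⟨(y : WithLp 2 (H₁ × ↥K)).fst, h1⟩, hKA _⟩)) :
    -- `i G_{A,0}` is self-adjoint and `U (i G_{A,0}) U⁻¹ = D`:
    (Complex.I • G).adjoint = Complex.I • G ∧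
      ∀ x y : WithLp 2 (HA × H₁),
        ((x, y) ∈ (Complex.I • G).graph ↔ (U x, U y) ∈ D.graph) := by
    classical
  haveI : CompleteSpace K := hKclosed.completeSpace_coe
  -- basic injectivity facts
  have hA0 : ∀ z : A.domain, A z = 0 → z = 0 := by
    intro z hz
    have h1 := hcoercive z
    rw [hz, norm_zero] at h1
    have h2 : ‖(z : H₁)‖ = 0 := by
      by_contra hne
      have hpos : 0 < ‖(z : H₁)‖ := lt_of_le_of_ne (norm_nonneg _) (Ne.symm hne)
      nlinarith [mul_pos hε (mul_pos hpos hpos)]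
    exact Subtype.ext (norm_eq_zero.mp h2)
  have hAinj : ∀ x y : A.domain, A x = A y → x = y := by
    intro x y h
    have h0 : A (x - y) = 0 := by rw [LinearPMap.map_sub, h, sub_self]
    have := hA0 _ h0
    rwa [sub_eq_zero] at this
  have hιinj : ∀ f g : HA, A ⟨ι f, hmem f⟩ = A ⟨ι g, hmem g⟩ → f = g := fun f g h =>
    hinj (congrArg Subtype.val (hAinj _ _ h))
  have hformal := LinearPMap.adjoint_isFormalAdjoint hdense (T := A)
  -- `P x ∈ ker A†`
  have hPdom : ∀ x : H₂, P x ∈ A.adjoint.domain := by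
    intro x
    obtain ⟨v, hv⟩ := A.adjoint.mem_graph_iff'.mp (hPran x)
    have hv1 : (v : H₂) = P x := congrArg Prod.fst hv
    rw [← hv1]; exact v.2
  have hPval : ∀ (x : H₂) (h : P x ∈ A.adjoint.domain), A.adjoint ⟨P x, h⟩ = 0 := by
    intro x h
    obtain ⟨v, hv⟩ := A.adjoint.mem_graph_iff'.mp (hPran x)
    have hv1 : (v : H₂) = P x := congrArg Prod.fst hv
    have hv2 : A.adjoint v = 0 := congrArg Prod.snd hv
    have heq : (⟨P x, h⟩ : A.adjoint.domain) = v := Subtype.ext hv1.symm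
    rw [heq, hv2]
  -- elements of `ker A†` are orthogonal to the range of `A`
  have hker_orth : ∀ (y : H₂) (hy : y ∈ A.adjoint.domain), A.adjoint ⟨y, hy⟩ = 0 →
      ∀ u : A.domain, ⟪y, A u⟫_ℂ = 0 := by
    intro y hy h0 u
    have hf := hformal ⟨y, hy⟩ u
    rw [h0, inner_zero_left] at hf
    exact hf.symm
  -- conversely
  have hmemker : ∀ y : H₂, (∀ u : A.domain, ⟪A u, y⟫_ℂ = 0) →
      ∃ hy : y ∈ A.adjoint.domain, A.adjoint ⟨y, hy⟩ = 0 := by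
    intro y hy
    have key : ∀ u : A.domain, ⟪(0 : H₁), (u : H₁)⟫_ℂ = ⟪y, A u⟫_ℂ := by
      intro u
      rw [inner_zero_left, ← inner_conj_symm, hy u, _root_.map_zero]
    have hmem' : y ∈ A.adjoint.domain :=
      LinearPMap.mem_adjoint_domain_of_exists _ ⟨0, key⟩
    exact ⟨hmem', LinearPMap.adjoint_apply_eq hdense ⟨y, hmem'⟩ key⟩
  -- `v - P v` always lies in `K`
  have hsubK : ∀ v : H₂, v - P v ∈ K := by
    intro v
    have : v - P v ∈ Kᗮᗮ := by
      intro u hu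
      have hu' : ∀ t : A.domain, ⟪A t, u⟫_ℂ = 0 := fun t => hu _ (hKA t)
      obtain ⟨hud, hu0⟩ := hmemker u hu'
      have hgr : (u, (0 : H₁)) ∈ A.adjoint.graph :=
        A.adjoint.mem_graph_iff.mpr ⟨⟨u, hud⟩, rfl, hu0⟩
      have := hPorth v u hgr
      rw [← inner_conj_symm, this, _root_.map_zero]
    rwa [Submodule.orthogonal_orthogonal] at this
  -- K ∩ dom A† is "A ι f" for suitable f
  have hranK : ∀ z ∈ K, ∃ f : HA, A ⟨ι f, hmem f⟩ = z := by
    intro z hz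
    rw [hK] at hz
    obtain ⟨u, hu⟩ := hz
    obtain ⟨f, hf⟩ := hsurj u u.2
    refine ⟨f, ?_⟩
    have : (⟨ι f, hmem f⟩ : A.domain) = u := Subtype.ext hf
    rw [this]; exact hu
  -- extension principle over dom A†
  have hext : ∀ (x : H₁) (y : H₂), y ∈ K →
      (∀ (f : HA) (hf : A ⟨ι f, hmem f⟩ ∈ A.adjoint.domain),
        ⟪(A.adjoint ⟨A ⟨ι f, hmem f⟩, hf⟩ : H₁), x⟫_ℂ = ⟪A ⟨ι f, hmem f⟩, y⟫_ℂ) →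
      (x, y) ∈ A.graph := by
    intro x y hyK hall
    apply mem_graph_of_adjoint_forall A hdense hclosed
    intro v
    obtain ⟨f, hAf⟩ := hranK ((v : H₂) - P (v : H₂)) (hsubK _)
    have hfd : A ⟨ι f, hmem f⟩ ∈ A.adjoint.domain := by
      rw [hAf]; exact Submodule.sub_mem _ v.2 (hPdom _)
    set v1 : A.adjoint.domain := ⟨P (v : H₂), hPdom _⟩
    set v2 : A.adjoint.domain := ⟨A ⟨ι f, hmem f⟩, hfd⟩
    have hv12 : v = v1 + v2 := by
      apply Subtype.ext
      show (v : H₂) = P (v : H₂) + A ⟨ι f, hmem f⟩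
      rw [hAf]; abel
    obtain ⟨u, hu⟩ := hranK y hyK
    have hPy : ⟪P (v : H₂), y⟫_ℂ = 0 := by
      rw [← hu]; exact hker_orth _ (hPdom _) (hPval _ _) _
    calc ⟪(A.adjoint v : H₁), x⟫_ℂ
        = ⟪(A.adjoint v1 : H₁), x⟫_ℂ + ⟪(A.adjoint v2 : H₁), x⟫_ℂ := by
          rw [hv12, LinearPMap.map_add, inner_add_left]
      _ = ⟪(A.adjoint v2 : H₁), x⟫_ℂ := by rw [hPval _ _, inner_zero_left, zero_add]
      _ = ⟪A ⟨ι f, hmem f⟩, y⟫_ℂ := hall f hfd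
      _ = ⟪(v : H₂) - P (v : H₂), y⟫_ℂ := by rw [hAf]
      _ = ⟪(v : H₂), y⟫_ℂ := by rw [inner_sub_left, hPy, sub_zero]
  -- density of `dom (A†A)` in `HA`
  set B : HA →ₗ[ℂ] H₂ := A.toFun.comp (ι.codRestrict A.domain hmem) with hB
  set V : Submodule ℂ HA := A.adjoint.domain.comap B with hV
  have hVmem : ∀ f : HA, f ∈ V ↔ A ⟨ι f, hmem f⟩ ∈ A.adjoint.domain := fun f => Iff.rfl
  have hVorth : Vᗮ = ⊥ := by
    rw [Submodule.eq_bot_iff]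
    intro w hw
    have hz : ∀ v : A.adjoint.domain, ⟪(v : H₂), A ⟨ι w, hmem w⟩⟫_ℂ = 0 := by
      intro v
      obtain ⟨f, hAf⟩ := hranK ((v : H₂) - P (v : H₂)) (hsubK _)
      have hfd : f ∈ V := by
        rw [hVmem, hAf]; exact Submodule.sub_mem _ v.2 (hPdom _)
      have h1 : ⟪P (v : H₂), A ⟨ι w, hmem w⟩⟫_ℂ = 0 :=
        hker_orth _ (hPdom _) (hPval _ _) _
      have h2 : ⟪(v : H₂) - P (v : H₂), A ⟨ι w, hmem w⟩⟫_ℂ = 0 := by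
        rw [← hAf, ← hinner f w]
        exact (Submodule.mem_orthogonal V w).mp hw f hfd
      have h3 := inner_sub_left (𝕜 := ℂ) (v : H₂) (P (v : H₂)) (A ⟨ι w, hmem w⟩)
      linear_combination h1 + h2 - h3
    have hz0 : A ⟨ι w, hmem w⟩ = 0 := eq_zero_of_orth_adjoint_domain A hdense hclosed _ hz
    have hww : ⟪w, w⟫_ℂ = 0 := by rw [hinner w w, hz0, inner_zero_left]
    exact inner_self_eq_zero.mp hww
  have hVdense : Dense (V : Set HA) := by
    rw [Submodule.dense_iff_topologicalClosure_eq_top, ← Submodule.orthogonal_orthogonal_eq_closure,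
      hVorth, Submodule.bot_orthogonal_eq_top]
  have hGdense : Dense (G.domain : Set (WithLp 2 (HA × H₁))) := by
    have hprod : Dense ((V : Set HA) ×ˢ (A.domain : Set H₁)) := hVdense.prod hdense
    have hpre : (G.domain : Set (WithLp 2 (HA × H₁))) =
        (WithLp.prodContinuousLinearEquiv 2 ℂ HA H₁) ⁻¹' ((V : Set HA) ×ˢ (A.domain : Set H₁)) := by
      ext x
      simp only [Set.mem_preimage, Set.mem_prod, SetLike.mem_coe]
      exact hGdom x
    rw [hpre]
    exact hprod.preimage (WithLp.prodContinuousLinearEquiv 2 ℂ HA H₁).toHomeomorph.isOpenMap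
  have hTdense : Dense (((Complex.I • G).domain : Submodule ℂ (WithLp 2 (HA × H₁))) :
      Set (WithLp 2 (HA × H₁))) := hGdense
  -- the value of `I • G`
  have hsmulLp : ∀ (c : ℂ) (a : HA) (b : H₁),
      c • (WithLp.equiv 2 (HA × H₁)).symm (a, b) = (WithLp.equiv 2 (HA × H₁)).symm (c • a, c • b) :=
    fun _ _ _ => rfl
  have hTval : ∀ (x : (Complex.I • G).domain)
      (hf : A ⟨ι (x : WithLp 2 (HA × H₁)).fst, hmem (x : WithLp 2 (HA × H₁)).fst⟩ ∈
        A.adjoint.domain)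
      (g' : HA) (hg' : ι g' = (x : WithLp 2 (HA × H₁)).snd),
      (Complex.I • G) x = (WithLp.equiv 2 (HA × H₁)).symm
        (Complex.I • g', -(Complex.I • (A.adjoint ⟨A ⟨ι (x : WithLp 2 (HA × H₁)).fst,
          hmem (x : WithLp 2 (HA × H₁)).fst⟩, hf⟩))) := by
    intro x hf g' hg'
    rw [LinearPMap.smul_apply, hGval x hf g' hg', hsmulLp, smul_neg]
  have hAcoe : ∀ (g' : HA) (b : H₁) (hb : b ∈ A.domain), ι g' = b →
      A ⟨ι g', hmem g'⟩ = A ⟨b, hb⟩ := by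
    intro g' b hb h
    have : (⟨ι g', hmem g'⟩ : A.domain) = ⟨b, hb⟩ := Subtype.ext h
    rw [this]
  -- symmetry of `I • G`
  have hTsym : (Complex.I • G).IsFormalAdjoint (Complex.I • G) := by
    intro x y
    obtain ⟨hfx, hx2⟩ := (hGdom (x : WithLp 2 (HA × H₁))).mp x.2
    obtain ⟨hfy, hy2⟩ := (hGdom (y : WithLp 2 (HA × H₁))).mp y.2
    obtain ⟨gx, hgx⟩ := hsurj _ hx2
    obtain ⟨gy, hgy⟩ := hsurj _ hy2
    rw [hTval x hfx gx hgx, hTval y hfy gy hgy]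
    simp only [WithLp.prod_inner_apply, WithLp.ofLp_fst, WithLp.ofLp_snd, WithLp.equiv_symm_fst, WithLp.equiv_symm_snd]
    set x1 := (x : WithLp 2 (HA × H₁)).fst with hx1d
    set y1 := (y : WithLp 2 (HA × H₁)).fst with hy1d
    have e1 : ⟪(Complex.I • gx : HA), y1⟫_ℂ =
        -Complex.I * ⟪A ⟨ι gx, hmem gx⟩, A ⟨ι y1, hmem y1⟩⟫_ℂ := by
      rw [inner_smul_left, hinner gx y1, Complex.conj_I]
    have e2 : ⟪-(Complex.I • (A.adjoint ⟨A ⟨ι x1, hmem x1⟩, hfx⟩ : H₁)),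
        (y : WithLp 2 (HA × H₁)).snd⟫_ℂ =
        Complex.I * ⟪A ⟨ι x1, hmem x1⟩, A ⟨ι gy, hmem gy⟩⟫_ℂ := by
      have h5 : ⟪(A.adjoint ⟨A ⟨ι x1, hmem x1⟩, hfx⟩ : H₁),
          (y : WithLp 2 (HA × H₁)).snd⟫_ℂ =
          ⟪A ⟨ι x1, hmem x1⟩, A ⟨(y : WithLp 2 (HA × H₁)).snd, hy2⟩⟫_ℂ :=
        hformal ⟨A ⟨ι x1, hmem x1⟩, hfx⟩ ⟨(y : WithLp 2 (HA × H₁)).snd, hy2⟩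
      rw [inner_neg_left, inner_smul_left, Complex.conj_I, h5, ← hAcoe gy _ hy2 hgy]
      ring
    have e3 : ⟪x1, (Complex.I • gy : HA)⟫_ℂ =
        Complex.I * ⟪A ⟨ι x1, hmem x1⟩, A ⟨ι gy, hmem gy⟩⟫_ℂ := by
      rw [inner_smul_right, hinner x1 gy]
    have e4 : ⟪(x : WithLp 2 (HA × H₁)).snd,
        -(Complex.I • (A.adjoint ⟨A ⟨ι y1, hmem y1⟩, hfy⟩ : H₁))⟫_ℂ =
        -Complex.I * ⟪A ⟨ι gx, hmem gx⟩, A ⟨ι y1, hmem y1⟩⟫_ℂ := by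
      have h5 : ⟪(A.adjoint ⟨A ⟨ι y1, hmem y1⟩, hfy⟩ : H₁),
          (x : WithLp 2 (HA × H₁)).snd⟫_ℂ =
          ⟪A ⟨ι y1, hmem y1⟩, A ⟨(x : WithLp 2 (HA × H₁)).snd, hx2⟩⟫_ℂ :=
        hformal ⟨A ⟨ι y1, hmem y1⟩, hfy⟩ ⟨(x : WithLp 2 (HA × H₁)).snd, hx2⟩
      have h6 : ⟪(x : WithLp 2 (HA × H₁)).snd,
          (A.adjoint ⟨A ⟨ι y1, hmem y1⟩, hfy⟩ : H₁)⟫_ℂ =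
          ⟪A ⟨ι gx, hmem gx⟩, A ⟨ι y1, hmem y1⟩⟫_ℂ := by
        rw [← inner_conj_symm, h5, inner_conj_symm, ← hAcoe gx _ hx2 hgx]
      rw [inner_neg_right, inner_smul_right, h6]
      ring
    rw [e1, e2, e3, e4]
    ring
  have hTadj := LinearPMap.adjoint_isFormalAdjoint hTdense (T := Complex.I • G)
  have h00 : A ⟨ι (0 : HA), hmem 0⟩ = 0 := by
    have h0 : (⟨ι (0 : HA), hmem 0⟩ : A.domain) = 0 := Subtype.ext (by simp)
    rw [h0, LinearPMap.map_zero]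
  have hadj_le : ∀ z : (Complex.I • G).adjoint.domain,
      ∃ hz : (z : WithLp 2 (HA × H₁)) ∈ (Complex.I • G).domain,
        (Complex.I • G) ⟨(z : WithLp 2 (HA × H₁)), hz⟩ = (Complex.I • G).adjoint z := by
    intro z
    set h := (z : WithLp 2 (HA × H₁)).fst with hh
    set k := (z : WithLp 2 (HA × H₁)).snd with hkdef
    set p := ((Complex.I • G).adjoint z).fst with hpdef
    set q := ((Complex.I • G).adjoint z).snd with hqdef
    -- Step A : `A ι h ∈ dom A†` and `q = -(I • A† (A ι h))`
    have hqA : ∀ g : A.domain, ⟪q, (g : H₁)⟫_ℂ = ⟪(-Complex.I) • A ⟨ι h, hmem h⟩, A g⟫_ℂ := by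
      intro g
      obtain ⟨g', hg'⟩ := hsurj _ g.2
      have hx0 : (WithLp.equiv 2 (HA × H₁)).symm ((0 : HA), (g : H₁)) ∈
          (Complex.I • G).domain := by
        show _ ∈ G.domain
        rw [hGdom]
        exact ⟨by rw [show A ⟨ι ((WithLp.equiv 2 (HA × H₁)).symm ((0 : HA), (g : H₁))).fst,
          hmem _⟩ = A ⟨ι (0 : HA), hmem 0⟩ from rfl, h00]; exact Submodule.zero_mem _, g.2⟩
      have hf0 : A ⟨ι (((⟨_, hx0⟩ : (Complex.I • G).domain) :
          WithLp 2 (HA × H₁))).fst, hmem _⟩ ∈ A.adjoint.domain := by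
        rw [show A ⟨ι (((⟨_, hx0⟩ : (Complex.I • G).domain) :
          WithLp 2 (HA × H₁))).fst, hmem _⟩ = A ⟨ι (0 : HA), hmem 0⟩ from rfl, h00]
        exact Submodule.zero_mem _
      have hTx0 := hTval ⟨_, hx0⟩ hf0 g' hg'
      have hzero : A.adjoint ⟨A ⟨ι (((⟨_, hx0⟩ : (Complex.I • G).domain) :
          WithLp 2 (HA × H₁))).fst, hmem _⟩, hf0⟩ = 0 := by
        have h1 : (⟨A ⟨ι (((⟨_, hx0⟩ : (Complex.I • G).domain) :
            WithLp 2 (HA × H₁))).fst, hmem _⟩, hf0⟩ : A.adjoint.domain) = 0 :=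
          Subtype.ext h00
        rw [h1, LinearPMap.map_zero]
      rw [hzero, smul_zero, neg_zero] at hTx0
      have heq := hTadj z ⟨_, hx0⟩
      rw [hTx0] at heq
      simp only [WithLp.prod_inner_apply, WithLp.ofLp_fst, WithLp.ofLp_snd, WithLp.equiv_symm_fst, WithLp.equiv_symm_snd,
        inner_zero_right] at heq
      -- heq : ⟪p, 0⟫ + ⟪q, g⟫ = ⟪h, I • g'⟫ + ⟪k, 0⟫
      rw [inner_smul_left]
      have h2 : ⟪h, Complex.I • g'⟫_ℂ = Complex.I * ⟪A ⟨ι h, hmem h⟩, A g⟫_ℂ := by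
        rw [inner_smul_right, hinner h g', hAcoe g' _ g.2 hg']
      rw [← hqdef, ← hh] at heq
      rw [_root_.map_neg, Complex.conj_I, neg_neg]
      linear_combination heq + h2
    have hkd : (-Complex.I) • A ⟨ι h, hmem h⟩ ∈ A.adjoint.domain :=
      LinearPMap.mem_adjoint_domain_of_exists _ ⟨q, fun g => (hqA g).trans rfl⟩
    have hhd : A ⟨ι h, hmem h⟩ ∈ A.adjoint.domain := by
      have h1 := A.adjoint.domain.smul_mem Complex.I hkd
      rwa [smul_smul, mul_neg, Complex.I_mul_I, neg_neg, one_smul] at h1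
    have hqval : A.adjoint ⟨(-Complex.I) • A ⟨ι h, hmem h⟩, hkd⟩ = q :=
      LinearPMap.adjoint_apply_eq hdense _ fun g => hqA g
    have hqval' : q = -(Complex.I • (A.adjoint ⟨A ⟨ι h, hmem h⟩, hhd⟩ : H₁)) := by
      have h1 : (⟨(-Complex.I) • A ⟨ι h, hmem h⟩, hkd⟩ : A.adjoint.domain) =
          (-Complex.I) • (⟨A ⟨ι h, hmem h⟩, hhd⟩ : A.adjoint.domain) := rfl
      rw [h1, LinearPMap.map_smul, neg_smul] at hqval
      exact hqval.symm
    -- Step B : `I • k ∈ dom A` with `A (I • k) = A ι p`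
    have hpA : ∀ (f : HA) (hf : A ⟨ι f, hmem f⟩ ∈ A.adjoint.domain),
        ⟪(A.adjoint ⟨A ⟨ι f, hmem f⟩, hf⟩ : H₁), Complex.I • k⟫_ℂ =
          ⟪A ⟨ι f, hmem f⟩, A ⟨ι p, hmem p⟩⟫_ℂ := by
      intro f hf
      have hx0 : (WithLp.equiv 2 (HA × H₁)).symm (f, (0 : H₁)) ∈ (Complex.I • G).domain := by
        show _ ∈ G.domain
        rw [hGdom]
        exact ⟨hf, Submodule.zero_mem _⟩
      have hf0 : A ⟨ι (((⟨_, hx0⟩ : (Complex.I • G).domain) :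
          WithLp 2 (HA × H₁))).fst, hmem _⟩ ∈ A.adjoint.domain := hf
      have hg'0 : ι (0 : HA) = (((⟨_, hx0⟩ : (Complex.I • G).domain) :
          WithLp 2 (HA × H₁))).snd := by simp
      have hTx0 := hTval ⟨_, hx0⟩ hf0 0 hg'0
      rw [smul_zero] at hTx0
      have heq := hTadj z ⟨_, hx0⟩
      rw [hTx0] at heq
      simp only [WithLp.prod_inner_apply, WithLp.ofLp_fst, WithLp.ofLp_snd, WithLp.equiv_symm_fst, WithLp.equiv_symm_snd,
        inner_zero_right] at heq
      rw [← hpdef, ← hkdef] at heq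
      rw [inner_neg_right, inner_smul_right, hinner p f] at heq
      have hc := congrArg (starRingEnd ℂ) heq
      simp only [_root_.map_neg, _root_.map_mul, Complex.conj_I, inner_conj_symm,
        _root_.map_add, _root_.map_zero] at hc
      rw [inner_smul_right]
      linear_combination -hc
    have hgr : (Complex.I • k, A ⟨ι p, hmem p⟩) ∈ A.graph := hext _ _ (hKA _) hpA
    obtain ⟨u, hu⟩ := A.mem_graph_iff'.mp hgr
    have hu1 : (u : H₁) = Complex.I • k := congrArg Prod.fst hu
    have hu2 : A u = A ⟨ι p, hmem p⟩ := congrArg Prod.snd hu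
    have hkdom2 : k ∈ A.domain := by
      have h1 := A.domain.smul_mem (-Complex.I) u.2
      rw [hu1, smul_smul, neg_mul, Complex.I_mul_I, neg_neg, one_smul] at h1
      exact h1
    obtain ⟨k', hk'⟩ := hsurj k hkdom2
    have hppval : p = Complex.I • k' := by
      apply hιinj
      have e1 : A ⟨ι (Complex.I • k'), hmem _⟩ = Complex.I • A ⟨ι k', hmem k'⟩ := by
        have h1 : (⟨ι (Complex.I • k'), hmem _⟩ : A.domain) =
            Complex.I • (⟨ι k', hmem k'⟩ : A.domain) := Subtype.ext (ι.map_smul Complex.I k')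
        rw [h1, LinearPMap.map_smul]
      have e2 : A ⟨ι k', hmem k'⟩ = A ⟨k, hkdom2⟩ := hAcoe k' _ hkdom2 hk'
      have e3 : A u = Complex.I • A ⟨k, hkdom2⟩ := by
        have h1 : u = Complex.I • (⟨k, hkdom2⟩ : A.domain) := Subtype.ext (by rw [hu1]; rfl)
        rw [h1, LinearPMap.map_smul]
      rw [e1, e2, ← e3, hu2]
    have hzdom : (z : WithLp 2 (HA × H₁)) ∈ (Complex.I • G).domain := by
      show _ ∈ G.domain
      rw [hGdom]
      exact ⟨hhd, hkdom2⟩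
    refine ⟨hzdom, ?_⟩
    rw [hTval ⟨_, hzdom⟩ hhd k' (hk'.trans hkdef)]
    have hfinal : (Complex.I • G).adjoint z = (WithLp.equiv 2 (HA × H₁)).symm (p, q) := rfl
    rw [hfinal, hppval, hqval']
  have hle : (Complex.I • G) ≤ (Complex.I • G).adjoint :=
    LinearPMap.IsFormalAdjoint.le_adjoint hTdense hTsym
  have part1 : (Complex.I • G).adjoint = Complex.I • G := by
    apply LinearPMap.eq_of_eq_graph
    apply le_antisymm
    · intro w hw
      obtain ⟨zz, hzz⟩ := (Complex.I • G).adjoint.mem_graph_iff'.mp hw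
      obtain ⟨hz1, hz2⟩ := hadj_le zz
      rw [← hzz, ← hz2]
      exact (Complex.I • G).mem_graph ⟨_, hz1⟩
    · exact LinearPMap.le_graph_of_le hle
  -- Part 2 : the unitary equivalence
  have hforward : ∀ x : (Complex.I • G).domain,
      (U (x : WithLp 2 (HA × H₁)), U ((Complex.I • G) x)) ∈ D.graph := by
    intro x
    obtain ⟨hfx, hx2⟩ := (hGdom (x : WithLp 2 (HA × H₁))).mp x.2
    obtain ⟨gx, hgx⟩ := hsurj _ hx2
    rw [hTval x hfx gx hgx]
    simp only [hU, WithLp.equiv_symm_fst, WithLp.equiv_symm_snd]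
    have hsimp : (-Complex.I) • Atil (Complex.I • gx) = Atil gx := by
      rw [LinearIsometryEquiv.map_smul, smul_smul, neg_mul, Complex.I_mul_I, neg_neg, one_smul]
    rw [hsimp]
    have hw : ((-Complex.I) • (Atil (x : WithLp 2 (HA × H₁)).fst : H₂)) ∈
        A.adjoint.domain := by
      rw [hAtil]
      exact A.adjoint.domain.smul_mem _ hfx
    have hUxd : (WithLp.equiv 2 (H₁ × ↥K)).symm ((x : WithLp 2 (HA × H₁)).snd,
        (-Complex.I) • Atil (x : WithLp 2 (HA × H₁)).fst) ∈ D.domain := by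
      rw [hDdom]
      exact ⟨hx2, hw⟩
    have h2 : ((-Complex.I) • (Atil (x : WithLp 2 (HA × H₁)).fst : H₂)) -
        P ((-Complex.I) • (Atil (x : WithLp 2 (HA × H₁)).fst : H₂)) ∈ A.adjoint.domain :=
      Submodule.sub_mem _ hw (hPdom _)
    apply D.mem_graph_iff.mpr
    refine ⟨⟨_, hUxd⟩, rfl, ?_⟩
    rw [hDval ⟨_, hUxd⟩ hx2 h2]
    congr 1
    refine Prod.ext ?_ ?_
    · show A.adjoint ⟨((-Complex.I) • (Atil (x : WithLp 2 (HA × H₁)).fst : H₂)) -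
          P ((-Complex.I) • (Atil (x : WithLp 2 (HA × H₁)).fst : H₂)), h2⟩ =
        -(Complex.I • (A.adjoint ⟨A ⟨ι (x : WithLp 2 (HA × H₁)).fst,
          hmem (x : WithLp 2 (HA × H₁)).fst⟩, hfx⟩ : H₁))
      have e1 : (⟨((-Complex.I) • (Atil (x : WithLp 2 (HA × H₁)).fst : H₂)) -
          P ((-Complex.I) • (Atil (x : WithLp 2 (HA × H₁)).fst : H₂)), h2⟩ :
            A.adjoint.domain) =
          ⟨_, hw⟩ - ⟨_, hPdom ((-Complex.I) • (Atil (x : WithLp 2 (HA × H₁)).fst : H₂))⟩ := rfl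
      rw [e1, LinearPMap.map_sub, hPval _ _, sub_zero]
      have e2 : (⟨((-Complex.I) • (Atil (x : WithLp 2 (HA × H₁)).fst : H₂)), hw⟩ :
          A.adjoint.domain) = (-Complex.I) • (⟨A ⟨ι (x : WithLp 2 (HA × H₁)).fst,
            hmem (x : WithLp 2 (HA × H₁)).fst⟩, hfx⟩ : A.adjoint.domain) :=
        Subtype.ext (congrArg (fun t => (-Complex.I : ℂ) • t) (hAtil (x : WithLp 2 (HA × H₁)).fst))
      rw [e2, LinearPMap.map_smul, neg_smul]
    · show (⟨A ⟨(x : WithLp 2 (HA × H₁)).snd, hx2⟩, hKA _⟩ : ↥K) = Atil gx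
      refine Subtype.ext ?_
      show A ⟨(x : WithLp 2 (HA × H₁)).snd, hx2⟩ = (Atil gx : H₂)
      rw [hAtil, hAcoe gx _ hx2 hgx]
  have part2 : ∀ x y : WithLp 2 (HA × H₁),
      ((x, y) ∈ (Complex.I • G).graph ↔ (U x, U y) ∈ D.graph) := by
    intro x y
    constructor
    · intro hxy
      obtain ⟨x0, hx0⟩ := (Complex.I • G).mem_graph_iff'.mp hxy
      have h1 : (x0 : WithLp 2 (HA × H₁)) = x := congrArg Prod.fst hx0
      have h2 : (Complex.I • G) x0 = y := congrArg Prod.snd hx0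
      rw [← h1, ← h2]
      exact hforward x0
    · intro hxy
      obtain ⟨d, hd⟩ := D.mem_graph_iff'.mp hxy
      have hd1 : (d : WithLp 2 (H₁ × ↥K)) = U x := congrArg Prod.fst hd
      have hdm : U x ∈ D.domain := hd1 ▸ d.2
      rw [hDdom, hU x] at hdm
      obtain ⟨hm1, hm2⟩ := hdm
      have hx2 : x.snd ∈ A.domain := hm1
      have hfx : A ⟨ι x.fst, hmem x.fst⟩ ∈ A.adjoint.domain := by
        have h3 : ((((-Complex.I) • Atil x.fst : ↥K)) : H₂) ∈ A.adjoint.domain := hm2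
        have h4 := A.adjoint.domain.smul_mem Complex.I h3
        have h5 : ((((-Complex.I) • Atil x.fst : ↥K)) : H₂) =
            (-Complex.I) • (Atil x.fst : H₂) := rfl
        rw [h5, smul_smul, mul_neg, Complex.I_mul_I, neg_neg, one_smul, hAtil] at h4
        exact h4
      have hxd : x ∈ (Complex.I • G).domain := by
        show x ∈ G.domain
        rw [hGdom]; exact ⟨hfx, hx2⟩
      have hfwd := hforward ⟨x, hxd⟩
      have hyy : U y = U ((Complex.I • G) ⟨x, hxd⟩) :=
        D.mem_graph_snd_inj' hxy hfwd rfl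
      have hy : y = (Complex.I • G) ⟨x, hxd⟩ := U.injective hyy
      rw [hy]
      exact (Complex.I • G).mem_graph ⟨x, hxd⟩
  exact ⟨part1, part2⟩
end

section
/- Let S be a self-adjoint operator in the complex separable Hilbert space H with ker(S) = {0}. Then dom(S) ∩ ran(S) = dom(S) ∩ dom(S^{-1}) is dense in H and is a core for both S and S^{-1}, i.e., the closures of the restrictions of S and of S^{-1} to dom(S) ∩ ran(S) equal S and S^{-1}, respectively. -/
open scoped InnerProductSpace
set_option linter.unusedSectionVars false

namespace StmtAux

variable {H : Type*} [NormedAddCommGroup H] [InnerProductSpace ℂ H] [CompleteSpace H]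

local notation "K" => WithLp 2 (H × H)

/-- The identity between `K` and `H × H` as a continuous linear equivalence. -/
noncomputable def eK : WithLp 2 (H × H) ≃L[ℂ] H × H :=
  WithLp.prodContinuousLinearEquiv 2 ℂ H H

/-- Build an element of `K` from a pair. -/
noncomputable def mk2 (a b : H) : WithLp 2 (H × H) := (eK (H := H)).symm (a, b)

@[simp] lemma eK_mk2 (a b : H) : eK (mk2 a b) = (a, b) := by
  simp [mk2]

lemma mk2_inner (a b c d : H) : ⟪mk2 a b, mk2 c d⟫_ℂ = ⟪a, c⟫_ℂ + ⟪b, d⟫_ℂ := by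
  rw [WithLp.prod_inner_apply]; rfl

lemma mk2_surj (x : K) : ∃ a b, x = mk2 a b := by
  refine ⟨(eK x).1, (eK x).2, ?_⟩
  simp [mk2]

@[simp] lemma mk2_add (a b c d : H) : mk2 a b + mk2 c d = mk2 (a + c) (b + d) := by
  simp only [mk2, ← map_add, Prod.mk_add_mk]

@[simp] lemma mk2_eq_zero (a b : H) : mk2 a b = 0 ↔ a = 0 ∧ b = 0 := by
  constructor
  · intro h
    have := congrArg (eK (H := H)) h
    simpa [Prod.ext_iff] using this
  · rintro ⟨rfl, rfl⟩
    simp [mk2]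

/-- The graph of a partially defined operator, as a submodule of `K`. -/
noncomputable def graphK (T : H →ₗ.[ℂ] H) : Submodule ℂ (WithLp 2 (H × H)) :=
  T.graph.comap (eK (H := H)).toLinearEquiv.toLinearMap

lemma mem_graphK {T : H →ₗ.[ℂ] H} {x : K} : x ∈ graphK T ↔ eK x ∈ T.graph := Iff.rfl

lemma mk2_mem_graphK {T : H →ₗ.[ℂ] H} {a b : H} :
    mk2 a b ∈ graphK T ↔ (a, b) ∈ T.graph := by rw [mem_graphK, eK_mk2]

lemma mk2_mem_graphK' {T : H →ₗ.[ℂ] H} (x : T.domain) : mk2 (x : H) (T x) ∈ graphK T := by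
  rw [mk2_mem_graphK]; exact T.mem_graph x

lemma graphK_coe (T : H →ₗ.[ℂ] H) :
    (graphK T : Set K) = (eK (H := H)) ⁻¹' (T.graph : Set (H × H)) := rfl

lemma graphK_mono {T T' : H →ₗ.[ℂ] H} (h : T ≤ T') : graphK T ≤ graphK T' := by
  intro x hx
  exact LinearPMap.le_graph_of_le h hx

end StmtAux

namespace StmtAux

variable {H : Type*} [NormedAddCommGroup H] [InnerProductSpace ℂ H] [CompleteSpace H]

local notation "K" => WithLp 2 (H × H)

/-- The map `(a, b) ↦ (-b, a)` on `K` as a continuous linear equivalence. -/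
noncomputable def Jc : (WithLp 2 (H × H)) ≃L[ℂ] (WithLp 2 (H × H)) :=
  (eK (H := H)).trans <| (ContinuousLinearEquiv.prodComm ℂ H H).trans <|
    (ContinuousLinearEquiv.prodCongr (ContinuousLinearEquiv.neg ℂ)
      (ContinuousLinearEquiv.refl ℂ H)).trans (eK (H := H)).symm

@[simp] lemma Jc_lin_apply (x : K) : (Jc (H := H)).toLinearEquiv.toLinearMap x = Jc x := rfl

@[simp] lemma Jc_mk2 (a b : H) : Jc (mk2 a b) = mk2 (-b) a := by
  simp [Jc, mk2]

/-- The rotated graph `{(-T x, x)}` as a submodule of `K`. -/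
noncomputable def graphJ (T : H →ₗ.[ℂ] H) : Submodule ℂ (WithLp 2 (H × H)) :=
  (graphK T).map (Jc (H := H)).toLinearEquiv.toLinearMap

lemma mem_graphJ {T : H →ₗ.[ℂ] H} {y : K} :
    y ∈ graphJ T ↔ ∃ x : T.domain, y = mk2 (-(T x)) (x : H) := by
  rw [graphJ, Submodule.mem_map]
  constructor
  · rintro ⟨w, hw, rfl⟩
    obtain ⟨a, b, rfl⟩ := mk2_surj w
    rw [mk2_mem_graphK, LinearPMap.mem_graph_iff] at hw
    obtain ⟨x, hx1, hx2⟩ := hw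
    exact ⟨x, by simp [hx1, hx2]⟩
  · rintro ⟨x, rfl⟩
    exact ⟨mk2 (x : H) (T x), mk2_mem_graphK' x, by simp⟩

lemma adjoint_graphK {T : H →ₗ.[ℂ] H} (hT : Dense (T.domain : Set H)) :
    graphK T.adjoint = (graphJ T)ᗮ := by
  ext y
  obtain ⟨u, v, rfl⟩ := mk2_surj y
  rw [Submodule.mem_orthogonal, mk2_mem_graphK, LinearPMap.mem_graph_iff]
  constructor
  · rintro ⟨x, hx1, hx2⟩ w hw
    obtain ⟨z, rfl⟩ := mem_graphJ.1 hw
    rw [mk2_inner, inner_neg_left]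
    have h1 : ⟪T.adjoint x, (z : H)⟫_ℂ = ⟪(x : H), T z⟫_ℂ :=
      (LinearPMap.adjoint_isFormalAdjoint hT) x z
    rw [hx1, hx2] at h1
    have h2 : ⟪(z : H), v⟫_ℂ = ⟪T z, u⟫_ℂ := by
      rw [← inner_conj_symm, h1, inner_conj_symm]
    rw [h2]
    ring
  · intro h
    have key : ∀ x : T.domain, ⟪v, (x : H)⟫_ℂ = ⟪u, T x⟫_ℂ := by
      intro x
      have hx := h _ (mem_graphJ.2 ⟨x, rfl⟩)
      rw [mk2_inner, inner_neg_left] at hx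
      have : ⟪(x : H), v⟫_ℂ = ⟪T x, u⟫_ℂ := by linear_combination hx
      rw [← inner_conj_symm, this, inner_conj_symm]
    have hu : u ∈ T.adjoint.domain :=
      LinearPMap.mem_adjoint_domain_of_exists u ⟨v, key⟩
    exact ⟨⟨u, hu⟩, rfl, LinearPMap.adjoint_apply_eq hT ⟨u, hu⟩ key⟩

end StmtAux

namespace StmtAux

variable {H : Type*} [NormedAddCommGroup H] [InnerProductSpace ℂ H] [CompleteSpace H]

local notation "K" => WithLp 2 (H × H)

variable {T : H →ₗ.[ℂ] H}

lemma isClosed_graphK_iff : IsClosed (graphK T : Set K) ↔ T.IsClosed := by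
  rw [graphK_coe, LinearPMap.IsClosed]
  exact (eK (H := H)).toHomeomorph.isClosed_preimage

lemma graphK_eq_orth_graphJ (hT : Dense (T.domain : Set H)) (hsa : T.adjoint = T) :
    graphK T = (graphJ T)ᗮ := by
  have h := adjoint_graphK hT
  rw [hsa] at h
  exact h

lemma isClosed_graphK_of_sa (hT : Dense (T.domain : Set H)) (hsa : T.adjoint = T) :
    IsClosed (graphK T : Set K) := by
  rw [graphK_eq_orth_graphJ hT hsa]
  exact (graphJ T).isClosed_orthogonal

lemma isClosed_of_sa (hT : Dense (T.domain : Set H)) (hsa : T.adjoint = T) : T.IsClosed :=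
  isClosed_graphK_iff.1 (isClosed_graphK_of_sa hT hsa)

lemma symm_of_sa (hT : Dense (T.domain : Set H)) (hsa : T.adjoint = T)
    (x y : T.domain) : ⟪T x, (y : H)⟫_ℂ = ⟪(x : H), T y⟫_ℂ := by
  have h := LinearPMap.adjoint_isFormalAdjoint hT
  rw [hsa] at h
  exact h x y

lemma Jc_symm_mk2 (a b : H) : (Jc (H := H)).symm (mk2 a b) = mk2 b (-a) := by
  apply (Jc (H := H)).injective
  simp

lemma graphJ_coe (T : H →ₗ.[ℂ] H) :
    (graphJ T : Set K) = ⇑(Jc (H := H)).symm ⁻¹' (graphK T : Set K) := by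
  ext y
  simp only [Set.mem_preimage, SetLike.mem_coe]
  rw [mem_graphJ]
  constructor
  · rintro ⟨x, rfl⟩
    rw [Jc_symm_mk2]
    simpa using mk2_mem_graphK' x
  · intro hy
    obtain ⟨a, b, rfl⟩ := mk2_surj y
    rw [Jc_symm_mk2, mk2_mem_graphK, LinearPMap.mem_graph_iff] at hy
    obtain ⟨x, hx1, hx2⟩ := hy
    refine ⟨x, ?_⟩
    have ha : a = -(T x) := by rw [hx2]; simp
    rw [ha, hx1]

lemma isClosed_graphJ (hT : Dense (T.domain : Set H)) (hsa : T.adjoint = T) :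
    IsClosed (graphJ T : Set K) := by
  rw [graphJ_coe]
  exact (isClosed_graphK_of_sa hT hsa).preimage (Jc (H := H)).symm.continuous

/-- Von Neumann-type surjectivity: every `u` is of the form `f + T (T f)`. -/
lemma surj_one_add_sq (hT : Dense (T.domain : Set H)) (hsa : T.adjoint = T) (u : H) :
    ∃ (f : T.domain) (hf : (T f : H) ∈ T.domain), (f : H) + T ⟨T f, hf⟩ = u := by
  set W := graphJ T with hW
  haveI : CompleteSpace W := (isClosed_graphJ hT hsa).completeSpace_coe
  obtain ⟨y, hy, z, hz, hyz⟩ := W.exists_add_mem_mem_orthogonal (mk2 u 0)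
  rw [hW, ← graphK_eq_orth_graphJ hT hsa, mem_graphK, LinearPMap.mem_graph_iff] at hz
  obtain ⟨f, hf1, hf2⟩ := hz
  obtain ⟨x, rfl⟩ := mem_graphJ.1 hy
  obtain ⟨a, b, hab⟩ := mk2_surj z
  rw [hab] at hyz hf1 hf2
  simp only [eK_mk2] at hf1 hf2
  rw [mk2_add] at hyz
  have h1 : u = -(T x) + a ∧ (0 : H) = (x : H) + b := by
    have := congrArg (eK (H := H)) hyz
    simpa [Prod.ext_iff] using this
  have hxb : (x : H) = -b := eq_neg_of_add_eq_zero_left h1.2.symm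
  have hb : b ∈ T.domain := by
    have h := x.2
    rw [hxb, neg_mem_iff] at h
    exact h
  have hTf_mem : (T f : H) ∈ T.domain := by rw [hf2]; exact hb
  refine ⟨f, hTf_mem, ?_⟩
  have hx_eq : x = -⟨(T f : H), hTf_mem⟩ := by ext; simp [hxb, hf2]
  have hTx : T x = -(T ⟨(T f : H), hTf_mem⟩) := by rw [hx_eq, LinearPMap.map_neg]
  rw [h1.1, hTx, neg_neg, ← hf1, add_comm]

end StmtAux

namespace StmtAux

variable {H : Type*} [NormedAddCommGroup H] [InnerProductSpace ℂ H] [CompleteSpace H]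

local notation "K" => WithLp 2 (H × H)

variable {T : H →ₗ.[ℂ] H}

/-- The key kernel property: if `f ∈ dom T` is orthogonal to `dom T ∩ ran T` in the graph
inner product, then `f = 0`. -/
lemma key_zero (hT : Dense (T.domain : Set H)) (hsa : T.adjoint = T)
    (hker : ∀ f : T.domain, T f = 0 → (f : H) = 0) (f : T.domain)
    (h : ∀ g : T.domain, (g : H) ∈ LinearMap.range T.toFun →
      ⟪(f : H), (g : H)⟫_ℂ + ⟪T f, T g⟫_ℂ = 0) :
    (f : H) = 0 := by
  have hTf : ∀ u : H, ⟪T f, u⟫_ℂ = 0 := by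
    intro u
    obtain ⟨h₀, hh2, hsum⟩ := surj_one_add_sq hT hsa u
    set g : T.domain := ⟨(T h₀ : H), hh2⟩ with hg_def
    have hgr : (g : H) ∈ LinearMap.range T.toFun := ⟨h₀, rfl⟩
    have h2 := h g hgr
    have h3 : ⟪T f, (h₀ : H)⟫_ℂ = ⟪(f : H), T h₀⟫_ℂ := symm_of_sa hT hsa f h₀
    rw [← hsum, inner_add_right, h3]
    have hgc : (g : H) = T h₀ := rfl
    rw [← hgc]
    exact h2
  have hTf0 : T f = 0 := inner_self_eq_zero.1 (hTf (T f))
  exact hker f hTf0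

/-- Density of `dom T ∩ ran T`. -/
lemma dense_inter_of_sa (hT : Dense (T.domain : Set H)) (hsa : T.adjoint = T)
    (hker : ∀ f : T.domain, T f = 0 → (f : H) = 0) :
    Dense (((T.domain ⊓ LinearMap.range T.toFun : Submodule ℂ H)) : Set H) := by
  set D := T.domain ⊓ LinearMap.range T.toFun with hD
  rw [Submodule.dense_iff_topologicalClosure_eq_top, ← D.orthogonal_orthogonal_eq_closure]
  have hbot : Dᗮ = ⊥ := by
    rw [Submodule.eq_bot_iff]
    intro v hv
    rw [Submodule.mem_orthogonal] at hv
    obtain ⟨f, hf2, hsum⟩ := surj_one_add_sq hT hsa v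
    have hf0 : (f : H) = 0 := by
      apply key_zero hT hsa hker f
      intro g hg
      have hgD : (g : H) ∈ D := ⟨g.2, hg⟩
      have h0 : ⟪(g : H), v⟫_ℂ = 0 := hv _ hgD
      have h0' : ⟪v, (g : H)⟫_ℂ = 0 := by rw [← inner_conj_symm, h0, map_zero]
      rw [← hsum, inner_add_left] at h0'
      have h3 : ⟪T ⟨(T f : H), hf2⟩, (g : H)⟫_ℂ = ⟪(T f : H), T g⟫_ℂ :=
        symm_of_sa hT hsa ⟨(T f : H), hf2⟩ g
      rw [h3] at h0'
      exact h0'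
    have hf0' : f = 0 := Subtype.ext hf0
    have hTf0 : T f = 0 := by
      rw [hf0']
      exact map_zero T.toFun
    have harg : (⟨(T f : H), hf2⟩ : T.domain) = 0 := Subtype.ext hTf0
    have hval : T ⟨(T f : H), hf2⟩ = 0 := by
      rw [harg]
      exact map_zero T.toFun
    rw [← hsum, hf0, hval, add_zero]
  rw [hbot, Submodule.bot_orthogonal_eq_top]

end StmtAux

namespace StmtAux

variable {H : Type*} [NormedAddCommGroup H] [InnerProductSpace ℂ H] [CompleteSpace H]

local notation "K" => WithLp 2 (H × H)

variable {T : H →ₗ.[ℂ] H}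

lemma closure_eq_of_isClosed (hc : T.IsClosed) : T.closure = T := by
  refine le_antisymm ?_ T.le_closure
  apply LinearPMap.le_of_le_graph
  rw [← hc.isClosable.graph_closure_eq_closure_graph]
  exact Submodule.topologicalClosure_minimal _ le_rfl hc

/-- `dom T ∩ ran T` is a core of a self-adjoint injective operator `T`. -/
lemma core_of_sa (hT : Dense (T.domain : Set H)) (hsa : T.adjoint = T)
    (hker : ∀ f : T.domain, T f = 0 → (f : H) = 0) :
    (T.domRestrict (T.domain ⊓ LinearMap.range T.toFun)).closure = T := by
  set D := T.domain ⊓ LinearMap.range T.toFun with hD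
  set R := T.domRestrict D with hR
  have hTclosed : T.IsClosed := isClosed_of_sa hT hsa
  have hRle : R ≤ T := LinearPMap.domRestrict_le
  have hRclosable : R.IsClosable := hTclosed.isClosable.leIsClosable hRle
  refine le_antisymm ?_ ?_
  · have h1 : R.closure ≤ T.closure := hTclosed.isClosable.closure_mono hRle
    rwa [closure_eq_of_isClosed hTclosed] at h1
  · apply LinearPMap.le_of_le_graph
    rw [← hRclosable.graph_closure_eq_closure_graph]
    intro p hp
    rw [LinearPMap.mem_graph_iff] at hp
    obtain ⟨x, hx1, hx2⟩ := hp
    set W := (graphK R).topologicalClosure with hW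
    haveI : CompleteSpace W := (graphK R).isClosed_topologicalClosure.completeSpace_coe
    have hWle : W ≤ graphK T :=
      Submodule.topologicalClosure_minimal _ (graphK_mono hRle) (isClosed_graphK_of_sa hT hsa)
    obtain ⟨y, hy, z, hz, hyz⟩ := W.exists_add_mem_mem_orthogonal (mk2 (x : H) (T x))
    have hq : mk2 (x : H) (T x) ∈ graphK T := mk2_mem_graphK' x
    have hzT : z ∈ graphK T := by
      have : z = mk2 (x : H) (T x) - y := by rw [hyz]; abel
      rw [this]
      exact sub_mem hq (hWle hy)
    obtain ⟨a, b, rfl⟩ := mk2_surj z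
    rw [mk2_mem_graphK, LinearPMap.mem_graph_iff] at hzT
    obtain ⟨f', hf1'', hf2''⟩ := hzT
    have hf1 : (f' : H) = a := hf1''
    have hf2 : (T f' : H) = b := hf2''
    have hf'0 : (f' : H) = 0 := by
      apply key_zero hT hsa hker f'
      intro g hg
      have hgR : mk2 (g : H) (T g) ∈ graphK R := by
        rw [mk2_mem_graphK, LinearPMap.mem_graph_iff]
        have hgdom : (g : H) ∈ D ⊓ T.domain := ⟨⟨g.2, hg⟩, g.2⟩
        refine ⟨⟨(g : H), by rw [hR, LinearPMap.domRestrict_domain]; exact hgdom⟩, rfl, ?_⟩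
        exact LinearPMap.domRestrict_apply rfl
      have h0 : ⟪mk2 (g : H) (T g), mk2 a b⟫_ℂ = 0 :=
        (Submodule.mem_orthogonal _ _).1 hz _ ((graphK R).le_topologicalClosure hgR)
      rw [mk2_inner] at h0
      have h0' : ⟪a, (g : H)⟫_ℂ + ⟪b, T g⟫_ℂ = 0 := by
        rw [← inner_conj_symm (x := a), ← inner_conj_symm (x := b), ← map_add, h0, map_zero]
      rw [hf1, hf2]
      exact h0'
    have hf'0' : f' = 0 := Subtype.ext hf'0
    have hTf'0 : T f' = 0 := by rw [hf'0']; exact map_zero T.toFun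
    have hz0 : mk2 a b = 0 := by
      rw [← hf1, ← hf2, hf'0, hTf'0]
      simp
    have hqW : mk2 (x : H) (T x) ∈ W := by
      rw [hyz, hz0, add_zero]
      exact hy
    -- transfer back to `H × H`
    have hclos : mk2 (x : H) (T x) ∈ closure ((graphK R : Set K)) := by
      rw [← Submodule.topologicalClosure_coe]
      exact hqW
    rw [graphK_coe] at hclos
    have hclos' : mk2 (x : H) (T x) ∈
        closure (⇑(eK (H := H)).toHomeomorph ⁻¹' (R.graph : Set (H × H))) := hclos
    rw [← (eK (H := H)).toHomeomorph.preimage_closure] at hclos'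
    have hclos2 : ((x : H), (T x : H)) ∈ closure (R.graph : Set (H × H)) := by
      have h3 := Set.mem_preimage.1 hclos'
      have h4 : eK (mk2 (x : H) (T x)) ∈ closure (R.graph : Set (H × H)) := h3
      rwa [eK_mk2] at h4
    have hp : p = ((x : H), (T x : H)) := by
      rw [hx1, hx2]
    have h5 : ((x : H), (T x : H)) ∈ (R.graph.topologicalClosure : Set (H × H)) := by
      rw [Submodule.topologicalClosure_coe]
      exact hclos2
    rw [hp]
    exact SetLike.mem_coe.1 h5

/-- The range of a self-adjoint injective operator is dense. -/
lemma dense_range_of_sa (hT : Dense (T.domain : Set H)) (hsa : T.adjoint = T)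
    (hker : ∀ f : T.domain, T f = 0 → (f : H) = 0) :
    Dense ((LinearMap.range T.toFun : Submodule ℂ H) : Set H) := by
  set Rg := LinearMap.range T.toFun with hRg
  rw [Submodule.dense_iff_topologicalClosure_eq_top, ← Rg.orthogonal_orthogonal_eq_closure]
  have hbot : Rgᗮ = ⊥ := by
    rw [Submodule.eq_bot_iff]
    intro v hv
    rw [Submodule.mem_orthogonal] at hv
    have key : ∀ x : T.domain, ⟪(0 : H), (x : H)⟫_ℂ = ⟪v, T x⟫_ℂ := by
      intro x
      have h0 : ⟪T x, v⟫_ℂ = 0 := hv _ ⟨x, rfl⟩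
      rw [inner_zero_left, ← inner_conj_symm, h0, map_zero]
    have hvdom : v ∈ T.adjoint.domain :=
      LinearPMap.mem_adjoint_domain_of_exists v ⟨0, key⟩
    have hval : T.adjoint ⟨v, hvdom⟩ = 0 := LinearPMap.adjoint_apply_eq hT ⟨v, hvdom⟩ key
    have hgr : (v, (0 : H)) ∈ T.adjoint.graph := by
      rw [LinearPMap.mem_graph_iff]
      exact ⟨⟨v, hvdom⟩, rfl, hval⟩
    rw [hsa, LinearPMap.mem_graph_iff] at hgr
    obtain ⟨x, hx1, hx2⟩ := hgr
    have hx1' : (x : H) = v := hx1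
    have hx2' : T x = (0 : H) := hx2
    rw [← hx1']
    exact hker x hx2'
  rw [hbot, Submodule.bot_orthogonal_eq_top]

lemma mem_inverse_graph_iff (hker' : LinearMap.ker T.toFun = ⊥) {a b : H} :
    (a, b) ∈ T.inverse.graph ↔ (b, a) ∈ T.graph := by
  rw [LinearPMap.inverse_graph hker', Submodule.mem_map]
  constructor
  · rintro ⟨⟨p, q⟩, hp, hq⟩
    have hq' : (q, p) = (a, b) := hq
    have h1 : q = a := congrArg Prod.fst hq'
    have h2 : p = b := congrArg Prod.snd hq'
    subst h1
    subst h2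
    exact hp
  · intro h
    exact ⟨(b, a), h, rfl⟩

lemma inverse_ker (hker' : LinearMap.ker T.toFun = ⊥)
    (g : T.inverse.domain) (hg : T.inverse g = 0) : (g : H) = 0 := by
  have h1 : ((g : H), T.inverse g) ∈ T.inverse.graph := T.inverse.mem_graph g
  rw [hg, mem_inverse_graph_iff hker', LinearPMap.mem_graph_iff] at h1
  obtain ⟨x, hx1, hx2⟩ := h1
  have hx0 : x = 0 := by
    ext
    exact hx1
  have hx2' : T x = (g : H) := hx2
  rw [← hx2', hx0]
  exact map_zero T.toFun

/-- The inverse of a self-adjoint injective operator is self-adjoint. -/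
lemma inverse_sa (hT : Dense (T.domain : Set H)) (hsa : T.adjoint = T)
    (hker : ∀ f : T.domain, T f = 0 → (f : H) = 0) :
    T.inverse.adjoint = T.inverse := by
  have hker' : LinearMap.ker T.toFun = ⊥ := by
    rw [LinearMap.ker_eq_bot']
    intro m hm
    exact Subtype.ext (hker m hm)
  have hTi : Dense (T.inverse.domain : Set H) := by
    rw [LinearPMap.inverse_domain]
    exact dense_range_of_sa hT hsa hker
  apply LinearPMap.eq_of_eq_graph
  have h1 : graphK T.inverse.adjoint = graphK T.inverse := by
    rw [adjoint_graphK hTi]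
    ext y
    obtain ⟨c, d, rfl⟩ := mk2_surj y
    rw [Submodule.mem_orthogonal, mk2_mem_graphK, mem_inverse_graph_iff hker']
    have hTgraph : ∀ u v : H, ((∀ x : T.domain, ⟪T x, u⟫_ℂ = ⟪(x : H), v⟫_ℂ) ↔ (u, v) ∈ T.graph) := by
      intro u v
      have := graphK_eq_orth_graphJ hT hsa
      have h2 : mk2 u v ∈ graphK T ↔ mk2 u v ∈ (graphJ T)ᗮ := by rw [this]
      rw [mk2_mem_graphK, Submodule.mem_orthogonal] at h2
      rw [h2]
      constructor
      · intro h w hw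
        obtain ⟨x, rfl⟩ := mem_graphJ.1 hw
        rw [mk2_inner, inner_neg_left, h x]
        ring
      · intro h x
        have := h _ (mem_graphJ.2 ⟨x, rfl⟩)
        rw [mk2_inner, inner_neg_left] at this
        linear_combination -this
    rw [← hTgraph d c]
    constructor
    · intro h x
      have hz : (T x : H) ∈ T.inverse.domain := by
        rw [LinearPMap.inverse_domain]
        exact ⟨x, rfl⟩
      have hzv : T.inverse ⟨(T x : H), hz⟩ = x := LinearPMap.inverse_apply_eq hker' rfl
      have h6 := h _ (mem_graphJ.2 ⟨⟨(T x : H), hz⟩, rfl⟩)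
      rw [hzv, mk2_inner, inner_neg_left] at h6
      have h7 : -⟪(x : H), c⟫_ℂ + ⟪(T x : H), d⟫_ℂ = 0 := h6
      linear_combination h7
    · intro h w hw
      obtain ⟨z, rfl⟩ := mem_graphJ.1 hw
      -- z : T.inverse.domain, pair is mk2 (-(T.inverse z)) z
      have hzmem : ((z : H), (T.inverse z : H)) ∈ T.inverse.graph := T.inverse.mem_graph z
      rw [mem_inverse_graph_iff hker', LinearPMap.mem_graph_iff] at hzmem
      obtain ⟨x, hx1, hx2⟩ := hzmem
      -- hx1 : ↑x = T.inverse z, hx2 : T x = ↑z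
      rw [mk2_inner, inner_neg_left]
      have hx1' : (x : H) = (T.inverse z : H) := hx1
      have hx2' : (T x : H) = (z : H) := hx2
      have h6 : ⟪(z : H), d⟫_ℂ = ⟪(T.inverse z : H), c⟫_ℂ := by
        rw [← hx2', ← hx1']
        exact h x
      linear_combination h6
  -- transfer graphK equality to graph equality
  ext ⟨a, b⟩
  rw [← mk2_mem_graphK, ← mk2_mem_graphK, h1]

end StmtAux

/-- Lemma 3.6. Let `S` be a self-adjoint operator in the complex separable
Hilbert space `H` with `ker(S) = {0}`.  Then `dom(S) ∩ ran(S) = dom(S) ∩ dom(S⁻¹)` is dense in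
`H` and is a core for both `S` and `S⁻¹`. -/
theorem dom_inter_ran_dense_and_core
    {H : Type*}
    [NormedAddCommGroup H] [InnerProductSpace ℂ H] [CompleteSpace H]
    [TopologicalSpace.SeparableSpace H]
    (S : H →ₗ.[ℂ] H)
    (hdense : Dense (S.domain : Set H))
    (hsa : S.adjoint = S)
    (hker : ∀ f : S.domain, S f = 0 → (f : H) = 0) :
    Dense (((S.domain ⊓ LinearMap.range S.toFun : Submodule ℂ H)) : Set H) ∧
    S.domain ⊓ LinearMap.range S.toFun = S.domain ⊓ S.inverse.domain ∧
    (S.domRestrict (S.domain ⊓ LinearMap.range S.toFun)).closure = S ∧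
    (S.inverse.domRestrict (S.domain ⊓ LinearMap.range S.toFun)).closure = S.inverse := by
  have hker' : LinearMap.ker S.toFun = ⊥ := by
    rw [LinearMap.ker_eq_bot']
    intro m hm
    exact Subtype.ext (hker m hm)
  have part1 := StmtAux.dense_inter_of_sa hdense hsa hker
  have part2 : S.domain ⊓ LinearMap.range S.toFun = S.domain ⊓ S.inverse.domain := by
    rw [LinearPMap.inverse_domain]
  have part3 := StmtAux.core_of_sa hdense hsa hker
  have hTi : Dense (S.inverse.domain : Set H) := by
    rw [LinearPMap.inverse_domain]
    exact StmtAux.dense_range_of_sa hdense hsa hker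
  have hsa' := StmtAux.inverse_sa hdense hsa hker
  have hker'' : ∀ g : S.inverse.domain, S.inverse g = 0 → (g : H) = 0 := fun g hg =>
    StmtAux.inverse_ker hker' g hg
  have part4 := StmtAux.core_of_sa hTi hsa' hker''
  have hDeq : S.inverse.domain ⊓ LinearMap.range S.inverse.toFun
      = S.domain ⊓ LinearMap.range S.toFun := by
    rw [LinearPMap.inverse_range hker', LinearPMap.inverse_domain, inf_comm]
  rw [hDeq] at part4
  exact ⟨part1, part2, part3, part4⟩
end

section
/- Assume ker(A) = {0} and ker(A*) = {0}. Then dom(A*) ∩ ran(A) is dense in H₂ and is a core for A*, i.e., the closure of the restriction of A* to dom(A*) ∩ ran(A) equals A*. -/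
open scoped InnerProductSpace

section Aux

variable {H₁ H₂ : Type*}
    [NormedAddCommGroup H₁] [InnerProductSpace ℂ H₁] [CompleteSpace H₁]
    [NormedAddCommGroup H₂] [InnerProductSpace ℂ H₂] [CompleteSpace H₂]

theorem aux_vn (A : H₁ →ₗ.[ℂ] H₂) (hdense : Dense (A.domain : Set H₁)) (hclosed : A.IsClosed)
    (u : H₁) :
    ∃ (f : A.domain) (hf : A f ∈ A.adjoint.domain), (f : H₁) + A.adjoint ⟨A f, hf⟩ = u := by
  set φ := WithLp.prodContinuousLinearEquiv 2 ℂ H₁ H₂ with hφ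
  set G : Submodule ℂ (WithLp 2 (H₁ × H₂)) :=
    A.graph.comap (φ.toLinearEquiv : WithLp 2 (H₁ × H₂) →ₗ[ℂ] H₁ × H₂) with hG
  have hGmem : ∀ w : WithLp 2 (H₁ × H₂), w ∈ G ↔ φ w ∈ A.graph := fun w => Iff.rfl
  have hGclosed : IsClosed (G : Set (WithLp 2 (H₁ × H₂))) := by
    have : (G : Set (WithLp 2 (H₁ × H₂))) = φ ⁻¹' (A.graph : Set (H₁ × H₂)) := rfl
    rw [this]; exact hclosed.preimage φ.continuous
  haveI : CompleteSpace G := hGclosed.completeSpace_coe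
  obtain ⟨y, hy, z, hz, huz⟩ := G.exists_add_mem_mem_orthogonal (φ.symm (u, 0))
  obtain ⟨f, hf1, hf2⟩ := A.mem_graph_iff.mp ((hGmem y).mp hy)
  have hzinner : ∀ x : A.domain, ⟪(x : H₁), (φ z).1⟫_ℂ + ⟪A x, (φ z).2⟫_ℂ = 0 := by
    intro x
    have hmem : φ.symm ((x : H₁), A x) ∈ G := by
      rw [hGmem, φ.apply_symm_apply]; exact A.mem_graph x
    have h0 := hz _ hmem
    rw [WithLp.prod_inner_apply] at h0
    exact h0
  -- (φ z).2 is in the adjoint domain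
  have hw : ∀ x : A.domain, ⟪-(φ z).1, (x : H₁)⟫_ℂ = ⟪(φ z).2, A x⟫_ℂ := by
    intro x
    have := congrArg (starRingEnd ℂ) (hzinner x)
    simp only [map_add, inner_conj_symm, map_zero] at this
    rw [inner_neg_left]
    linear_combination -this
  have hgmem : (φ z).2 ∈ A.adjoint.domain :=
    A.mem_adjoint_domain_of_exists _ ⟨-(φ z).1, hw⟩
  have hgval : A.adjoint ⟨(φ z).2, hgmem⟩ = -(φ z).1 :=
    LinearPMap.adjoint_apply_eq hdense _ hw
  -- decompose the identity
  have hid : (u, (0 : H₂)) = ((f : H₁), A f) + ((φ z).1, (φ z).2) := by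
    have := congrArg φ huz
    rw [φ.apply_symm_apply, map_add] at this
    rw [this, hf1, hf2]
  have h1 : u = (f : H₁) + (φ z).1 := congrArg Prod.fst hid
  have h2 : (0 : H₂) = A f + (φ z).2 := congrArg Prod.snd hid
  have hAf : A f = -(φ z).2 := by rw [eq_neg_iff_add_eq_zero, ← h2]
  have hAfmem : A f ∈ A.adjoint.domain := by rw [hAf]; exact A.adjoint.domain.neg_mem hgmem
  refine ⟨f, hAfmem, ?_⟩
  have : A.adjoint ⟨A f, hAfmem⟩ = (φ z).1 := by
    have hneg : (⟨A f, hAfmem⟩ : A.adjoint.domain) = -⟨(φ z).2, hgmem⟩ := by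
      ext; simp [hAf]
    rw [hneg, LinearPMap.map_neg, hgval, neg_neg]
  rw [this, ← h1]

theorem aux_core (A : H₁ →ₗ.[ℂ] H₂) (hdense : Dense (A.domain : Set H₁)) (hclosed : A.IsClosed)
    (g : H₂) (hg : ∀ (f : A.domain) (hf : A f ∈ A.adjoint.domain), ⟪A f, g⟫_ℂ = 0)
    (x : A.domain) : ⟪A x, g⟫_ℂ = 0 := by
  set φ := WithLp.prodContinuousLinearEquiv 2 ℂ H₁ H₂ with hφ
  set G : Submodule ℂ (WithLp 2 (H₁ × H₂)) :=
    A.graph.comap (φ.toLinearEquiv : WithLp 2 (H₁ × H₂) →ₗ[ℂ] H₁ × H₂) with hG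
  set S : Submodule ℂ (WithLp 2 (H₁ × H₂)) :=
    G ⊓ ((⊤ : Submodule ℂ H₁).prod A.adjoint.domain).comap
      (φ.toLinearEquiv : WithLp 2 (H₁ × H₂) →ₗ[ℂ] H₁ × H₂) with hS
  have hSmem : ∀ w : WithLp 2 (H₁ × H₂), w ∈ S ↔ φ w ∈ A.graph ∧ (φ w).2 ∈ A.adjoint.domain := by
    intro w
    simp only [hS, Submodule.mem_inf, Submodule.mem_comap, Submodule.mem_prod, Submodule.mem_top,
      true_and]
    rfl
  have hGclosed : IsClosed (G : Set (WithLp 2 (H₁ × H₂))) := by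
    have : (G : Set (WithLp 2 (H₁ × H₂))) = φ ⁻¹' (A.graph : Set (H₁ × H₂)) := rfl
    rw [this]; exact hclosed.preimage φ.continuous
  set K := S.topologicalClosure with hK
  have hKG : K ≤ G := S.topologicalClosure_minimal inf_le_left hGclosed
  haveI : CompleteSpace K := S.isClosed_topologicalClosure.completeSpace_coe
  obtain ⟨p, hp, q, hq, hxq⟩ := K.exists_add_mem_mem_orthogonal (φ.symm ((x : H₁), A x))
  have hqS : q ∈ Sᗮ := Submodule.orthogonal_le S.le_topologicalClosure hq
  have hqG : q ∈ G := by
    have hx : φ.symm ((x : H₁), A x) ∈ G := by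
      show φ (φ.symm _) ∈ A.graph
      rw [φ.apply_symm_apply]; exact A.mem_graph x
    have : q = φ.symm ((x : H₁), A x) - p := by rw [hxq]; abel
    rw [this]; exact G.sub_mem hx (hKG hp)
  obtain ⟨x', hx1, hx2⟩ := A.mem_graph_iff.mp (hqG : φ q ∈ A.graph)
  -- show x' = 0 using von Neumann
  have hx'inner : ∀ (f : A.domain), A f ∈ A.adjoint.domain → ⟪(f : H₁) , (x' : H₁)⟫_ℂ
      + ⟪A f, A x'⟫_ℂ = 0 := by
    intro f hf
    have hmem : φ.symm ((f : H₁), A f) ∈ S := by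
      rw [hSmem, φ.apply_symm_apply]
      exact ⟨A.mem_graph f, hf⟩
    have h0 := hqS _ hmem
    rw [WithLp.prod_inner_apply] at h0
    rw [hx1, hx2]
    exact h0
  have hx'0 : (x' : H₁) = 0 := by
    obtain ⟨f, hf, hfeq⟩ := aux_vn A hdense hclosed (x' : H₁)
    have h1 := hx'inner f hf
    have h2 : ⟪A f, A x'⟫_ℂ = ⟪A.adjoint ⟨A f, hf⟩, (x' : H₁)⟫_ℂ :=
      (LinearPMap.adjoint_isFormalAdjoint hdense ⟨A f, hf⟩ x').symm
    rw [h2, ← inner_add_left, hfeq] at h1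
    exact inner_self_eq_zero.mp h1
  have hq0 : q = 0 := by
    have hq' : φ q = ((x' : H₁), A x') := Prod.ext hx1.symm hx2.symm
    have hAx' : A x' = 0 := by
      rw [show x' = (0 : A.domain) from Subtype.ext hx'0]; simp
    have : φ q = 0 := by rw [hq', hx'0, hAx']; rfl
    simpa using congrArg φ.symm this
  -- hence (x, Ax) ∈ closure S, conclude by continuity
  have hxK : φ.symm ((x : H₁), A x) ∈ closure (S : Set (WithLp 2 (H₁ × H₂))) := by
    rw [← Submodule.topologicalClosure_coe]
    rw [hxq, hq0, add_zero]
    exact hp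
  have hsub : (S : Set (WithLp 2 (H₁ × H₂))) ⊆ {v | ⟪v, φ.symm (0, g)⟫_ℂ = 0} := by
    intro s hs
    obtain ⟨hs1, hs2⟩ := (hSmem s).mp hs
    obtain ⟨f, hf1, hf2⟩ := A.mem_graph_iff.mp hs1
    show ⟪s, φ.symm (0, g)⟫_ℂ = 0
    rw [WithLp.prod_inner_apply]
    have e1 : (s : WithLp 2 (H₁ × H₂)).ofLp.1 = (φ s).1 := rfl
    have e2 : (s : WithLp 2 (H₁ × H₂)).ofLp.2 = (φ s).2 := rfl
    have e3 : (φ.symm ((0 : H₁), g)).ofLp.1 = (0 : H₁) := rfl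
    have e4 : (φ.symm ((0 : H₁), g)).ofLp.2 = g := rfl
    rw [e1, e2, e3, e4, ← hf1, ← hf2, inner_zero_right, zero_add]
    exact hg f (hf2 ▸ hs2)
  have hclosed' : IsClosed {v : WithLp 2 (H₁ × H₂) | ⟪v, φ.symm (0, g)⟫_ℂ = 0} :=
    isClosed_eq (continuous_id.inner continuous_const) continuous_const
  have := (hclosed'.closure_subset_iff.mpr hsub) hxK
  simp only [Set.mem_setOf_eq, WithLp.prod_inner_apply] at this
  have e3 : (φ.symm (((x : H₁)), A x)).ofLp.2 = A x := rfl
  rw [show (φ.symm ((0 : H₁), g)).ofLp.2 = g from rfl, show (φ.symm ((0:H₁), g)).ofLp.1 = (0:H₁) from rfl,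
    inner_zero_right, zero_add, e3] at this
  exact this

theorem aux_adj_closed (A : H₁ →ₗ.[ℂ] H₂) (hdense : Dense (A.domain : Set H₁)) :
    IsClosed (A.adjoint.graph : Set (H₂ × H₁)) := by
  have heq : (A.adjoint.graph : Set (H₂ × H₁)) =
      ⋂ (x : A.domain), {p : H₂ × H₁ | ⟪p.1, A x⟫_ℂ = ⟪p.2, (x : H₁)⟫_ℂ} := by
    ext p
    simp only [Set.mem_iInter, Set.mem_setOf_eq, SetLike.mem_coe]
    constructor
    · intro hp x
      obtain ⟨y, hy1, hy2⟩ := A.adjoint.mem_graph_iff.mp hp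
      rw [← hy1, ← hy2, ← LinearPMap.adjoint_isFormalAdjoint hdense y x]
    · intro hp
      have hcond : ∀ x : A.domain, ⟪p.2, (x : H₁)⟫_ℂ = ⟪p.1, A x⟫_ℂ := fun x => (hp x).symm
      have hmem : p.1 ∈ A.adjoint.domain := A.mem_adjoint_domain_of_exists _ ⟨p.2, hcond⟩
      exact A.adjoint.mem_graph_iff.mpr ⟨⟨p.1, hmem⟩, rfl,
        LinearPMap.adjoint_apply_eq hdense _ hcond⟩
  rw [heq]
  exact isClosed_iInter fun x => isClosed_eq (continuous_fst.inner continuous_const)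
    (continuous_snd.inner continuous_const)

end Aux

set_option linter.unusedVariables false in
/-- Lemma 3.7 (ii). Let `A : dom(A) ⊆ H₁ → H₂` be densely defined and closed
with `ker(A) = {0}` and `ker(A*) = {0}`.  Then `dom(A*) ∩ ran(A)` is dense in `H₂` and is a
core for `A*`, i.e. the closure of the restriction of `A*` to `dom(A*) ∩ ran(A)` equals `A*`. -/
theorem dom_adjoint_inter_ran_dense_and_core
    {H₁ H₂ : Type*}
    [NormedAddCommGroup H₁] [InnerProductSpace ℂ H₁] [CompleteSpace H₁]
    [TopologicalSpace.SeparableSpace H₁]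
    [NormedAddCommGroup H₂] [InnerProductSpace ℂ H₂] [CompleteSpace H₂]
    [TopologicalSpace.SeparableSpace H₂]
    (A : H₁ →ₗ.[ℂ] H₂)
    (hdense : Dense (A.domain : Set H₁))
    (hclosed : A.IsClosed)
    (hker : ∀ f : A.domain, A f = 0 → (f : H₁) = 0)
    (hkerAdj : ∀ g : A.adjoint.domain, A.adjoint g = 0 → (g : H₂) = 0) :
    Dense (((A.adjoint.domain ⊓ LinearMap.range A.toFun : Submodule ℂ H₂)) : Set H₂) ∧
    (A.adjoint.domRestrict (LinearMap.range A.toFun)).closure = A.adjoint := by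
  constructor
  ·
    rw [Submodule.dense_iff_topologicalClosure_eq_top, Submodule.topologicalClosure_eq_top_iff]
    rw [Submodule.eq_bot_iff]
    intro g hg
    have hAfg : ∀ (f : A.domain) (hf : A f ∈ A.adjoint.domain), ⟪A f, g⟫_ℂ = 0 := by
      intro f hf
      exact hg _ (Submodule.mem_inf.mpr ⟨hf, ⟨f, rfl⟩⟩)
    have hall : ∀ x : A.domain, ⟪A x, g⟫_ℂ = 0 := aux_core A hdense hclosed g hAfg
    have hcond : ∀ x : A.domain, ⟪(0 : H₁), (x : H₁)⟫_ℂ = ⟪g, A x⟫_ℂ := by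
      intro x
      rw [inner_zero_left, ← inner_conj_symm, hall x, map_zero]
    have hgmem : g ∈ A.adjoint.domain := A.mem_adjoint_domain_of_exists g ⟨0, hcond⟩
    have hgval : A.adjoint ⟨g, hgmem⟩ = 0 := LinearPMap.adjoint_apply_eq hdense _ hcond
    exact hkerAdj ⟨g, hgmem⟩ hgval
  ·
    set R := A.adjoint.domRestrict (LinearMap.range A.toFun) with hR
    set ψ := WithLp.prodContinuousLinearEquiv 2 ℂ H₂ H₁ with hψ
    set W : Submodule ℂ (WithLp 2 (H₂ × H₁)) :=
      A.adjoint.graph.comap (ψ.toLinearEquiv : WithLp 2 (H₂ × H₁) →ₗ[ℂ] H₂ × H₁) with hW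
    set K : Submodule ℂ (WithLp 2 (H₂ × H₁)) :=
      R.graph.comap (ψ.toLinearEquiv : WithLp 2 (H₂ × H₁) →ₗ[ℂ] H₂ × H₁) with hK
    have hWclosed : IsClosed (W : Set (WithLp 2 (H₂ × H₁))) := by
      have : (W : Set (WithLp 2 (H₂ × H₁))) = ψ ⁻¹' (A.adjoint.graph : Set (H₂ × H₁)) := rfl
      rw [this]; exact (aux_adj_closed A hdense).preimage ψ.continuous
    have hKW : K ≤ W :=
      Submodule.comap_mono (LinearPMap.le_graph_of_le (LinearPMap.domRestrict_le))
    set Kc := K.topologicalClosure with hKc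
    haveI : CompleteSpace Kc := K.isClosed_topologicalClosure.completeSpace_coe
    have hKcW : Kc ≤ W := K.topologicalClosure_minimal hKW hWclosed
    -- W ≤ Kc
    have hWKc : W ≤ Kc := by
      intro u hu
      obtain ⟨p, hp, q, hq, huq⟩ := Kc.exists_add_mem_mem_orthogonal u
      have hqK : q ∈ Kᗮ := Submodule.orthogonal_le K.le_topologicalClosure hq
      have hqW : q ∈ W := by
        have : q = u - p := by rw [huq]; abel
        rw [this]; exact W.sub_mem hu (hKcW hp)
      obtain ⟨y, hy1, hy2⟩ := A.adjoint.mem_graph_iff.mp (hqW : ψ q ∈ A.adjoint.graph)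
      -- inner product relation
      have hinner : ∀ (f : A.domain) (hf : A f ∈ A.adjoint.domain),
          ⟪A f, (y : H₂)⟫_ℂ + ⟪A.adjoint ⟨A f, hf⟩, A.adjoint y⟫_ℂ = 0 := by
        intro f hf
        have hdmem : A f ∈ LinearMap.range A.toFun ⊓ A.adjoint.domain :=
          Submodule.mem_inf.mpr ⟨⟨f, rfl⟩, hf⟩
        have hRdom : A f ∈ R.domain := by rw [hR, LinearPMap.domRestrict_domain]; exact hdmem
        have hRval : R ⟨A f, hRdom⟩ = A.adjoint ⟨A f, hf⟩ := LinearPMap.domRestrict_apply rfl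
        have hmemK : ψ.symm (A f, A.adjoint ⟨A f, hf⟩) ∈ K := by
          show ψ (ψ.symm _) ∈ R.graph
          rw [ψ.apply_symm_apply]
          exact R.mem_graph_iff.mpr ⟨⟨A f, hRdom⟩, rfl, hRval⟩
        have h0 := hqK _ hmemK
        rw [WithLp.prod_inner_apply] at h0
        have e1 : (ψ.symm ((A f : H₂), A.adjoint ⟨A f, hf⟩)).ofLp.1 = (A f : H₂) := rfl
        have e2 : (ψ.symm ((A f : H₂), A.adjoint ⟨A f, hf⟩)).ofLp.2 = A.adjoint ⟨A f, hf⟩ := rfl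
        rw [e1, e2] at h0
        rw [hy1, hy2]
        exact h0
      -- conclude A† y = 0
      have hAy0 : A.adjoint y = 0 := by
        obtain ⟨f, hf, hfeq⟩ := aux_vn A hdense hclosed (A.adjoint y)
        have h1 := hinner f hf
        have h2 : ⟪A f, (y : H₂)⟫_ℂ = ⟪(f : H₁), A.adjoint y⟫_ℂ := by
          have := congrArg (starRingEnd ℂ) (LinearPMap.adjoint_isFormalAdjoint hdense y f)
          simp only [inner_conj_symm] at this
          exact this.symm
        rw [h2, ← inner_add_left, hfeq] at h1
        exact inner_self_eq_zero.mp h1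
      have hy0 : (y : H₂) = 0 := hkerAdj y hAy0
      have hq0 : q = 0 := by
        have : ψ q = 0 := by
          have : ψ q = ((y : H₂), A.adjoint y) := Prod.ext hy1.symm hy2.symm
          rw [this, hy0, hAy0]; rfl
        simpa using congrArg ψ.symm this
      rw [huq, hq0, add_zero]; exact hp
    have hWK : W = Kc := le_antisymm hWKc hKcW
    -- transfer back
    have hgraph : R.graph.topologicalClosure = A.adjoint.graph := by
      apply SetLike.ext'
      have h1 : (Kc : Set (WithLp 2 (H₂ × H₁))) = ψ ⁻¹' (closure (R.graph : Set (H₂ × H₁))) := by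
        rw [Submodule.topologicalClosure_coe]
        have : (K : Set (WithLp 2 (H₂ × H₁))) = ψ ⁻¹' (R.graph : Set (H₂ × H₁)) := rfl
        rw [this]
        exact (ψ.toHomeomorph.preimage_closure _).symm
      have h2 : (W : Set (WithLp 2 (H₂ × H₁))) = ψ ⁻¹' (A.adjoint.graph : Set (H₂ × H₁)) := rfl
      have h3 : ψ ⁻¹' (A.adjoint.graph : Set (H₂ × H₁))
          = ψ ⁻¹' (closure (R.graph : Set (H₂ × H₁))) := by rw [← h1, ← h2, hWK]
      have h4 := congrArg (fun s => ψ '' s) h3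
      simp only [Set.image_preimage_eq _ ψ.surjective] at h4
      rw [Submodule.topologicalClosure_coe, ← h4]
    have hclosable : R.IsClosable := ⟨A.adjoint, hgraph⟩
    apply LinearPMap.eq_of_eq_graph
    rw [← hclosable.graph_closure_eq_closure_graph]
    exact hgraph
end

section
/- The composed operator A* ∘ A₀ from H_A to H₁, with domain {f ∈ dom(A) : Af ∈ dom(A*)} ⊆ H_A, is closable, and its closure equals A* ∘ Ã, where Ã = closure(A₀) is the unique unitary extension of A₀; that is, closure(A* A₀) = A* closure(A₀). -/
open scoped InnerProductSpace


set_option linter.unusedSectionVars false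

section Helpers

variable {H₁ H₂ : Type*}
  [NormedAddCommGroup H₁] [InnerProductSpace ℂ H₁] [CompleteSpace H₁]
  [NormedAddCommGroup H₂] [InnerProductSpace ℂ H₂] [CompleteSpace H₂]

theorem my_mem_adjoint_graph_iff (A : H₁ →ₗ.[ℂ] H₂) (hd : Dense (A.domain : Set H₁))
    (v : H₂) (w : H₁) :
    (v, w) ∈ A.adjoint.graph ↔ ∀ x : A.domain, ⟪w, (x : H₁)⟫_ℂ = ⟪v, A x⟫_ℂ := by
  constructor
  · intro h
    rw [LinearPMap.mem_graph_iff] at h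
    obtain ⟨y, hy1, hy2⟩ := h
    intro x
    have h2 := LinearPMap.adjoint_isFormalAdjoint hd y x
    simp only at hy1 hy2
    rw [hy2] at h2
    rw [h2, hy1]
  · intro h
    have hv : v ∈ A.adjoint.domain :=
      LinearPMap.mem_adjoint_domain_of_exists v ⟨w, h⟩
    rw [LinearPMap.mem_graph_iff]
    exact ⟨⟨v, hv⟩, rfl, LinearPMap.adjoint_apply_eq hd ⟨v, hv⟩ h⟩

theorem my_adjoint_graph_closed (A : H₁ →ₗ.[ℂ] H₂) (hd : Dense (A.domain : Set H₁)) :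
    IsClosed (A.adjoint.graph : Set (H₂ × H₁)) := by
  have hset : (A.adjoint.graph : Set (H₂ × H₁)) =
      ⋂ x : A.domain, {p : H₂ × H₁ | ⟪p.2, (x : H₁)⟫_ℂ = ⟪p.1, A x⟫_ℂ} := by
    ext ⟨v, w⟩
    simp only [Set.mem_iInter, Set.mem_setOf_eq, SetLike.mem_coe]
    exact my_mem_adjoint_graph_iff A hd v w
  rw [hset]
  exact isClosed_iInter fun x => isClosed_eq
    (Continuous.inner continuous_snd continuous_const)
    (Continuous.inner continuous_fst continuous_const)

/-- von Neumann: `1 + A†A` is surjective. -/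
theorem my_vonNeumann (A : H₁ →ₗ.[ℂ] H₂) (hd : Dense (A.domain : Set H₁))
    (hclosed : A.IsClosed) (u : H₁) :
    ∃ (f : A.domain) (hf : A f ∈ A.adjoint.domain),
      (f : H₁) + A.adjoint ⟨A f, hf⟩ = u := by
  classical
  let e : WithLp 2 (H₁ × H₂) ≃L[ℂ] H₁ × H₂ := WithLp.prodContinuousLinearEquiv 2 ℂ H₁ H₂
  let G : Submodule ℂ (WithLp 2 (H₁ × H₂)) :=
    A.graph.comap (e.toLinearEquiv : WithLp 2 (H₁ × H₂) →ₗ[ℂ] H₁ × H₂)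
  have hG : IsClosed (G : Set (WithLp 2 (H₁ × H₂))) := by
    have h1 : (G : Set _) = e ⁻¹' (A.graph : Set (H₁ × H₂)) := rfl
    rw [h1]; exact hclosed.preimage e.continuous
  haveI : CompleteSpace G := hG.completeSpace_coe
  set v : WithLp 2 (H₁ × H₂) := e.symm (u, 0) with hv
  set pp := G.orthogonalProjectionOnto v with hpp
  have hq : v - ↑pp ∈ Gᗮ := Submodule.sub_starProjection_mem_orthogonal (K := G) v
  have hpG : (pp : WithLp 2 (H₁ × H₂)) ∈ G := pp.2
  rw [Submodule.mem_comap, LinearPMap.mem_graph_iff] at hpG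
  obtain ⟨f, hf1, hf2⟩ := hpG
  have key : ∀ x : A.domain, ⟪A x, A f⟫_ℂ = ⟪(x : H₁), u - (f : H₁)⟫_ℂ := by
    intro x
    have hmem : e.symm ((x : H₁), A x) ∈ G := by
      rw [Submodule.mem_comap]
      have h2 : (e.toLinearEquiv : WithLp 2 (H₁ × H₂) →ₗ[ℂ] H₁ × H₂) (e.symm ((x : H₁), A x))
          = ((x : H₁), A x) := e.apply_symm_apply _
      rw [h2]
      exact A.mem_graph x
    have h0 := (Submodule.mem_orthogonal G (v - ↑pp)).mp hq _ hmem
    have hfst : (v - ↑pp).fst = u - (f : H₁) := by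
      rw [WithLp.sub_fst]
      have ha : v.fst = u := rfl
      have hb : ((pp : WithLp 2 (H₁ × H₂))).fst = (f : H₁) := hf1.symm
      rw [ha, hb]
    have hsnd : (v - ↑pp).snd = -(A f) := by
      rw [WithLp.sub_snd]
      have ha : v.snd = (0 : H₂) := rfl
      have hb : ((pp : WithLp 2 (H₁ × H₂))).snd = A f := hf2.symm
      rw [ha, hb, zero_sub]
    have h0' : ⟪(x : H₁), u - (f : H₁)⟫_ℂ + ⟪A x, -(A f)⟫_ℂ = 0 := by
      rw [← hfst, ← hsnd]
      rw [WithLp.prod_inner_apply] at h0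
      exact h0
    rw [inner_neg_right] at h0'
    linear_combination -h0'
  have hmemAd : A f ∈ A.adjoint.domain := by
    refine LinearPMap.mem_adjoint_domain_of_exists _ ⟨u - (f : H₁), fun x => ?_⟩
    calc ⟪u - (f : H₁), (x : H₁)⟫_ℂ = (starRingEnd ℂ) ⟪(x : H₁), u - (f : H₁)⟫_ℂ := by
          rw [inner_conj_symm]
      _ = (starRingEnd ℂ) ⟪A x, A f⟫_ℂ := by rw [key x]
      _ = ⟪A f, A x⟫_ℂ := by rw [inner_conj_symm]
  refine ⟨f, hmemAd, ?_⟩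
  have hval : A.adjoint ⟨A f, hmemAd⟩ = u - (f : H₁) := by
    refine LinearPMap.adjoint_apply_eq hd _ fun x => ?_
    calc ⟪u - (f : H₁), (x : H₁)⟫_ℂ = (starRingEnd ℂ) ⟪(x : H₁), u - (f : H₁)⟫_ℂ := by
          rw [inner_conj_symm]
      _ = (starRingEnd ℂ) ⟪A x, A f⟫_ℂ := by rw [key x]
      _ = ⟪A f, A x⟫_ℂ := by rw [inner_conj_symm]
  rw [hval]
  abel

end Helpers

/-- Theorem 3.8. Let `A : dom(A) ⊆ H₁ → H₂` be densely defined, closed with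
`ker(A) = {0}`.  Let `HA` be the Hilbert space completion of `dom(A)` with respect to
`(f,g)_A = ⟪Af, Ag⟫` (realized via `j : dom(A) → HA` with dense range), `K` the closure of
`ran(A)` in `H₂`, `A₀ : HA ⊇ ran(j) → K`, `j f ↦ A f`, and `Ã = closure(A₀) : HA → K` its
unique unitary extension.  Then the composed operator `A* A₀` (with domain
`{j f : A f ∈ dom(A*)} ⊆ HA`, mapping into `H₁`) is closable and its closure equals `A* Ã`,
i.e. `closure(A* A₀) = A* closure(A₀)`. -/
theorem closure_Astar_A0_eq_Astar_Atilde
    {H₁ H₂ HA : Type*}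
    [NormedAddCommGroup H₁] [InnerProductSpace ℂ H₁] [CompleteSpace H₁]
    [TopologicalSpace.SeparableSpace H₁]
    [NormedAddCommGroup H₂] [InnerProductSpace ℂ H₂] [CompleteSpace H₂]
    [TopologicalSpace.SeparableSpace H₂]
    [NormedAddCommGroup HA] [InnerProductSpace ℂ HA] [CompleteSpace HA]
    (A : H₁ →ₗ.[ℂ] H₂)
    (hdense : Dense (A.domain : Set H₁))
    (hclosed : A.IsClosed)
    (hker : ∀ f : A.domain, A f = 0 → (f : H₁) = 0)
    -- `j` realizes `dom(A)` as a dense subspace of the completion `HA`: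
    (j : A.domain →ₗ[ℂ] HA)
    (hjdense : Dense (Set.range j : Set HA))
    (hjinner : ∀ f g : A.domain, ⟪j f, j g⟫_ℂ = ⟪A f, A g⟫_ℂ)
    -- `K = K_A` is the closure of `ran(A)` in `H₂`:
    (K : Submodule ℂ H₂)
    (hK : (K : Set H₂) = closure ((LinearMap.range A.toFun : Submodule ℂ H₂) : Set H₂))
    (hKA : ∀ f : A.domain, A f ∈ K)
    -- `Ã : HA → K` is the unique unitary extension (the closure) of `A₀ : j f ↦ A f`:
    (Atil : HA ≃ₗᵢ[ℂ] ↥K)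
    (hAtil : ∀ f : A.domain, (Atil (j f) : H₂) = A f)
    -- `T = A* ∘ A₀`, with `graph(T) = {(j f, A*(A f)) : f ∈ dom(A), A f ∈ dom(A*)}`:
    (T : HA →ₗ.[ℂ] H₁)
    (hT : ∀ (x : HA) (y : H₁), (x, y) ∈ T.graph ↔
      ∃ (f : A.domain) (h : A f ∈ A.adjoint.domain),
        j f = x ∧ A.adjoint ⟨A f, h⟩ = y)
    -- `Scomp = A* ∘ Ã`, with domain `{x ∈ HA : Ã x ∈ dom(A*)}`:
    (Scomp : HA →ₗ.[ℂ] H₁)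
    (hSdom : ∀ x : HA, x ∈ Scomp.domain ↔ ((Atil x : H₂) ∈ A.adjoint.domain))
    (hSval : ∀ (x : Scomp.domain) (h : (Atil (x : HA) : H₂) ∈ A.adjoint.domain),
      Scomp x = A.adjoint ⟨(Atil (x : HA) : H₂), h⟩) :
    T.IsClosable ∧ T.closure = Scomp := by
  classical
  -- Step A: graph characterization of `Scomp`.
  have hSgraph : ∀ (x : HA) (y : H₁),
      (x, y) ∈ Scomp.graph ↔ ((Atil x : H₂), y) ∈ A.adjoint.graph := by
    intro x y
    constructor
    · intro h
      rw [LinearPMap.mem_graph_iff] at h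
      obtain ⟨x', hx1, hx2⟩ := h
      simp only at hx1 hx2
      subst hx1; subst hx2
      have hAd : (Atil ((x' : HA)) : H₂) ∈ A.adjoint.domain := (hSdom _).mp x'.2
      rw [LinearPMap.mem_graph_iff]
      exact ⟨⟨_, hAd⟩, rfl, (hSval x' hAd).symm⟩
    · intro h
      rw [LinearPMap.mem_graph_iff] at h
      obtain ⟨v, hv1, hv2⟩ := h
      simp only at hv1 hv2
      have hvmem : (Atil x : H₂) ∈ A.adjoint.domain := hv1 ▸ v.2
      have hx : x ∈ Scomp.domain := (hSdom x).mpr hvmem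
      rw [LinearPMap.mem_graph_iff]
      refine ⟨⟨x, hx⟩, rfl, ?_⟩
      have h3 : (⟨(Atil x : H₂), hvmem⟩ : A.adjoint.domain) = v := Subtype.ext hv1.symm
      rw [hSval ⟨x, hx⟩ hvmem, h3, hv2]
  -- Step B: `Scomp` has closed graph.
  have hSclosed : IsClosed (Scomp.graph : Set (HA × H₁)) := by
    have hset : (Scomp.graph : Set (HA × H₁)) =
        (fun p : HA × H₁ => ((Atil p.1 : H₂), p.2)) ⁻¹' (A.adjoint.graph : Set (H₂ × H₁)) := by
      ext ⟨x, y⟩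
      simpa using hSgraph x y
    rw [hset]
    refine (my_adjoint_graph_closed A hdense).preimage ?_
    exact (continuous_subtype_val.comp (Atil.continuous.comp continuous_fst)).prodMk
      continuous_snd
  -- Step C: `T ≤ Scomp` at the level of graphs.
  have hTS : T.graph ≤ Scomp.graph := by
    rintro ⟨x, y⟩ hxy
    rw [hT x y] at hxy
    obtain ⟨f, hAf, hjf, hval⟩ := hxy
    rw [hSgraph x y, LinearPMap.mem_graph_iff]
    refine ⟨⟨A f, hAf⟩, ?_, hval⟩
    show (A f : H₂) = (Atil x : H₂)
    rw [← hjf, hAtil]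
  -- Step E: density, `Scomp.graph ≤ closure (T.graph)`.
  have hST : Scomp.graph ≤ T.graph.topologicalClosure := by
    rintro ⟨x, y⟩ hxy
    have hxy' : ((Atil x : H₂), y) ∈ A.adjoint.graph := (hSgraph x y).mp hxy
    set Θf : HA × H₁ → H₂ × H₁ := Prod.map (fun a : HA => (Atil a : H₂)) id with hΘf
    let Θ : HA × H₁ →ₗ[ℂ] H₂ × H₁ :=
      ((K.subtype).comp (Atil.toLinearEquiv : HA →ₗ[ℂ] ↥K)).prodMap (LinearMap.id : H₁ →ₗ[ℂ] H₁)
    have hΘeq : ∀ p : HA × H₁, Θ p = ((Atil p.1 : H₂), p.2) := fun p => rfl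
    have hΘiso : Isometry Θf := by
      have h1 : Isometry (fun a : HA => (Atil a : H₂)) :=
        isometry_subtype_coe.comp Atil.isometry
      exact h1.prodMap isometry_id
    let e₂ : WithLp 2 (H₂ × H₁) ≃L[ℂ] H₂ × H₁ := WithLp.prodContinuousLinearEquiv 2 ℂ H₂ H₁
    set M₀ : Submodule ℂ (H₂ × H₁) := T.graph.map Θ with hM₀
    set M : Submodule ℂ (WithLp 2 (H₂ × H₁)) :=
      M₀.comap (e₂.toLinearEquiv : WithLp 2 (H₂ × H₁) →ₗ[ℂ] H₂ × H₁) with hM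
    set N := M.topologicalClosure with hN
    haveI : CompleteSpace N := (Submodule.isClosed_topologicalClosure M).completeSpace_coe
    set z : WithLp 2 (H₂ × H₁) := e₂.symm ((Atil x : H₂), y) with hz
    set P : Submodule ℂ (WithLp 2 (H₂ × H₁)) :=
      (K.prod (⊤ : Submodule ℂ H₁) ⊓ A.adjoint.graph).comap
        (e₂.toLinearEquiv : WithLp 2 (H₂ × H₁) →ₗ[ℂ] H₂ × H₁) with hP
    have hKclosed : IsClosed (K : Set H₂) := by rw [hK]; exact isClosed_closure
    have hPclosed : IsClosed (P : Set (WithLp 2 (H₂ × H₁))) := by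
      have h1 : (P : Set (WithLp 2 (H₂ × H₁))) =
          e₂ ⁻¹' ((K.prod (⊤ : Submodule ℂ H₁) ⊓ A.adjoint.graph : Submodule ℂ (H₂ × H₁)) :
            Set (H₂ × H₁)) := rfl
      rw [h1]
      refine IsClosed.preimage e₂.continuous ?_
      rw [Submodule.coe_inf]
      refine IsClosed.inter ?_ (my_adjoint_graph_closed A hdense)
      have h2 : ((K.prod (⊤ : Submodule ℂ H₁) : Submodule ℂ (H₂ × H₁)) : Set (H₂ × H₁)) =
          (K : Set H₂) ×ˢ (Set.univ : Set H₁) := by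
        ext ⟨a, b⟩
        simp [Submodule.mem_prod]
      rw [h2]
      exact hKclosed.prod isClosed_univ
    have hMP : M ≤ P := by
      intro m hm
      obtain ⟨ab, hab, heq⟩ := hm
      obtain ⟨f, hAf, hja, hbv⟩ := (hT ab.1 ab.2).mp (by simpa using hab)
      rw [hP, Submodule.mem_comap, ← heq, Submodule.mem_inf]
      constructor
      · rw [hΘeq ab, Submodule.mem_prod]
        exact ⟨(Atil ab.1).2, trivial⟩
      · rw [hΘeq ab, LinearPMap.mem_graph_iff]
        refine ⟨⟨A f, hAf⟩, ?_, hbv⟩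
        show (A f : H₂) = (Atil ab.1 : H₂)
        rw [← hja, hAtil]
    have hNP : N ≤ P := M.topologicalClosure_minimal hMP hPclosed
    have hzP : z ∈ P := by
      have h1 : (e₂.toLinearEquiv : WithLp 2 (H₂ × H₁) →ₗ[ℂ] H₂ × H₁) z
          = ((Atil x : H₂), y) := e₂.apply_symm_apply _
      rw [hP, Submodule.mem_comap, h1, Submodule.mem_inf]
      exact ⟨Submodule.mem_prod.mpr ⟨(Atil x).2, trivial⟩, hxy'⟩
    set z₁ := N.orthogonalProjectionOnto z with hz₁
    have hz₂o : z - ↑z₁ ∈ Nᗮ := Submodule.sub_starProjection_mem_orthogonal (K := N) z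
    have hz₂P : z - ↑z₁ ∈ P := P.sub_mem hzP (hNP z₁.2)
    set q : H₂ × H₁ := (e₂.toLinearEquiv : WithLp 2 (H₂ × H₁) →ₗ[ℂ] H₂ × H₁) (z - ↑z₁) with hqdef
    have hqmem : q ∈ K.prod (⊤ : Submodule ℂ H₁) ⊓ A.adjoint.graph := hz₂P
    rw [Submodule.mem_inf] at hqmem
    have hqK : q.1 ∈ K := (Submodule.mem_prod.mp hqmem.1).1
    have hqg : (q.1, q.2) ∈ A.adjoint.graph := by
      have : q ∈ A.adjoint.graph := hqmem.2
      simpa using this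
    have hqchar : ∀ x' : A.domain, ⟪q.2, (x' : H₁)⟫_ℂ = ⟪q.1, A x'⟫_ℂ :=
      (my_mem_adjoint_graph_iff A hdense q.1 q.2).mp hqg
    -- orthogonality relations
    have horth : ∀ (f : A.domain) (hAf : A f ∈ A.adjoint.domain),
        ⟪A f, q.1⟫_ℂ + ⟪A.adjoint ⟨A f, hAf⟩, q.2⟫_ℂ = 0 := by
      intro f hAf
      have hmemM : e₂.symm (A f, A.adjoint ⟨A f, hAf⟩) ∈ M := by
        have he : (e₂.toLinearEquiv : WithLp 2 (H₂ × H₁) →ₗ[ℂ] H₂ × H₁)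
            (e₂.symm (A f, A.adjoint ⟨A f, hAf⟩)) = (A f, A.adjoint ⟨A f, hAf⟩) :=
          e₂.apply_symm_apply _
        rw [hM, Submodule.mem_comap, he]
        refine ⟨(j f, A.adjoint ⟨A f, hAf⟩), (hT _ _).mpr ⟨f, hAf, rfl, rfl⟩, ?_⟩
        rw [hΘeq]
        simp only
        rw [hAtil f]
      have h0 := (Submodule.mem_orthogonal N (z - ↑z₁)).mp hz₂o _
        (M.le_topologicalClosure hmemM)
      rw [WithLp.prod_inner_apply] at h0
      exact h0
    -- second component vanishes
    have hw : q.2 = 0 := by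
      rw [← @inner_self_eq_zero ℂ]
      obtain ⟨f, hAf, hsum⟩ := my_vonNeumann A hdense hclosed q.2
      have h1 : ⟪(f : H₁), q.2⟫_ℂ = ⟪A f, q.1⟫_ℂ := by
        calc ⟪(f : H₁), q.2⟫_ℂ = (starRingEnd ℂ) ⟪q.2, (f : H₁)⟫_ℂ := (inner_conj_symm _ _).symm
          _ = (starRingEnd ℂ) ⟪q.1, A f⟫_ℂ := by rw [hqchar f]
          _ = ⟪A f, q.1⟫_ℂ := inner_conj_symm _ _
      calc ⟪q.2, q.2⟫_ℂ = ⟪(f : H₁) + A.adjoint ⟨A f, hAf⟩, q.2⟫_ℂ := by rw [hsum]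
        _ = ⟪(f : H₁), q.2⟫_ℂ + ⟪A.adjoint ⟨A f, hAf⟩, q.2⟫_ℂ := inner_add_left _ _ _
        _ = ⟪A f, q.1⟫_ℂ + ⟪A.adjoint ⟨A f, hAf⟩, q.2⟫_ℂ := by rw [h1]
        _ = 0 := horth f hAf
    -- first component vanishes
    have hh : q.1 = 0 := by
      rw [← @inner_self_eq_zero ℂ]
      have hC : (K : Set H₂) ⊆ {v : H₂ | ⟪q.1, v⟫_ℂ = 0} := by
        rw [hK]
        refine closure_minimal ?_
          (isClosed_eq (Continuous.inner continuous_const continuous_id) continuous_const)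
        intro v hv
        obtain ⟨fv, rfl⟩ := LinearMap.mem_range.mp hv
        show ⟪q.1, A fv⟫_ℂ = 0
        have h2 := hqchar fv
        rw [hw, inner_zero_left] at h2
        exact h2.symm
      exact hC hqK
    -- conclude z ∈ N
    have hz2 : z - ↑z₁ = 0 := by
      have hq0 : q = 0 := Prod.ext hh hw
      exact (LinearEquiv.map_eq_zero_iff _).mp hq0
    have hzN : z ∈ N := by
      rw [sub_eq_zero] at hz2
      rw [hz2]; exact z₁.2
    -- transport back
    have hM0 : ((Atil x : H₂), y) ∈ closure (M₀ : Set (H₂ × H₁)) := by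
      have h1 : ((Atil x : H₂), y) = e₂ z := (e₂.apply_symm_apply _).symm
      have h2 : e₂ z ∈ e₂ '' closure (M : Set (WithLp 2 (H₂ × H₁))) := by
        refine ⟨z, ?_, rfl⟩
        rw [← Submodule.topologicalClosure_coe]
        exact hzN
      have h3 : e₂ '' closure (M : Set (WithLp 2 (H₂ × H₁)))
          = closure (e₂ '' (M : Set (WithLp 2 (H₂ × H₁)))) :=
        e₂.toHomeomorph.image_closure _
      have h4 : e₂ '' (M : Set (WithLp 2 (H₂ × H₁))) = (M₀ : Set (H₂ × H₁)) := by
        have h5 : (M : Set (WithLp 2 (H₂ × H₁))) = e₂ ⁻¹' (M₀ : Set (H₂ × H₁)) := rfl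
        rw [h5]
        exact Set.image_preimage_eq _ e₂.surjective
      rw [h1]
      rw [h3, h4] at h2
      exact h2
    have hM0' : Θf (x, y) ∈ closure (Θf '' (T.graph : Set (HA × H₁))) := by
      have h6 : (M₀ : Set (H₂ × H₁)) = Θf '' (T.graph : Set (HA × H₁)) := by
        rw [hM₀, Submodule.map_coe]
        rfl
      rw [← h6]
      exact hM0
    rw [hΘiso.isClosedEmbedding.closure_image_eq] at hM0'
    obtain ⟨p', hp'mem, hp'eq⟩ := hM0'
    have hp' : p' = (x, y) := hΘiso.isClosedEmbedding.injective hp'eq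
    rw [hp'] at hp'mem
    rw [← Submodule.topologicalClosure_coe] at hp'mem
    exact hp'mem
  have hgraph : T.graph.topologicalClosure = Scomp.graph :=
    le_antisymm (T.graph.topologicalClosure_minimal hTS hSclosed) hST
  have hclosable : T.IsClosable := ⟨Scomp, hgraph⟩
  refine ⟨hclosable, ?_⟩
  apply LinearPMap.eq_of_eq_graph
  rw [← hclosable.graph_closure_eq_closure_graph]
  exact hgraph
end

section
/- (i) For each z ∈ ℂ, the quadratic pencil operator M(z) = B² − i z R − z² I with dom(M(z)) = dom(B²) is a densely defined, closed operator in H. (ii) If in addition dom(R*) ⊇ dom(B), then M(z)* = B² + i z̄ R* − z̄² I with dom(M(z)*) = dom(B²) for all z ∈ ℂ. -/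
open scoped InnerProductSpace ComplexConjugate

/-- An elementary `ε`-inequality: if `a² ≤ c·b` then `a ≤ ε·b + ε⁻¹·c`. -/
theorem aux_eps_ineq (a b c ε : ℝ) (ha : 0 ≤ a) (hb : 0 ≤ b) (hc : 0 ≤ c)
    (h : a ^ 2 ≤ c * b) (hε : 0 < ε) : a ≤ ε * b + ε⁻¹ * c := by
  by_cases hab : a ≤ ε * b
  · nlinarith [mul_nonneg (le_of_lt (inv_pos.mpr hε)) hc]
  · push_neg at hab
    have hεi : 0 < ε⁻¹ := inv_pos.mpr hε
    have ha0 : 0 < a := lt_of_le_of_lt (by positivity) hab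
    have h2 : a ^ 2 ≤ c * (ε⁻¹ * a) := by
      have : b ≤ ε⁻¹ * a := by
        have := mul_lt_mul_of_pos_left hab hεi
        rw [← mul_assoc, inv_mul_cancel₀ hε.ne', one_mul] at this
        linarith
      nlinarith
    have h3 : a ≤ ε⁻¹ * c := by nlinarith
    nlinarith [mul_nonneg hε.le hb]

set_option maxHeartbeats 4000000 in
set_option synthInstance.maxHeartbeats 1000000 in
/-- Lemma 4.2. Let `B` be a self-adjoint operator in the complex separable
Hilbert space `H` with `B ≥ δ I` for some `δ > 0`, and let `R` be a densely defined closable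
operator in `H` with `dom(R) ⊇ dom(B)`.  Consider the quadratic operator pencil
`M(z) = B² − i z R − z² I` with `dom(M(z)) = dom(B²)`, `z ∈ ℂ`.
(i) For each `z ∈ ℂ`, `M(z)` is a densely defined, closed operator in `H`.
(ii) If in addition `dom(R*) ⊇ dom(B)`, then `M(z)* = B² + i z̄ R* − z̄² I` with
`dom(M(z)*) = dom(B²)` for all `z ∈ ℂ`. -/
theorem pencil_closed_densely_defined_and_adjoint
    {H : Type*}
    [NormedAddCommGroup H] [InnerProductSpace ℂ H] [CompleteSpace H]
    [TopologicalSpace.SeparableSpace H]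
    (B : H →ₗ.[ℂ] H)
    (hBdense : Dense (B.domain : Set H))
    (hBsa : B.adjoint = B)
    (δ : ℝ) (hδ : 0 < δ)
    (hBpos : ∀ f : B.domain, δ * ‖(f : H)‖ ^ 2 ≤ (⟪(f : H), B f⟫_ℂ).re)
    (R : H →ₗ.[ℂ] H)
    (hRdense : Dense (R.domain : Set H))
    (hRclosable : R.IsClosable)
    (hRdom : B.domain ≤ R.domain)
    -- `B²  = B ∘ B` with its natural domain:
    (B2 : H →ₗ.[ℂ] H)
    (hB2 : ∀ (x y : H), (x, y) ∈ B2.graph ↔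
      ∃ (hx : x ∈ B.domain) (hBx : B ⟨x, hx⟩ ∈ B.domain), B ⟨B ⟨x, hx⟩, hBx⟩ = y)
    -- the pencil `M(z) = B² − i z R − z² I` with `dom(M(z)) = dom(B²)`:
    (M : ℂ → (H →ₗ.[ℂ] H))
    (hMdom : ∀ z : ℂ, (M z).domain = B2.domain)
    (hMval : ∀ (z : ℂ) (x : (M z).domain) (hx2 : (x : H) ∈ B2.domain)
      (hxR : (x : H) ∈ R.domain),
      M z x = B2 ⟨(x : H), hx2⟩ - (Complex.I * z) • R ⟨(x : H), hxR⟩ - z ^ 2 • (x : H)) :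
    -- (i) each `M(z)` is densely defined and closed:
    (∀ z : ℂ, Dense (((M z).domain : Submodule ℂ H) : Set H) ∧ (M z).IsClosed) ∧
    -- (ii) if moreover `dom(R*) ⊇ dom(B)`, then `M(z)* = B² + i z̄ R* − z̄² I` on `dom(B²)`:
    (B.domain ≤ R.adjoint.domain →
      ∀ z : ℂ, (M z).adjoint.domain = B2.domain ∧
        ∀ (f : (M z).adjoint.domain) (hf2 : (f : H) ∈ B2.domain)
          (hfR : (f : H) ∈ R.adjoint.domain),
          (M z).adjoint f = B2 ⟨(f : H), hf2⟩ + (Complex.I * conj z) • R.adjoint ⟨(f : H), hfR⟩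
            - (conj z) ^ 2 • (f : H)) := by
  -- congruence helpers
  have happ : ∀ {a b : B.domain}, (a : H) = (b : H) → B a = B b := by
    intro a b h; rw [Subtype.ext h]
  have happR : ∀ {a b : R.domain}, (a : H) = (b : H) → R a = R b := by
    intro a b h; rw [Subtype.ext h]
  have happB2 : ∀ {a b : B2.domain}, (a : H) = (b : H) → B2 a = B2 b := by
    intro a b h; rw [Subtype.ext h]
  -- symmetry of B
  have hsym : ∀ f g : B.domain, ⟪B f, (g : H)⟫_ℂ = ⟪(f : H), B g⟫_ℂ := by
    have h := LinearPMap.adjoint_isFormalAdjoint hBdense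
    rw [hBsa] at h
    exact h
  -- lower bound for B
  have hBlow : ∀ f : B.domain, δ * ‖(f : H)‖ ≤ ‖B f‖ := by
    intro f
    rcases eq_or_lt_of_le (norm_nonneg (f : H)) with h0 | h0
    · simp [← h0]
    · have h1 : δ * ‖(f : H)‖ ^ 2 ≤ ‖(f : H)‖ * ‖B f‖ :=
        (hBpos f).trans ((Complex.re_le_norm _).trans
          (by exact norm_inner_le_norm _ _))
      nlinarith
  -- graph characterization and closedness of B
  have hgraph : ∀ p : H × H, p ∈ B.graph ↔
      ∀ x : B.domain, ⟪p.1, B x⟫_ℂ = ⟪p.2, (x : H)⟫_ℂ := by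
    intro p
    constructor
    · rintro hp x
      rcases (LinearPMap.mem_graph_iff B).mp hp with ⟨y, hy1, hy2⟩
      rw [← hy1, ← hy2, ← hsym y x]
    · intro hp
      have hmem : p.1 ∈ B.adjoint.domain :=
        LinearPMap.mem_adjoint_domain_of_exists _ ⟨p.2, fun x => (hp x).symm⟩
      have hval : B.adjoint ⟨p.1, hmem⟩ = p.2 :=
        LinearPMap.adjoint_apply_eq hBdense _ (fun x => (hp x).symm)
      have : (p.1, p.2) ∈ B.adjoint.graph := by
        rw [← LinearPMap.image_iff hmem] at *
        exact hval.symm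
      rw [hBsa] at this
      simpa using this
  have hBclosed : IsClosed (B.graph : Set (H × H)) := by
    have : (B.graph : Set (H × H)) =
        ⋂ x : B.domain, {p : H × H | ⟪p.1, B x⟫_ℂ - ⟪p.2, (x : H)⟫_ℂ = 0} := by
      ext p
      simp only [Set.mem_iInter, Set.mem_setOf_eq, sub_eq_zero, SetLike.mem_coe, hgraph]
    rw [this]
    exact isClosed_iInter fun x => isClosed_eq
      (by exact (continuous_fst.inner continuous_const).sub (continuous_snd.inner continuous_const))
      continuous_const
  -- surjectivity of B
  have hBsurj : ∀ y : H, ∃ f : B.domain, B f = y := by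
    have hclosedrange : IsClosed (Set.range fun f : B.domain => B f) := by
      refine IsSeqClosed.isClosed ?_
      intro u y hu huy
      choose f hf using hu
      have hf' : ∀ n, B (f n) = u n := hf
      have hcauchy : CauchySeq fun n => ((f n : H)) := by
        rw [Metric.cauchySeq_iff]
        intro ε hε
        have huc : CauchySeq u := huy.cauchySeq
        rcases Metric.cauchySeq_iff.mp huc (δ * ε) (by positivity) with ⟨N, hN⟩
        refine ⟨N, fun m hm n hn => ?_⟩
        have h1 : δ * ‖((f m : H)) - ((f n : H))‖ ≤ ‖B (f m - f n)‖ := by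
          have := hBlow (f m - f n)
          simpa using this
        rw [LinearPMap.map_sub, hf' m, hf' n] at h1
        have h2 := hN m hm n hn
        rw [dist_eq_norm] at h2 ⊢
        nlinarith [norm_nonneg ((f m : H) - (f n : H))]
      rcases cauchySeq_tendsto_of_complete hcauchy with ⟨x, hx⟩
      have hgr : ∀ n, (((f n : H)), u n) ∈ B.graph := by
        intro n
        have := B.mem_graph (f n)
        rwa [hf' n] at this
      have hlim : Filter.Tendsto (fun n => (((f n : H)), u n)) Filter.atTop (nhds (x, y)) :=
        hx.prodMk_nhds huy
      have hxy : (x, y) ∈ B.graph := hBclosed.mem_of_tendsto hlim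
        (Filter.Eventually.of_forall hgr)
      rcases (LinearPMap.mem_graph_iff B).mp hxy with ⟨w, hw1, hw2⟩
      exact ⟨w, hw2⟩
    have hdenserange : Dense (Set.range fun f : B.domain => B f) := by
      have horth : (LinearMap.range B.toFun)ᗮ = ⊥ := by
        rw [Submodule.eq_bot_iff]
        intro u hu
        have hu' : ∀ x : B.domain, ⟪u, B x⟫_ℂ = ⟪(0 : H), (x : H)⟫_ℂ := by
          intro x
          rw [inner_zero_left, ← inner_conj_symm]
          have := hu (B x) (LinearMap.mem_range_self _ x)
          rw [this, map_zero]
        have hmem : (u, (0 : H)) ∈ B.graph := (hgraph (u, 0)).mpr hu'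
        rcases (LinearPMap.mem_graph_iff B).mp hmem with ⟨w, hw1, hw2⟩
        have := hBlow w
        rw [hw1, hw2, norm_zero] at this
        have : ‖u‖ = 0 := by nlinarith [norm_nonneg u]
        simpa using this
      have hdense : Dense ((LinearMap.range B.toFun : Submodule ℂ H) : Set H) :=
        Submodule.dense_iff_topologicalClosure_eq_top.mpr
          (Submodule.topologicalClosure_eq_top_iff.mpr horth)
      have heq : (Set.range fun f : B.domain => B f) =
          ((LinearMap.range B.toFun : Submodule ℂ H) : Set H) := by
        ext y
        simp only [Set.mem_range, SetLike.mem_coe, LinearMap.mem_range]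
        rfl
      rw [heq]
      exact hdense
    have hall : (Set.range fun f : B.domain => B f) = Set.univ := by
      rw [← hclosedrange.closure_eq, hdenserange.closure_eq]
    intro y
    have : y ∈ Set.range fun f : B.domain => B f := hall ▸ Set.mem_univ y
    exact this
  -- the bounded inverse of B
  have hBinj : Function.Injective B.toFun := by
    rw [← LinearMap.ker_eq_bot, Submodule.eq_bot_iff]
    intro f hf
    rw [LinearMap.mem_ker] at hf
    have := hBlow f
    rw [show B f = 0 from hf, norm_zero] at this
    have : ‖(f : H)‖ = 0 := by nlinarith [norm_nonneg (f : H)]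
    exact Subtype.ext (by simpa using this)
  let e : B.domain ≃ₗ[ℂ] H := LinearEquiv.ofBijective B.toFun ⟨hBinj, fun y => hBsurj y⟩
  let Binv : H →ₗ[ℂ] H := (B.domain.subtype).comp e.symm.toLinearMap
  have hBinv_mem : ∀ y : H, Binv y ∈ B.domain := fun y => (e.symm y).2
  have hB_Binv : ∀ y : H, B ⟨Binv y, hBinv_mem y⟩ = y := by
    intro y
    have h1 : B (e.symm y) = y := e.apply_symm_apply y
    have h2 : B ⟨Binv y, hBinv_mem y⟩ = B (e.symm y) := happ rfl
    rw [h2, h1]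
  have hBinv_B : ∀ f : B.domain, Binv (B f) = (f : H) := by
    intro f
    have : e.symm (B f) = f := e.symm_apply_apply f
    simpa [Binv] using congrArg (Subtype.val) this
  have hBinv_sym : ∀ u v : H, ⟪Binv u, v⟫_ℂ = ⟪u, Binv v⟫_ℂ := by
    intro u v
    have h := hsym ⟨Binv u, hBinv_mem u⟩ ⟨Binv v, hBinv_mem v⟩
    rw [hB_Binv u, hB_Binv v] at h
    exact h.symm
  have hBinv_inj : ∀ u : H, Binv u = 0 → u = 0 := by
    intro u hu
    have := hB_Binv u
    rw [← this]
    have : (⟨Binv u, hBinv_mem u⟩ : B.domain) = 0 := Subtype.ext (by simpa using hu)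
    rw [this, LinearPMap.map_zero]
  -- membership and values for B2
  have hB2mem : ∀ x : H, x ∈ B2.domain ↔
      ∃ (hx : x ∈ B.domain), B ⟨x, hx⟩ ∈ B.domain := by
    intro x
    rw [LinearPMap.mem_domain_iff]
    constructor
    · rintro ⟨y, hy⟩
      rcases (hB2 x y).mp hy with ⟨hx, hBx, _⟩
      exact ⟨hx, hBx⟩
    · rintro ⟨hx, hBx⟩
      exact ⟨_, (hB2 x _).mpr ⟨hx, hBx, rfl⟩⟩
  have hB2val : ∀ (x : H) (hx2 : x ∈ B2.domain) (hx : x ∈ B.domain)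
      (hBx : B ⟨x, hx⟩ ∈ B.domain), B2 ⟨x, hx2⟩ = B ⟨B ⟨x, hx⟩, hBx⟩ := by
    intro x hx2 hx hBx
    exact ((LinearPMap.image_iff hx2).mpr ((hB2 x _).mpr ⟨hx, hBx, rfl⟩)).symm
  have hBinv2_mem : ∀ u : H, Binv (Binv u) ∈ B2.domain := by
    intro u
    refine (hB2mem _).mpr ⟨hBinv_mem (Binv u), ?_⟩
    rw [hB_Binv (Binv u)]
    exact hBinv_mem u
  have hB2_Binv2 : ∀ u : H, B2 ⟨Binv (Binv u), hBinv2_mem u⟩ = u := by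
    intro u
    have hm1 : Binv (Binv u) ∈ B.domain := hBinv_mem (Binv u)
    have hm2 : B ⟨Binv (Binv u), hm1⟩ ∈ B.domain := by
      rw [hB_Binv (Binv u)]; exact hBinv_mem u
    rw [hB2val _ _ hm1 hm2]
    have h2 : B ⟨B ⟨Binv (Binv u), hm1⟩, hm2⟩ = B ⟨Binv u, hBinv_mem u⟩ :=
      happ (hB_Binv (Binv u))
    rw [h2, hB_Binv u]
  -- density of dom B2
  have hB2dense : Dense ((B2.domain : Submodule ℂ H) : Set H) := by
    refine Submodule.dense_iff_topologicalClosure_eq_top.mpr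
      (Submodule.topologicalClosure_eq_top_iff.mpr ?_)
    rw [Submodule.eq_bot_iff]
    intro u hu
    have key : ∀ v : H, ⟪v, Binv (Binv u)⟫_ℂ = 0 := by
      intro v
      have h1 := hu (Binv (Binv v)) (hBinv2_mem v)
      rw [← hBinv_sym v (Binv u), ← hBinv_sym (Binv v) u]
      exact h1
    have h0 : Binv (Binv u) = 0 := by
      have := key (Binv (Binv u))
      exact inner_self_eq_zero.mp this
    exact hBinv_inj u (hBinv_inj (Binv u) h0)
  -- relative bound for R via the closed graph theorem
  obtain ⟨C, hC0, hRbound⟩ :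
      ∃ C : ℝ, 0 ≤ C ∧ ∀ f : B.domain, ‖R ⟨(f : H), hRdom f.2⟩‖ ≤ C * ‖(f : H)‖ + C * ‖B f‖ := by
    set Rcl := R.closure with hRcl
    have hRle : R ≤ Rcl := R.le_closure
    have hRcl_closed : Rcl.IsClosed := hRclosable.closure_isClosed
    have hmemdom : ∀ p : B.graph, (p : H × H).1 ∈ Rcl.domain := by
      intro p
      have hp : ((p : H × H).1, (p : H × H).2) ∈ B.graph := p.2
      exact hRle.1 (hRdom (LinearPMap.mem_domain_of_mem_graph hp))
    haveI : CompleteSpace B.graph := hBclosed.completeSpace_coe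
    have happRcl : ∀ {a b : Rcl.domain}, (a : H) = (b : H) → Rcl a = Rcl b := by
      intro a b h; rw [Subtype.ext h]
    let Φ : B.graph →ₗ[ℂ] H :=
      { toFun := fun p => Rcl ⟨(p : H × H).1, hmemdom p⟩
        map_add' := by
          intro p q
          rw [← LinearPMap.map_add]
          exact happRcl rfl
        map_smul' := by
          intro c p
          rw [← LinearPMap.map_smul]
          exact happRcl rfl }
    have hgr : ∀ (u : ℕ → B.graph) (x : B.graph) (y : H),
        Filter.Tendsto u Filter.atTop (nhds x) →
        Filter.Tendsto (Φ ∘ u) Filter.atTop (nhds y) → y = Φ x := by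
      intro u x y hu hy
      have hfst : Filter.Tendsto (fun n => ((u n : H × H)).1) Filter.atTop
          (nhds ((x : H × H).1)) :=
        (continuous_fst.tendsto _).comp ((continuous_subtype_val.tendsto _).comp hu)
      have hpair : Filter.Tendsto (fun n => (((u n : H × H)).1, Φ (u n))) Filter.atTop
          (nhds ((x : H × H).1, y)) := hfst.prodMk_nhds hy
      have hmem : ∀ n, (((u n : H × H)).1, Φ (u n)) ∈ Rcl.graph := by
        intro n
        exact Rcl.mem_graph ⟨((u n : H × H)).1, hmemdom (u n)⟩
      have hclosed : IsClosed (Rcl.graph : Set (H × H)) := hRcl_closed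
      have hin : ((x : H × H).1, y) ∈ Rcl.graph :=
        hclosed.mem_of_tendsto hpair (Filter.Eventually.of_forall hmem)
      exact (LinearPMap.image_iff (hmemdom x)).mpr hin
    let ΦL := ContinuousLinearMap.ofSeqClosedGraph hgr
    refine ⟨‖ΦL‖, norm_nonneg _, ?_⟩
    intro f
    set p : B.graph := ⟨((f : H), B f), B.mem_graph f⟩ with hp
    have h1 : ΦL p = Rcl ⟨(f : H), hmemdom p⟩ := rfl
    have h2 : Rcl ⟨(f : H), hmemdom p⟩ = R ⟨(f : H), hRdom f.2⟩ := (hRle.2 rfl).symm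
    have h3 : ‖ΦL p‖ ≤ ‖ΦL‖ * ‖p‖ := ΦL.le_opNorm p
    have h4 : ‖p‖ = max ‖(f : H)‖ ‖B f‖ := rfl
    rw [h1, h2] at h3
    rw [h4] at h3
    refine h3.trans ?_
    rcases max_cases ‖(f : H)‖ ‖B f‖ with ⟨hm, _⟩ | ⟨hm, _⟩ <;> rw [hm] <;>
      nlinarith [norm_nonneg (f : H), norm_nonneg (B f), norm_nonneg ΦL]
  -- second-level structure of B2 and its closedness
  have hle21 : B2.domain ≤ B.domain := fun x hx => ((hB2mem x).mp hx).1
  have hd2' : ∀ d : B2.domain, B ⟨(d : H), hle21 d.2⟩ ∈ B.domain := by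
    intro d
    obtain ⟨h1, h2⟩ := (hB2mem (d : H)).mp d.2
    exact h2
  have hB2closed : IsClosed (B2.graph : Set (H × H)) := by
    let BL : B2.domain →ₗ[ℂ] H := B.toFun.comp (Submodule.inclusion hle21)
    have hBL : ∀ d : B2.domain, BL d = B ⟨(d : H), hle21 d.2⟩ := by
      intro d
      exact happ (by exact rfl)
    have hd2'' : ∀ d : B2.domain, BL d ∈ B.domain := by
      intro d
      rw [hBL d]
      exact hd2' d
    have hB2L : ∀ d : B2.domain, B2 d = B ⟨BL d, hd2'' d⟩ := by
      intro d
      have := hB2val (d : H) d.2 (hle21 d.2) (by rw [← hBL d]; exact hd2'' d)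
      rw [this]
      exact happ (hBL d).symm
    have hlowB2 : ∀ d : B2.domain, δ * ‖BL d‖ ≤ ‖B2 d‖ := by
      intro d
      have := hBlow ⟨BL d, hd2'' d⟩
      rwa [← hB2L d] at this
    refine IsSeqClosed.isClosed ?_
    intro u p hu hup
    have hex : ∀ n, ∃ x : B2.domain, ((x : H), B2 x) = u n := fun n =>
      (LinearPMap.mem_graph_iff' B2).mp (hu n)
    choose x hx using hex
    have hfst : ∀ n, ((x n : H)) = (u n).1 := fun n => congrArg Prod.fst (hx n)
    have hsnd : ∀ n, B2 (x n) = (u n).2 := fun n => congrArg Prod.snd (hx n)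
    have hp1 : Filter.Tendsto (fun n => ((x n : H))) Filter.atTop (nhds p.1) := by
      have := (continuous_fst.tendsto p).comp hup
      simpa [Function.comp_def, hfst] using this
    have hp2 : Filter.Tendsto (fun n => B2 (x n)) Filter.atTop (nhds p.2) := by
      have := (continuous_snd.tendsto p).comp hup
      simpa [Function.comp_def, hsnd] using this
    have hcauchy : CauchySeq (fun n => BL (x n)) := by
      rw [Metric.cauchySeq_iff]
      intro ε hε
      rcases Metric.cauchySeq_iff.mp hp2.cauchySeq (δ * ε) (by positivity) with ⟨N, hN⟩
      refine ⟨N, fun m hm n hn => ?_⟩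
      have h1 : δ * ‖BL (x m - x n)‖ ≤ ‖B2 (x m - x n)‖ := hlowB2 _
      rw [map_sub, LinearPMap.map_sub] at h1
      have h2 := hN m hm n hn
      rw [dist_eq_norm] at h2 ⊢
      nlinarith [norm_nonneg (BL (x m) - BL (x n))]
    rcases cauchySeq_tendsto_of_complete hcauchy with ⟨k, hk⟩
    have hg1 : ∀ n, (((x n : H)), BL (x n)) ∈ B.graph := by
      intro n
      have := B.mem_graph ⟨(x n : H), hle21 (x n).2⟩
      rwa [← hBL (x n)] at this
    have hin1 : (p.1, k) ∈ B.graph :=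
      hBclosed.mem_of_tendsto (hp1.prodMk_nhds hk) (Filter.Eventually.of_forall hg1)
    have hg2 : ∀ n, ((BL (x n)), B2 (x n)) ∈ B.graph := by
      intro n
      have := B.mem_graph ⟨BL (x n), hd2'' (x n)⟩
      rwa [← hB2L (x n)] at this
    have hin2 : (k, p.2) ∈ B.graph :=
      hBclosed.mem_of_tendsto (hk.prodMk_nhds hp2) (Filter.Eventually.of_forall hg2)
    have hp1mem : p.1 ∈ B.domain := LinearPMap.mem_domain_of_mem_graph hin1
    have hBp1 : B ⟨p.1, hp1mem⟩ = k := ((LinearPMap.image_iff hp1mem).mpr hin1).symm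
    have hkmem : k ∈ B.domain := LinearPMap.mem_domain_of_mem_graph hin2
    have hBk : B ⟨k, hkmem⟩ = p.2 := ((LinearPMap.image_iff hkmem).mpr hin2).symm
    have hp1mem2 : p.1 ∈ B2.domain := (hB2mem p.1).mpr ⟨hp1mem, by rw [hBp1]; exact hkmem⟩
    have hval : B2 ⟨p.1, hp1mem2⟩ = p.2 := by
      rw [hB2val p.1 hp1mem2 hp1mem (by rw [hBp1]; exact hkmem)]
      rw [← hBk]
      exact happ hBp1
    have : (p.1, p.2) ∈ B2.graph := (LinearPMap.image_iff hp1mem2).mp hval.symm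
    simpa using this
  -- density of the pencil domains
  have hMzdense : ∀ z : ℂ, Dense (((M z).domain : Submodule ℂ H) : Set H) := by
    intro z
    rw [hMdom z]
    exact hB2dense
  -- closedness of the pencil
  have hMclosed : ∀ z : ℂ, (M z).IsClosed := by
    intro z
    have hlez : (M z).domain ≤ B2.domain := le_of_eq (hMdom z)
    let ι : (M z).domain →ₗ[ℂ] B2.domain := Submodule.inclusion hlez
    let av : (M z).domain →ₗ[ℂ] B.domain := (Submodule.inclusion hle21).comp ι
    let B2v : (M z).domain →ₗ[ℂ] H := B2.toFun.comp ι
    let BLv : (M z).domain →ₗ[ℂ] H := B.toFun.comp av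
    let RLv : (M z).domain →ₗ[ℂ] H := R.toFun.comp ((Submodule.inclusion hRdom).comp av)
    have hMv : ∀ x : (M z).domain,
        M z x = B2v x - (Complex.I * z) • RLv x - z ^ 2 • (x : H) := by
      intro x
      have hx2 : (x : H) ∈ B2.domain := hlez x.2
      have hxR : (x : H) ∈ R.domain := hRdom (hle21 hx2)
      rw [hMval z x hx2 hxR]
      have e1 : B2 ⟨(x : H), hx2⟩ = B2v x := happB2 rfl
      have e2 : R ⟨(x : H), hxR⟩ = RLv x := happR rfl
      rw [e1, e2]
    have hBLv_eq : ∀ x : (M z).domain, BLv x = B ⟨(x : H), hle21 (hlez x.2)⟩ :=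
      fun x => happ rfl
    have hB2v_eq : ∀ x : (M z).domain,
        B2v x = B ⟨BLv x, by rw [hBLv_eq x]; exact hd2' (ι x)⟩ := by
      intro x
      have h1 := hB2val (x : H) (hlez x.2) (hle21 (hlez x.2)) (hd2' (ι x))
      have e : B2v x = B2 ⟨(x : H), hlez x.2⟩ := happB2 rfl
      rw [e, h1]
      exact happ (hBLv_eq x).symm
    have hRv : ∀ x : (M z).domain, ‖RLv x‖ ≤ C * ‖(x : H)‖ + C * ‖BLv x‖ := by
      intro x
      have h1 := hRbound (av x)
      have e : R ⟨((av x : H)), hRdom (av x).2⟩ = RLv x := happR rfl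
      rw [e] at h1
      exact h1
    have hlowBv : ∀ x : (M z).domain, δ * ‖BLv x‖ ≤ ‖B2v x‖ := by
      intro x
      have h1 := hBlow ⟨BLv x, by rw [hBLv_eq x]; exact hd2' (ι x)⟩
      rw [← hB2v_eq x] at h1
      calc δ * ‖BLv x‖ = δ * ‖((⟨BLv x, _⟩ : B.domain) : H)‖ := rfl
        _ ≤ ‖B2v x‖ := h1
    have hsqv : ∀ x : (M z).domain, ‖BLv x‖ ^ 2 ≤ ‖(x : H)‖ * ‖B2v x‖ := by
      intro x
      have hmem2 : BLv x ∈ B.domain := by rw [hBLv_eq x]; exact hd2' (ι x)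
      have h1 : ⟪BLv x, BLv x⟫_ℂ = ⟪(x : H), B2v x⟫_ℂ := by
        have h2 := hsym (av x) ⟨BLv x, hmem2⟩
        have e1 : B (av x) = BLv x := rfl
        have e2 : B ⟨BLv x, hmem2⟩ = B2v x := (hB2v_eq x).symm
        rw [e1, e2] at h2
        exact h2
      have h3 : ‖BLv x‖ ^ 2 = (⟪BLv x, BLv x⟫_ℂ).re := by
        rw [← inner_self_eq_norm_sq (𝕜 := ℂ) (BLv x)]
        rfl
      rw [h3, h1]
      exact (Complex.re_le_norm _).trans (by
        exact norm_inner_le_norm _ _)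
    set ε : ℝ := (2 * (C + 1) * (‖z‖ + 1))⁻¹ with hε_def
    have hεpos : 0 < ε := by positivity
    have hεhalf : ‖z‖ * C * ε ≤ 1 / 2 := by
      rw [hε_def]
      rw [mul_inv_le_iff₀ (by positivity)]
      nlinarith [norm_nonneg z]
    have hBLveps : ∀ x : (M z).domain, ‖BLv x‖ ≤ ε * ‖B2v x‖ + ε⁻¹ * ‖(x : H)‖ :=
      fun x => aux_eps_ineq _ _ _ _ (norm_nonneg _) (norm_nonneg _) (norm_nonneg _)
        (hsqv x) hεpos
    set K : ℝ := 2 * (‖z‖ * C + ‖z‖ * C * ε⁻¹ + ‖z‖ ^ 2) with hK_def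
    have hK0 : 0 ≤ K := by positivity
    have hest : ∀ d : (M z).domain, ‖B2v d‖ ≤ 2 * ‖M z d‖ + K * ‖(d : H)‖ := by
      intro d
      have h1 : B2v d = M z d + (Complex.I * z) • RLv d + z ^ 2 • (d : H) := by
        rw [hMv d]; abel
      have h2 : ‖B2v d‖ ≤ ‖M z d‖ + ‖z‖ * ‖RLv d‖ + ‖z‖ ^ 2 * ‖(d : H)‖ := by
        rw [h1]
        refine (norm_add_le _ _).trans ?_
        gcongr
        · refine (norm_add_le _ _).trans ?_
          gcongr
          rw [norm_smul, norm_mul, Complex.norm_I, one_mul]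
        · rw [norm_smul, norm_pow]
      have h3 := hRv d
      have h4 := hBLveps d
      have h5 : 0 ≤ ‖B2v d‖ := norm_nonneg _
      have h6 : 0 ≤ ‖(d : H)‖ := norm_nonneg _
      have h7 : 0 ≤ ‖z‖ := norm_nonneg _
      rw [hK_def]
      nlinarith [mul_le_mul_of_nonneg_left h3 h7,
        mul_le_mul_of_nonneg_left h4 (by positivity : (0:ℝ) ≤ ‖z‖ * C),
        mul_le_mul_of_nonneg_right hεhalf h5]
    refine IsSeqClosed.isClosed ?_
    intro u p hu hup
    have hex : ∀ n, ∃ x : (M z).domain, ((x : H), M z x) = u n := fun n =>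
      (LinearPMap.mem_graph_iff' (M z)).mp (hu n)
    choose x hx using hex
    have hfst : ∀ n, ((x n : H)) = (u n).1 := fun n => congrArg Prod.fst (hx n)
    have hsnd : ∀ n, M z (x n) = (u n).2 := fun n => congrArg Prod.snd (hx n)
    have hp1 : Filter.Tendsto (fun n => ((x n : H))) Filter.atTop (nhds p.1) := by
      have := (continuous_fst.tendsto p).comp hup
      simpa [Function.comp_def, hfst] using this
    have hp2 : Filter.Tendsto (fun n => M z (x n)) Filter.atTop (nhds p.2) := by
      have := (continuous_snd.tendsto p).comp hup
      simpa [Function.comp_def, hsnd] using this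
    have hcauchy : CauchySeq fun n => B2v (x n) := by
      rw [Metric.cauchySeq_iff]
      intro ε' hε'
      have hq : 0 < ε' / (K + 3) := by positivity
      rcases Metric.cauchySeq_iff.mp hp2.cauchySeq (ε' / (K + 3)) hq with ⟨N1, hN1⟩
      rcases Metric.cauchySeq_iff.mp hp1.cauchySeq (ε' / (K + 3)) hq with ⟨N2, hN2⟩
      refine ⟨max N1 N2, fun m hm n hn => ?_⟩
      have h1 := hest (x m - x n)
      rw [map_sub, LinearPMap.map_sub] at h1
      have h2 := hN1 m (le_trans (le_max_left _ _) hm) n (le_trans (le_max_left _ _) hn)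
      have h3 := hN2 m (le_trans (le_max_right _ _) hm) n (le_trans (le_max_right _ _) hn)
      rw [dist_eq_norm] at h2 h3 ⊢
      have e : ((↑(x m - x n) : H)) = ((x m : H)) - ((x n : H)) := rfl
      rw [e] at h1
      have hKpos : 0 < K + 3 := by positivity
      have hb2 : ‖M z (x m) - M z (x n)‖ < ε' / (K + 3) := h2
      have hb3 : ‖((x m : H)) - ((x n : H))‖ < ε' / (K + 3) := h3
      calc ‖B2v (x m) - B2v (x n)‖
          ≤ 2 * ‖M z (x m) - M z (x n)‖ + K * ‖((x m : H)) - ((x n : H))‖ := h1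
        _ < ε' := by
            rw [div_eq_mul_inv] at hb2 hb3
            nlinarith [mul_le_mul_of_nonneg_left hb3.le hK0,
              mul_pos hε' (inv_pos.mpr hKpos), mul_inv_cancel₀ hKpos.ne']
    rcases cauchySeq_tendsto_of_complete hcauchy with ⟨h, hh⟩
    have hg1 : ∀ n, (((x n : H)), B2v (x n)) ∈ B2.graph := fun n => B2.mem_graph (ι (x n))
    have hin1 : (p.1, h) ∈ B2.graph :=
      hB2closed.mem_of_tendsto (hp1.prodMk_nhds hh) (Filter.Eventually.of_forall hg1)
    have hp1mem2 : p.1 ∈ B2.domain := LinearPMap.mem_domain_of_mem_graph hin1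
    have hp1memM : p.1 ∈ (M z).domain := (hMdom z).symm ▸ hp1mem2
    set X : (M z).domain := ⟨p.1, hp1memM⟩ with hX
    have hB2X : B2v X = h := by
      have h1 := ((LinearPMap.image_iff hp1mem2).mpr hin1).symm
      calc B2v X = B2 ⟨p.1, hp1mem2⟩ := happB2 rfl
        _ = h := h1
    have htend2 : Filter.Tendsto (fun n => B2v (x n)) Filter.atTop (nhds (B2v X)) := by
      rw [hB2X]; exact hh
    have htendB : Filter.Tendsto (fun n => BLv (x n)) Filter.atTop (nhds (BLv X)) := by
      rw [tendsto_iff_norm_sub_tendsto_zero]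
      have hb : ∀ n, ‖BLv (x n) - BLv X‖ ≤ δ⁻¹ * ‖B2v (x n) - B2v X‖ := by
        intro n
        have h1 := hlowBv (x n - X)
        rw [map_sub, map_sub] at h1
        have h2 : 0 < δ⁻¹ := inv_pos.mpr hδ
        nlinarith [mul_le_mul_of_nonneg_left h1 h2.le, mul_inv_cancel₀ hδ.ne',
          norm_nonneg (B2v (x n) - B2v X)]
      refine squeeze_zero (fun n => norm_nonneg _) hb ?_
      have := (tendsto_iff_norm_sub_tendsto_zero.mp htend2).const_mul δ⁻¹
      simpa using this
    have htendR : Filter.Tendsto (fun n => RLv (x n)) Filter.atTop (nhds (RLv X)) := by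
      rw [tendsto_iff_norm_sub_tendsto_zero]
      have hb : ∀ n, ‖RLv (x n) - RLv X‖ ≤
          C * ‖((x n : H)) - p.1‖ + C * ‖BLv (x n) - BLv X‖ := by
        intro n
        have h1 := hRv (x n - X)
        rw [map_sub, map_sub] at h1
        have e : ((↑(x n - X) : H)) = ((x n : H)) - p.1 := rfl
        rwa [e] at h1
      refine squeeze_zero (fun n => norm_nonneg _) hb ?_
      have t1 : Filter.Tendsto (fun n => ((x n : H)) - p.1) Filter.atTop (nhds 0) := by
        simpa using hp1.sub_const p.1
      have t2 := tendsto_iff_norm_sub_tendsto_zero.mp htendB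
      have := ((t1.norm.const_mul C).add (t2.const_mul C))
      simpa using this
    have htendM : Filter.Tendsto (fun n => M z (x n)) Filter.atTop (nhds (M z X)) := by
      have hcomb := (htend2.sub (htendR.const_smul (Complex.I * z))).sub
        (hp1.const_smul (z ^ 2))
      rw [hMv X]
      refine hcomb.congr fun n => ?_
      rw [hMv (x n)]
    have hfinal : M z X = p.2 := tendsto_nhds_unique htendM hp2
    have : (p.1, p.2) ∈ (M z).graph := by
      have := (M z).mem_graph X
      rwa [hfinal] at this
    simpa using this
  refine ⟨fun z => ⟨hMzdense z, hMclosed z⟩, ?_⟩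
  -- part (ii)
  intro hR' z
  have hlez : (M z).domain ≤ B2.domain := le_of_eq (hMdom z)
  let ι : (M z).domain →ₗ[ℂ] B2.domain := Submodule.inclusion hlez
  let av : (M z).domain →ₗ[ℂ] B.domain := (Submodule.inclusion hle21).comp ι
  let B2v : (M z).domain →ₗ[ℂ] H := B2.toFun.comp ι
  let RLv : (M z).domain →ₗ[ℂ] H := R.toFun.comp ((Submodule.inclusion hRdom).comp av)
  have hMv : ∀ x : (M z).domain,
      M z x = B2v x - (Complex.I * z) • RLv x - z ^ 2 • (x : H) := by
    intro x
    have hx2 : (x : H) ∈ B2.domain := hlez x.2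
    have hxR : (x : H) ∈ R.domain := hRdom (hle21 hx2)
    rw [hMval z x hx2 hxR]
    have e1 : B2 ⟨(x : H), hx2⟩ = B2v x := happB2 rfl
    have e2 : R ⟨(x : H), hxR⟩ = RLv x := happR rfl
    rw [e1, e2]
  have hRformal := LinearPMap.adjoint_isFormalAdjoint hRdense
  have hBinv_norm : ∀ u : H, ‖Binv u‖ ≤ δ⁻¹ * ‖u‖ := by
    intro u
    have h1 := hBlow ⟨Binv u, hBinv_mem u⟩
    rw [hB_Binv u] at h1
    have h2 : 0 < δ⁻¹ := inv_pos.mpr hδ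
    nlinarith [mul_le_mul_of_nonneg_left h1 h2.le, mul_inv_cancel₀ hδ.ne',
      norm_nonneg u]
  let jB : H →ₗ[ℂ] B.domain := Binv.codRestrict B.domain hBinv_mem
  let Tl : H →ₗ[ℂ] H := R.toFun.comp ((Submodule.inclusion hRdom).comp jB)
  have hTl : ∀ u : H, Tl u = R ⟨Binv u, hRdom (hBinv_mem u)⟩ := fun u => happR rfl
  have hTlbound : ∀ u : H, ‖Tl u‖ ≤ (C * δ⁻¹ + C) * ‖u‖ := by
    intro u
    have h1 := hRbound ⟨Binv u, hBinv_mem u⟩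
    rw [hB_Binv u] at h1
    rw [hTl u]
    refine h1.trans ?_
    have := hBinv_norm u
    nlinarith [norm_nonneg u]
  let T : H →L[ℂ] H := Tl.mkContinuous (C * δ⁻¹ + C) hTlbound
  have hT : ∀ u : H, T u = R ⟨Binv u, hRdom (hBinv_mem u)⟩ := hTl
  let Ts := ContinuousLinearMap.adjoint T
  have hTs : ∀ (w u : H), ⟪Ts w, u⟫_ℂ = ⟪w, T u⟫_ℂ := fun w u =>
    ContinuousLinearMap.adjoint_inner_left T u w
  have hformal : ∀ (f : H) (hf2 : f ∈ B2.domain) (x : (M z).domain),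
      ⟪B2 ⟨f, hf2⟩ + (Complex.I * conj z) • R.adjoint ⟨f, hR' (hle21 hf2)⟩
        - (conj z) ^ 2 • f, (x : H)⟫_ℂ = ⟪f, M z x⟫_ℂ := by
    intro f hf2 x
    set f1 : B.domain := ⟨f, hle21 hf2⟩ with hf1
    set f2 : B.domain := ⟨B f1, hd2' ⟨f, hf2⟩⟩ with hf2'
    set x1 : B.domain := av x with hx1
    have hBx1 : B x1 ∈ B.domain := by
      have := hd2' (ι x)
      exact this
    set bx : B.domain := ⟨B x1, hBx1⟩ with hbx
    have hB2f : B2 ⟨f, hf2⟩ = B f2 := hB2val f hf2 (hle21 hf2) (hd2' ⟨f, hf2⟩)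
    have hB2x : B2v x = B bx := by
      have h1 := hB2val (x : H) (hlez x.2) (hle21 (hlez x.2)) (hd2' (ι x))
      have e : B2v x = B2 ⟨(x : H), hlez x.2⟩ := happB2 rfl
      rw [e, h1]
      exact happ rfl
    have h1 : ⟪f, B2v x⟫_ℂ = ⟪(B2 ⟨f, hf2⟩ : H), (x : H)⟫_ℂ := by
      rw [hB2x, hB2f]
      have e1 : ⟪(f1 : H), B bx⟫_ℂ = ⟪B f1, (bx : H)⟫_ℂ := (hsym f1 bx).symm
      have e2 : ⟪B f2, (x1 : H)⟫_ℂ = ⟪(f2 : H), B x1⟫_ℂ := hsym f2 x1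
      calc ⟪f, B bx⟫_ℂ = ⟪B f1, (bx : H)⟫_ℂ := e1
        _ = ⟪(f2 : H), B x1⟫_ℂ := rfl
        _ = ⟪B f2, (x1 : H)⟫_ℂ := e2.symm
        _ = ⟪B f2, (x : H)⟫_ℂ := rfl
    have h2 : ⟪f, RLv x⟫_ℂ = ⟪(R.adjoint ⟨f, hR' (hle21 hf2)⟩ : H), (x : H)⟫_ℂ := by
      have h3 := hRformal ⟨f, hR' (hle21 hf2)⟩ ((Submodule.inclusion hRdom) (av x))
      have e : R ((Submodule.inclusion hRdom) (av x)) = RLv x := rfl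
      rw [e] at h3
      exact h3.symm
    rw [hMv x, inner_sub_right, inner_sub_right, inner_smul_right, inner_smul_right,
      h1, h2]
    rw [inner_sub_left, inner_add_left, inner_smul_left, inner_smul_left]
    simp only [map_mul, Complex.conj_conj, Complex.conj_I, map_pow]
    ring
  have hmemA : ∀ (f : H), f ∈ B2.domain → f ∈ (M z).adjoint.domain := by
    intro f hf2
    exact LinearPMap.mem_adjoint_domain_of_exists _
      ⟨_, fun x => hformal f hf2 x⟩
  have hmemB : ∀ f : (M z).adjoint.domain, ∃ hf2 : (f : H) ∈ B2.domain,
      ∃ hfR : (f : H) ∈ R.adjoint.domain,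
      (M z).adjoint f = B2 ⟨(f : H), hf2⟩
        + (Complex.I * conj z) • R.adjoint ⟨(f : H), hfR⟩ - (conj z) ^ 2 • (f : H) := by
    intro f
    set fH : H := (f : H) with hfH
    set g : H := (M z).adjoint f with hg
    have hfa : ∀ y : (M z).domain, ⟪g, (y : H)⟫_ℂ = ⟪fH, M z y⟫_ℂ := fun y =>
      LinearPMap.adjoint_isFormalAdjoint (hMzdense z) f y
    have key : Binv (Binv g)
        = fH + (Complex.I * conj z) • Binv (Ts fH) - (conj z) ^ 2 • Binv (Binv fH) := by
      refine ext_inner_right ℂ fun u => ?_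
      set xu : (M z).domain := ⟨Binv (Binv u), (hMdom z).symm ▸ hBinv2_mem u⟩ with hxu
      have hcoe : (xu : H) = Binv (Binv u) := rfl
      have hB2vxu : B2v xu = u := by
        have e : B2v xu = B2 ⟨Binv (Binv u), hBinv2_mem u⟩ := happB2 rfl
        rw [e, hB2_Binv2 u]
      have hRLvxu : RLv xu = T (Binv u) := by
        rw [hT (Binv u)]
        exact happR rfl
      have lhs : ⟪Binv (Binv g), u⟫_ℂ = ⟪g, (xu : H)⟫_ℂ := by
        rw [hcoe, hBinv_sym (Binv g) u, hBinv_sym g (Binv u)]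
      have rhs : ⟪fH, M z xu⟫_ℂ
          = ⟪fH, u⟫_ℂ - (Complex.I * z) * ⟪Binv (Ts fH), u⟫_ℂ
            - z ^ 2 * ⟪Binv (Binv fH), u⟫_ℂ := by
        rw [hMv xu, inner_sub_right, inner_sub_right, inner_smul_right, inner_smul_right,
          hB2vxu, hRLvxu, hcoe]
        congr 2
        · rw [← hTs fH (Binv u), hBinv_sym (Ts fH) u]
        · rw [← hBinv_sym fH (Binv u), ← hBinv_sym (Binv fH) u]
      rw [lhs, hfa xu, rhs]
      rw [inner_sub_left, inner_add_left, inner_smul_left, inner_smul_left]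
      simp only [map_mul, Complex.conj_conj, Complex.conj_I, map_pow]
      ring
    have hfB : fH ∈ B.domain := by
      have hre : fH = Binv (Binv g) - (Complex.I * conj z) • Binv (Ts fH)
          + (conj z) ^ 2 • Binv (Binv fH) := by
        rw [key]; abel
      rw [hre]
      exact Submodule.add_mem _
        (Submodule.sub_mem _ (hBinv_mem _) (Submodule.smul_mem _ _ (hBinv_mem _)))
        (Submodule.smul_mem _ _ (hBinv_mem _))
    have hfR : fH ∈ R.adjoint.domain := hR' hfB
    have hTs_eq : Ts fH = Binv (R.adjoint ⟨fH, hfR⟩) := by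
      refine ext_inner_right ℂ fun u => ?_
      rw [hTs fH u, hT u]
      have h1 := hRformal ⟨fH, hfR⟩ ⟨Binv u, hRdom (hBinv_mem u)⟩
      rw [← h1]
      exact (hBinv_sym (R.adjoint ⟨fH, hfR⟩) u).symm
    set w : H := g - (Complex.I * conj z) • (R.adjoint ⟨fH, hfR⟩ : H)
      + (conj z) ^ 2 • fH with hw
    have hfeq : fH = Binv (Binv w) := by
      rw [hw]
      simp only [map_sub, map_add, map_smul]
      rw [← hTs_eq, key]
      abel
    have hf2 : fH ∈ B2.domain := by rw [hfeq]; exact hBinv2_mem w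
    have hval : B2 ⟨fH, hf2⟩ = w := by
      have e : B2 ⟨fH, hf2⟩ = B2 ⟨Binv (Binv w), hBinv2_mem w⟩ := happB2 hfeq
      rw [e, hB2_Binv2 w]
    refine ⟨hf2, hfR, ?_⟩
    rw [hval, hw]
    abel
  constructor
  · apply le_antisymm
    · intro f hf
      rcases hmemB ⟨f, hf⟩ with ⟨hf2, _, _⟩
      exact hf2
    · intro f hf
      exact hmemA f hf
  · intro f hf2 hfR
    rcases hmemB f with ⟨hf2', hfR', hval⟩
    exact hval
end

section
/- The Dirac-type operator Q in H ⊕ H, Q(f,g) = (−iRf + Bg, Bf) with dom(Q) = dom(B) ⊕ dom(B), is injective and closed; moreover Q maps dom(Q) bijectively onto H ⊕ H and its inverse is the bounded operator on H ⊕ H given by Q^{-1}(u,v) = (B^{-1} v, B^{-1} u + i B^{-1} R B^{-1} v), i.e., 0 belongs to the resolvent set of Q. -/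
set_option synthInstance.maxHeartbeats 1000000


open scoped InnerProductSpace

/-- from Theorem 4.3. Let `B` be a self-adjoint operator in `H` with
`B ≥ δ I`, `δ > 0` (so that `B⁻¹ ∈ B(H)`), and let `R` be densely defined and closable with
`dom(R) ⊇ dom(B)`.  The Dirac-type operator `Q` in `H ⊕ H`, `Q(f,g) = (−iRf + Bg, Bf)` with
`dom(Q) = dom(B) ⊕ dom(B)`, is injective and closed; moreover `Q` maps `dom(Q)` bijectively
onto `H ⊕ H` and its inverse is the bounded operator
`Q⁻¹(u,v) = (B⁻¹v, B⁻¹u + i B⁻¹ R B⁻¹ v)`, i.e. `0 ∈ ρ(Q)`. -/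
theorem dirac_injective_closed_boundedly_invertible
    {H : Type*}
    [NormedAddCommGroup H] [InnerProductSpace ℂ H] [CompleteSpace H]
    [TopologicalSpace.SeparableSpace H]
    (B : H →ₗ.[ℂ] H)
    (hBdense : Dense (B.domain : Set H))
    (hBsa : B.adjoint = B)
    (δ : ℝ) (hδ : 0 < δ)
    (hBpos : ∀ f : B.domain, δ * ‖(f : H)‖ ^ 2 ≤ (⟪(f : H), B f⟫_ℂ).re)
    -- the (everywhere defined, bounded) inverse `B⁻¹ ∈ B(H)`:
    (Binv : H →L[ℂ] H)
    (hBinv : ∀ u : H, (Binv u, u) ∈ B.graph)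
    (hBinv' : ∀ x : B.domain, Binv (B x) = (x : H))
    (R : H →ₗ.[ℂ] H)
    (hRdense : Dense (R.domain : Set H))
    (hRclosable : R.IsClosable)
    (hRdom : B.domain ≤ R.domain)
    -- the Dirac-type operator `Q(f,g) = (−iRf + Bg, Bf)`, `dom(Q) = dom(B) ⊕ dom(B)`:
    (Q : WithLp 2 (H × H) →ₗ.[ℂ] WithLp 2 (H × H))
    (hQdom : ∀ x : WithLp 2 (H × H), x ∈ Q.domain ↔
      (x.fst ∈ B.domain ∧ x.snd ∈ B.domain))
    (hQval : ∀ (x : Q.domain) (h1 : (x : WithLp 2 (H × H)).fst ∈ B.domain)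
      (h2 : (x : WithLp 2 (H × H)).snd ∈ B.domain)
      (hR : (x : WithLp 2 (H × H)).fst ∈ R.domain),
      Q x = (WithLp.equiv 2 (H × H)).symm
        (-(Complex.I • R ⟨(x : WithLp 2 (H × H)).fst, hR⟩) + B ⟨(x : WithLp 2 (H × H)).snd, h2⟩,
          B ⟨(x : WithLp 2 (H × H)).fst, h1⟩)) :
    -- `Q` is injective:
    (∀ x : Q.domain, Q x = 0 → (x : WithLp 2 (H × H)) = 0) ∧
    -- `Q` is closed:
    Q.IsClosed ∧
    -- `Q` is bijective onto `H ⊕ H` with bounded inverse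
    -- `Q⁻¹(u,v) = (B⁻¹v, B⁻¹u + i B⁻¹ R B⁻¹ v)`:
    (∃ Qinv : WithLp 2 (H × H) →L[ℂ] WithLp 2 (H × H),
      (∀ u v : H, Qinv ((WithLp.equiv 2 (H × H)).symm (u, v)) =
        (WithLp.equiv 2 (H × H)).symm
          (Binv v, Binv u + Complex.I •
            Binv (R ⟨Binv v, hRdom (B.mem_domain_of_mem_graph (hBinv v))⟩))) ∧
      (∀ w : WithLp 2 (H × H), (Qinv w, w) ∈ Q.graph) ∧
      (∀ x y : WithLp 2 (H × H), (x, y) ∈ Q.graph → Qinv y = x)) := by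
  classical
  have hBmem : ∀ u : H, Binv u ∈ B.domain := fun u => B.mem_domain_of_mem_graph (hBinv u)
  have hBval : ∀ (u : H) (h : Binv u ∈ B.domain), B ⟨Binv u, h⟩ = u := by
    intro u h
    obtain ⟨y, hy1, hy2⟩ := B.mem_graph_iff.mp (hBinv u)
    rw [show (⟨Binv u, h⟩ : B.domain) = y from Subtype.ext hy1.symm]
    exact hy2
  -- the linear map S = R ∘ Binv
  let S : H →ₗ[ℂ] H :=
    { toFun := fun u => R ⟨Binv u, hRdom (hBmem u)⟩
      map_add' := by
        intro u v
        have h : (⟨Binv (u + v), hRdom (hBmem (u + v))⟩ : R.domain)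
            = ⟨Binv u, hRdom (hBmem u)⟩ + ⟨Binv v, hRdom (hBmem v)⟩ := by
          apply Subtype.ext; simp
        show (R ⟨Binv (u + v), hRdom (hBmem (u + v))⟩ : H)
            = R ⟨Binv u, hRdom (hBmem u)⟩ + R ⟨Binv v, hRdom (hBmem v)⟩
        rw [h, R.map_add]
      map_smul' := by
        intro c u
        have h : (⟨Binv (c • u), hRdom (hBmem (c • u))⟩ : R.domain)
            = c • ⟨Binv u, hRdom (hBmem u)⟩ := by
          apply Subtype.ext; simp
        show (R ⟨Binv (c • u), hRdom (hBmem (c • u))⟩ : H)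
            = (RingHom.id ℂ) c • (R ⟨Binv u, hRdom (hBmem u)⟩ : H)
        rw [h, R.map_smul]; rfl }
  obtain ⟨Rc, hRc⟩ := hRclosable
  have hRsub : (R.graph : Set (H × H)) ⊆ (Rc.graph : Set (H × H)) := by
    rw [← hRc]
    exact Submodule.le_topologicalClosure _
  have hSclosed : IsClosed (S.graph : Set (H × H)) := by
    apply IsSeqClosed.isClosed
    intro x p hmem hlim
    have hlim1 : Filter.Tendsto (fun n => Binv (x n).1) Filter.atTop (nhds (Binv p.1)) :=
      (Binv.continuous.tendsto p.1).comp ((continuous_fst.tendsto p).comp hlim)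
    have hlim2 : Filter.Tendsto (fun n => (x n).2) Filter.atTop (nhds p.2) :=
      (continuous_snd.tendsto p).comp hlim
    have hmemR : ∀ n, (Binv (x n).1, (x n).2) ∈ (Rc.graph : Set (H × H)) := by
      intro n
      apply hRsub
      have h2 : (x n).2 = S (x n).1 := (LinearMap.mem_graph_iff S (x n)).mp (hmem n)
      rw [h2]
      exact R.mem_graph ⟨Binv (x n).1, hRdom (hBmem (x n).1)⟩
    have hcl : (Binv p.1, p.2) ∈ (Rc.graph : Set (H × H)) := by
      have : IsClosed (Rc.graph : Set (H × H)) := by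
        rw [← hRc, Submodule.topologicalClosure_coe]
        exact isClosed_closure
      exact this.isSeqClosed hmemR (hlim1.prodMk_nhds hlim2)
    have hS : (Binv p.1, S p.1) ∈ (Rc.graph : Set (H × H)) :=
      hRsub (R.mem_graph ⟨Binv p.1, hRdom (hBmem p.1)⟩)
    obtain ⟨a, ha1, ha2⟩ := Rc.mem_graph_iff.mp hcl
    obtain ⟨b, hb1, hb2⟩ := Rc.mem_graph_iff.mp hS
    have hab : a = b := Subtype.ext (by rw [ha1, hb1])
    have hp2 : p.2 = S p.1 := by rw [← ha2, hab, hb2]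
    exact (LinearMap.mem_graph_iff S p).mpr hp2
  let Scl : H →L[ℂ] H := ContinuousLinearMap.ofIsClosedGraph hSclosed
  let e := WithLp.prodContinuousLinearEquiv 2 ℂ H H
  let M : (H × H) →L[ℂ] (H × H) :=
    (Binv.comp (ContinuousLinearMap.snd ℂ H H)).prod
      (Binv.comp (ContinuousLinearMap.fst ℂ H H) +
        Complex.I • (Binv.comp (Scl.comp (ContinuousLinearMap.snd ℂ H H))))
  let Qinv : WithLp 2 (H × H) →L[ℂ] WithLp 2 (H × H) :=
    (e.symm : (H × H) →L[ℂ] WithLp 2 (H × H)).comp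
      (M.comp (e : WithLp 2 (H × H) →L[ℂ] (H × H)))
  have hQinv_apply : ∀ w : WithLp 2 (H × H), Qinv w = (WithLp.equiv 2 (H × H)).symm
      (Binv w.snd, Binv w.fst + Complex.I • Binv (S w.snd)) := fun w => rfl
  have hprop1 : ∀ u v : H, Qinv ((WithLp.equiv 2 (H × H)).symm (u, v)) =
      (WithLp.equiv 2 (H × H)).symm
        (Binv v, Binv u + Complex.I •
          Binv (R ⟨Binv v, hRdom (B.mem_domain_of_mem_graph (hBinv v))⟩)) := fun u v => rfl
  have hBcomb : ∀ (a b : H) (ha : a ∈ B.domain) (hb : b ∈ B.domain)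
      (hab : a + Complex.I • b ∈ B.domain),
      B ⟨a + Complex.I • b, hab⟩ = B ⟨a, ha⟩ + Complex.I • B ⟨b, hb⟩ := by
    intro a b ha hb hab
    have h : (⟨a + Complex.I • b, hab⟩ : B.domain) = ⟨a, ha⟩ + Complex.I • ⟨b, hb⟩ :=
      Subtype.ext rfl
    rw [h, B.map_add, B.map_smul]
  have hprop2 : ∀ w : WithLp 2 (H × H), (Qinv w, w) ∈ Q.graph := by
    intro w
    have hgd : Binv w.fst + Complex.I • Binv (S w.snd) ∈ B.domain :=
      B.domain.add_mem (hBmem w.fst) (B.domain.smul_mem _ (hBmem (S w.snd)))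
    have hxd : Qinv w ∈ Q.domain := by
      rw [hQdom]
      exact ⟨hBmem w.snd, hgd⟩
    have hval := hQval ⟨Qinv w, hxd⟩ (hBmem w.snd) hgd (hRdom (hBmem w.snd))
    have hmem := Q.mem_graph ⟨Qinv w, hxd⟩
    have hw : Q ⟨Qinv w, hxd⟩ = w := by
      rw [hval]
      show (WithLp.equiv 2 (H × H)).symm
          (-(Complex.I • (S w.snd)) +
            B ⟨Binv w.fst + Complex.I • Binv (S w.snd), hgd⟩,
            B ⟨Binv w.snd, hBmem w.snd⟩) = w
      rw [hBcomb _ _ (hBmem w.fst) (hBmem (S w.snd)) hgd, hBval, hBval, hBval]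
      have hab : -(Complex.I • (S w.snd)) + (w.fst + Complex.I • (S w.snd)) = w.fst := by
        abel
      rw [hab]
      rfl
    rw [hw] at hmem
    exact hmem
  have hprop3 : ∀ x y : WithLp 2 (H × H), (x, y) ∈ Q.graph → Qinv y = x := by
    intro x y hxy
    obtain ⟨a, ha1, ha2⟩ := Q.mem_graph_iff.mp hxy
    obtain ⟨h1, h2⟩ := (hQdom ↑a).mp a.2
    have hval := hQval a h1 h2 (hRdom h1)
    have hx : (↑a : WithLp 2 (H × H)) = x := ha1
    have hy : Q a = y := ha2
    rw [← hx, ← hy]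
    rw [hval]
    have hfst : Binv (B ⟨(↑a : WithLp 2 (H × H)).fst, h1⟩) = (↑a : WithLp 2 (H × H)).fst :=
      hBinv' _
    show (WithLp.equiv 2 (H × H)).symm
        (Binv (B ⟨(↑a : WithLp 2 (H × H)).fst, h1⟩),
          Binv (-(Complex.I • (R ⟨(↑a : WithLp 2 (H × H)).fst, hRdom h1⟩ : H))
              + B ⟨(↑a : WithLp 2 (H × H)).snd, h2⟩)
            + Complex.I • Binv (S (B ⟨(↑a : WithLp 2 (H × H)).fst, h1⟩)))
        = (↑a : WithLp 2 (H × H))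
    have hSv : S (B ⟨(↑a : WithLp 2 (H × H)).fst, h1⟩)
        = R ⟨(↑a : WithLp 2 (H × H)).fst, hRdom h1⟩ := by
      show (R ⟨Binv (B ⟨(↑a : WithLp 2 (H × H)).fst, h1⟩),
          hRdom (hBmem _)⟩ : H) = _
      congr 1
      exact Subtype.ext hfst
    have hsnd : Binv (-(Complex.I • (R ⟨(↑a : WithLp 2 (H × H)).fst, hRdom h1⟩ : H))
          + B ⟨(↑a : WithLp 2 (H × H)).snd, h2⟩)
        = -(Complex.I • Binv (R ⟨(↑a : WithLp 2 (H × H)).fst, hRdom h1⟩ : H))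
          + (↑a : WithLp 2 (H × H)).snd := by
      rw [map_add, map_neg, map_smul, hBinv']
    rw [hfst, hSv, hsnd]
    have hab : -(Complex.I • Binv (R ⟨(↑a : WithLp 2 (H × H)).fst, hRdom h1⟩ : H))
          + (↑a : WithLp 2 (H × H)).snd
          + Complex.I • Binv (R ⟨(↑a : WithLp 2 (H × H)).fst, hRdom h1⟩ : H)
        = (↑a : WithLp 2 (H × H)).snd := by abel
    rw [hab]
    rfl
  have hinj : ∀ x : Q.domain, Q x = 0 → (x : WithLp 2 (H × H)) = 0 := by
    intro x hx
    have hmem := Q.mem_graph x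
    rw [hx] at hmem
    have h0 := hprop3 _ _ hmem
    rw [← h0, map_zero]
  have hclosed : Q.IsClosed := by
    have hset : (Q.graph : Set (WithLp 2 (H × H) × WithLp 2 (H × H)))
        = (fun p : WithLp 2 (H × H) × WithLp 2 (H × H) => p.1 - Qinv p.2) ⁻¹' {0} := by
      ext p
      simp only [Set.mem_preimage, Set.mem_singleton_iff, sub_eq_zero, SetLike.mem_coe]
      constructor
      · intro hp
        exact (hprop3 p.1 p.2 hp).symm
      · intro hp
        have h := hprop2 p.2
        rw [← hp] at h
        exact h
    show IsClosed (Q.graph : Set (WithLp 2 (H × H) × WithLp 2 (H × H)))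
    rw [hset]
    exact isClosed_singleton.preimage (continuous_fst.sub (Qinv.continuous.comp continuous_snd))
  exact ⟨hinj, hclosed, Qinv, hprop1, hprop2, hprop3⟩
end

section
/- For every z ∈ ℂ, the operator Q − z I (with domain dom(B) ⊕ dom(B) in H ⊕ H) has an everywhere defined bounded inverse on H ⊕ H if and only if the pencil operator M(z) = B² − i z R − z² I (with domain dom(B²)) has an everywhere defined bounded inverse on H; consequently the spectrum of Q coincides with the spectrum of the pencil, σ(Q) = σ(M(·)) = {λ ∈ ℂ : M(λ) is not boundedly invertible}. -/
open scoped InnerProductSpace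

/-- `T − z I` possesses an everywhere defined bounded (two-sided) inverse. -/
def HasBoundedInverseShifted {V : Type*} [NormedAddCommGroup V] [NormedSpace ℂ V]
    (T : V →ₗ.[ℂ] V) (z : ℂ) : Prop :=
  ∃ S : V →L[ℂ] V, (∀ w : V, (S w, w + z • S w) ∈ T.graph) ∧
    ∀ x y : V, (x, y) ∈ T.graph → S (y - z • x) = x

namespace SpecAux

variable {H : Type*} [NormedAddCommGroup H] [InnerProductSpace ℂ H] [CompleteSpace H]

set_option linter.unusedSectionVars false
set_option linter.unusedVariables false

/-- A pair satisfying the formal-adjoint relation lies in the graph of a self-adjoint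
operator. -/
lemma sa_graph_char (B : H →ₗ.[ℂ] H) (hBdense : Dense (B.domain : Set H))
    (hBsa : B.adjoint = B) (a b : H)
    (hall : ∀ u : B.domain, ⟪B u, a⟫_ℂ = ⟪(u : H), b⟫_ℂ) : (a, b) ∈ B.graph := by
  have ha : a ∈ B.adjoint.domain := by
    apply LinearPMap.mem_adjoint_domain_of_exists
    exact ⟨b, fun u => by rw [← inner_conj_symm, ← hall u, inner_conj_symm]⟩
  have hval : B.adjoint ⟨a, ha⟩ = b := by
    apply LinearPMap.adjoint_apply_eq hBdense
    intro u
    rw [← inner_conj_symm, ← hall u, inner_conj_symm]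
  have : (a, b) ∈ B.adjoint.graph := by
    rw [LinearPMap.mem_graph_iff]
    exact ⟨⟨a, ha⟩, rfl, hval⟩
  rwa [hBsa] at this

/-- The graph of a self-adjoint operator is closed. -/
lemma sa_closed (B : H →ₗ.[ℂ] H) (hBdense : Dense (B.domain : Set H)) (hBsa : B.adjoint = B) :
    IsClosed (B.graph : Set (H × H)) := by
  have hchar : (B.graph : Set (H × H)) =
      ⋂ u : B.domain, {p : H × H | ⟪B u, p.1⟫_ℂ = ⟪(u : H), p.2⟫_ℂ} := by
    ext ⟨a, b⟩
    simp only [Set.mem_iInter, Set.mem_setOf_eq]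
    constructor
    · intro hab u
      rw [SetLike.mem_coe, LinearPMap.mem_graph_iff] at hab
      obtain ⟨x, hx, hx'⟩ := hab
      subst hx hx'
      have h := LinearPMap.adjoint_isFormalAdjoint hBdense (T := B)
      rw [hBsa] at h
      exact h u x
    · intro hall
      exact sa_graph_char B hBdense hBsa a b hall
  rw [hchar]
  refine isClosed_iInter fun u => isClosed_eq ?_ ?_
  · exact Continuous.inner continuous_const continuous_fst
  · exact Continuous.inner continuous_const continuous_snd

/-- Lower bound on the graph of a semibounded operator. -/
lemma graph_norm (B : H →ₗ.[ℂ] H) (δ : ℝ) (hδ : 0 < δ)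
    (hBpos : ∀ f : B.domain, δ * ‖(f : H)‖ ^ 2 ≤ (⟪(f : H), B f⟫_ℂ).re) :
    ∀ x y : H, (x, y) ∈ B.graph → δ * ‖x‖ ≤ ‖y‖ := by
  intro x y hxy
  rw [LinearPMap.mem_graph_iff] at hxy
  obtain ⟨f, hf, hf'⟩ := hxy
  subst hf hf'
  rcases eq_or_ne ‖(f : H)‖ 0 with h0 | h0
  · rw [h0, mul_zero]; positivity
  have h1 : δ * ‖(f:H)‖ ^ 2 ≤ ‖(f:H)‖ * ‖B f‖ := by
    calc δ * ‖(f:H)‖ ^ 2 ≤ (⟪(f : H), B f⟫_ℂ).re := hBpos f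
    _ ≤ ‖⟪(f : H), B f⟫_ℂ‖ := Complex.re_le_norm _
    _ ≤ ‖(f:H)‖ * ‖B f‖ := norm_inner_le_norm _ _
  have hpos : 0 < ‖(f:H)‖ := lt_of_le_of_ne (norm_nonneg _) (Ne.symm h0)
  nlinarith [hpos]

/-- Uniqueness of first components in the graph of an operator bounded from below. -/
lemma graph_uniq (B : H →ₗ.[ℂ] H) (δ : ℝ) (hδ : 0 < δ)
    (hlow : ∀ x y : H, (x, y) ∈ B.graph → δ * ‖x‖ ≤ ‖y‖) :
    ∀ x x' w : H, (x, w) ∈ B.graph → (x', w) ∈ B.graph → x = x' := by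
  have hker : ∀ x : H, (x, (0 : H)) ∈ B.graph → x = 0 := by
    intro x hx
    have := hlow x 0 hx
    rw [norm_zero] at this
    have h2 : ‖x‖ ≤ 0 := by nlinarith
    exact norm_le_zero_iff.mp h2
  intro x x' w h1 h2
  have h3 : (x - x', (0:H)) ∈ B.graph := by
    have := B.graph.sub_mem h1 h2
    simpa using this
  exact sub_eq_zero.mp (hker _ h3)

/-- A closed, bounded-below, self-adjoint operator is surjective. -/
lemma graph_surj (B : H →ₗ.[ℂ] H) (hBdense : Dense (B.domain : Set H)) (hBsa : B.adjoint = B)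
    (δ : ℝ) (hδ : 0 < δ)
    (hclosed : IsClosed (B.graph : Set (H × H)))
    (hlow : ∀ x y : H, (x, y) ∈ B.graph → δ * ‖x‖ ≤ ‖y‖) :
    ∀ w : H, ∃ x : H, (x, w) ∈ B.graph := by
  set Rng : Submodule ℂ H := B.graph.map (LinearMap.snd ℂ H H) with hRng
  have hmem : ∀ w : H, w ∈ Rng ↔ ∃ x, (x, w) ∈ B.graph := by
    intro w
    simp only [hRng, Submodule.mem_map, LinearMap.snd_apply, Prod.exists]
    constructor
    · rintro ⟨a, b, hab, rfl⟩; exact ⟨a, hab⟩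
    · rintro ⟨a, ha⟩; exact ⟨a, w, ha, rfl⟩
  have hclosedRng : IsClosed (Rng : Set H) := by
    apply IsSeqClosed.isClosed
    intro wseq w hw hwlim
    have hx : ∀ n, ∃ x, (x, wseq n) ∈ B.graph := fun n => (hmem _).mp (hw n)
    choose xseq hxseq using hx
    have hcauchy : CauchySeq xseq := by
      rw [Metric.cauchySeq_iff]
      intro ε hε
      have hwc : CauchySeq wseq := hwlim.cauchySeq
      rw [Metric.cauchySeq_iff] at hwc
      obtain ⟨N, hN⟩ := hwc (δ * ε) (by positivity)
      refine ⟨N, fun m hm n hn => ?_⟩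
      have hsub : (xseq m - xseq n, wseq m - wseq n) ∈ B.graph := by
        have := B.graph.sub_mem (hxseq m) (hxseq n)
        simpa using this
      have := hlow _ _ hsub
      have h2 := hN m hm n hn
      rw [dist_eq_norm] at h2 ⊢
      calc ‖xseq m - xseq n‖ = δ⁻¹ * (δ * ‖xseq m - xseq n‖) := by field_simp
      _ ≤ δ⁻¹ * ‖wseq m - wseq n‖ := by
          apply mul_le_mul_of_nonneg_left this (by positivity)
      _ < δ⁻¹ * (δ * ε) := by
          apply mul_lt_mul_of_pos_left h2 (by positivity)
      _ = ε := by field_simp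
    obtain ⟨x, hxlim⟩ := cauchySeq_tendsto_of_complete hcauchy
    have hpar : Filter.Tendsto (fun n => (xseq n, wseq n)) Filter.atTop (nhds (x, w)) :=
      hxlim.prodMk_nhds hwlim
    have hmemg : (x, w) ∈ (B.graph : Set (H × H)) :=
      hclosed.mem_of_tendsto hpar (Filter.Eventually.of_forall fun n => hxseq n)
    exact (hmem w).mpr ⟨x, hmemg⟩
  have hdense : Rngᗮ = ⊥ := by
    rw [Submodule.eq_bot_iff]
    intro y hy
    rw [Submodule.mem_orthogonal] at hy
    have h0 : (y, (0:H)) ∈ B.graph := by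
      apply sa_graph_char B hBdense hBsa
      intro u
      rw [inner_zero_right]
      apply hy
      exact (hmem _).mpr ⟨u, B.mem_graph u⟩
    have := hlow y 0 h0
    rw [norm_zero] at this
    have : ‖y‖ ≤ 0 := by nlinarith
    have : y = 0 := norm_le_zero_iff.mp this
    exact this
  have htop : Rng = ⊤ := by
    have h1 : Rng.topologicalClosure = ⊤ := Submodule.topologicalClosure_eq_top_iff.mpr hdense
    have h2 : Rng.topologicalClosure = Rng := IsClosed.submodule_topologicalClosure_eq hclosedRng
    rw [h2] at h1; exact h1
  intro w
  exact (hmem w).mp (htop ▸ Submodule.mem_top)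

/-- A bijective, bounded-below operator has a bounded everywhere-defined inverse. -/
lemma exists_inverse (B : H →ₗ.[ℂ] H) (δ : ℝ) (hδ : 0 < δ)
    (hlow : ∀ x y : H, (x, y) ∈ B.graph → δ * ‖x‖ ≤ ‖y‖)
    (hsurj : ∀ w : H, ∃ x : H, (x, w) ∈ B.graph) :
    ∃ S : H →L[ℂ] H, ∀ y : H, (S y, y) ∈ B.graph := by
  have huniq := graph_uniq B δ hδ hlow
  choose f hf using hsurj
  have hadd : ∀ w w' : H, f (w + w') = f w + f w' := by
    intro w w'
    refine huniq _ _ (w + w') (hf _) ?_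
    have := B.graph.add_mem (hf w) (hf w')
    simpa using this
  have hsmul : ∀ (c : ℂ) (w : H), f (c • w) = c • f w := by
    intro c w
    refine huniq _ _ (c • w) (hf _) ?_
    have := B.graph.smul_mem c (hf w)
    simpa using this
  let L : H →ₗ[ℂ] H := { toFun := f, map_add' := hadd, map_smul' := hsmul }
  have hbound : ∀ w : H, ‖L w‖ ≤ δ⁻¹ * ‖w‖ := by
    intro w
    have := hlow _ _ (hf w)
    have h2 : ‖f w‖ = δ⁻¹ * (δ * ‖f w‖) := by field_simp
    rw [show L w = f w from rfl, h2]
    apply mul_le_mul_of_nonneg_left this (by positivity)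
  exact ⟨L.mkContinuous δ⁻¹ hbound, hf⟩

/-- Composition of a closed operator with a continuous map, everywhere defined, is
continuous (closed graph theorem). -/
lemma exists_comp_clm (T : H →ₗ.[ℂ] H) (hT : IsClosed (T.graph : Set (H × H)))
    (A : H →L[ℂ] H) (h : ∀ y : H, A y ∈ T.domain) :
    ∃ C : H →L[ℂ] H, ∀ y : H, (A y, C y) ∈ T.graph := by
  let L : H →ₗ[ℂ] H := T.toFun.comp ((A : H →ₗ[ℂ] H).codRestrict T.domain h)
  have hmem : ∀ y : H, (A y, L y) ∈ T.graph := fun y => T.mem_graph ⟨A y, h y⟩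
  have hcont : Continuous L := by
    apply LinearMap.continuous_of_seq_closed_graph
    intro u x y hux huy
    have hpair : Filter.Tendsto (fun n => (A (u n), L (u n))) Filter.atTop (nhds (A x, y)) :=
      ((A.continuous.tendsto x).comp hux).prodMk_nhds huy
    have hmemg : (A x, y) ∈ (T.graph : Set (H × H)) :=
      hT.mem_of_tendsto hpair (Filter.Eventually.of_forall fun n => hmem (u n))
    exact T.mem_graph_snd_inj hmemg (hmem x) rfl
  exact ⟨⟨L, hcont⟩, hmem⟩

end SpecAux

/-- Theorem 4.3, spectral part. Let `B` be self-adjoint in `H` with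
`B ≥ δ I`, `δ > 0`, and `R` densely defined closable with `dom(R) ⊇ dom(B)`.  Let `Q` be the
Dirac-type operator `Q(f,g) = (−iRf + Bg, Bf)` on `dom(B) ⊕ dom(B)` in `H ⊕ H` and let
`M(z) = B² − izR − z²I` on `dom(B²)` be the quadratic pencil.  Then for every `z ∈ ℂ`,
`Q − zI` is boundedly invertible iff `M(z)` is boundedly invertible; consequently
`σ(Q) = σ(M(·))`. -/
theorem spectrum_dirac_eq_spectrum_pencil
    {H : Type*}
    [NormedAddCommGroup H] [InnerProductSpace ℂ H] [CompleteSpace H]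
    [TopologicalSpace.SeparableSpace H]
    (B : H →ₗ.[ℂ] H)
    (hBdense : Dense (B.domain : Set H))
    (hBsa : B.adjoint = B)
    (δ : ℝ) (hδ : 0 < δ)
    (hBpos : ∀ f : B.domain, δ * ‖(f : H)‖ ^ 2 ≤ (⟪(f : H), B f⟫_ℂ).re)
    (R : H →ₗ.[ℂ] H)
    (hRdense : Dense (R.domain : Set H))
    (hRclosable : R.IsClosable)
    (hRdom : B.domain ≤ R.domain)
    -- `B² = B ∘ B` with its natural domain:
    (B2 : H →ₗ.[ℂ] H)
    (hB2 : ∀ (x y : H), (x, y) ∈ B2.graph ↔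
      ∃ (hx : x ∈ B.domain) (hBx : B ⟨x, hx⟩ ∈ B.domain), B ⟨B ⟨x, hx⟩, hBx⟩ = y)
    -- the pencil `M(z) = B² − i z R − z² I` with `dom(M(z)) = dom(B²)`:
    (M : ℂ → (H →ₗ.[ℂ] H))
    (hMdom : ∀ z : ℂ, (M z).domain = B2.domain)
    (hMval : ∀ (z : ℂ) (x : (M z).domain) (hx2 : (x : H) ∈ B2.domain)
      (hxR : (x : H) ∈ R.domain),
      M z x = B2 ⟨(x : H), hx2⟩ - (Complex.I * z) • R ⟨(x : H), hxR⟩ - z ^ 2 • (x : H))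
    -- the Dirac-type operator `Q(f,g) = (−iRf + Bg, Bf)`, `dom(Q) = dom(B) ⊕ dom(B)`:
    (Q : WithLp 2 (H × H) →ₗ.[ℂ] WithLp 2 (H × H))
    (hQdom : ∀ x : WithLp 2 (H × H), x ∈ Q.domain ↔
      (x.fst ∈ B.domain ∧ x.snd ∈ B.domain))
    (hQval : ∀ (x : Q.domain) (h1 : (x : WithLp 2 (H × H)).fst ∈ B.domain)
      (h2 : (x : WithLp 2 (H × H)).snd ∈ B.domain)
      (hR : (x : WithLp 2 (H × H)).fst ∈ R.domain),
      Q x = (WithLp.equiv 2 (H × H)).symm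
        (-(Complex.I • R ⟨(x : WithLp 2 (H × H)).fst, hR⟩) + B ⟨(x : WithLp 2 (H × H)).snd, h2⟩,
          B ⟨(x : WithLp 2 (H × H)).fst, h1⟩)) :
    (∀ z : ℂ, HasBoundedInverseShifted Q z ↔ HasBoundedInverseShifted (M z) 0) ∧
    {z : ℂ | ¬ HasBoundedInverseShifted Q z} =
      {z : ℂ | ¬ HasBoundedInverseShifted (M z) 0} := by
  suffices key : ∀ z : ℂ, HasBoundedInverseShifted Q z ↔ HasBoundedInverseShifted (M z) 0 by
    exact ⟨key, Set.ext fun z => not_congr (key z)⟩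
  -- Basic facts about `B`
  have hBclosed := SpecAux.sa_closed B hBdense hBsa
  have hlow := SpecAux.graph_norm B δ hδ hBpos
  have huniq := SpecAux.graph_uniq B δ hδ hlow
  have hsurj := SpecAux.graph_surj B hBdense hBsa δ hδ hBclosed hlow
  obtain ⟨Binv, hBinv⟩ := SpecAux.exists_inverse B δ hδ hlow hsurj
  have hBinv_left : ∀ x y : H, (x, y) ∈ B.graph → Binv y = x :=
    fun x y h => huniq _ _ y (hBinv y) h
  have hBinv_dom : ∀ y : H, Binv y ∈ B.domain :=
    fun y => LinearPMap.mem_domain_of_mem_graph (hBinv y)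
  -- Facts about `R`
  have hRcg : R.graph ≤ R.closure.graph := LinearPMap.le_graph_of_le R.le_closure
  have hRclosed : IsClosed (R.closure.graph : Set (H × H)) := hRclosable.closure_isClosed
  have hRofB : ∀ (x : H), x ∈ B.domain → x ∈ R.domain := fun x hx => hRdom hx
  have hRmemg : ∀ (x : H) (hx : x ∈ R.domain), (x, R ⟨x, hx⟩) ∈ R.graph :=
    fun x hx => R.mem_graph ⟨x, hx⟩
  have hRc_of_R : ∀ p : H × H, p ∈ R.graph → p ∈ R.closure.graph := fun p hp => hRcg hp
  -- from closure-graph membership with first component in `R.domain`, get `R.graph` membership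
  have hR_of_Rc : ∀ (x y : H), x ∈ R.domain → (x, y) ∈ R.closure.graph → (x, y) ∈ R.graph := by
    intro x y hx hmem
    have h1 : (x, R ⟨x, hx⟩) ∈ R.closure.graph := hRc_of_R _ (hRmemg x hx)
    have h2 : y = R ⟨x, hx⟩ := R.closure.mem_graph_snd_inj hmem h1 rfl
    rw [h2]; exact hRmemg x hx
  -- The operator `K = R ∘ B⁻¹`
  obtain ⟨K, hK0⟩ := SpecAux.exists_comp_clm R.closure hRclosed Binv
    (fun y => R.le_closure.1 (hRdom (hBinv_dom y)))
  have hK : ∀ y : H, (Binv y, K y) ∈ R.graph :=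
    fun y => hR_of_Rc _ _ (hRdom (hBinv_dom y)) (hK0 y)
  -- Graph characterization of `B2`
  have hB2g : ∀ x y : H, (x, y) ∈ B2.graph ↔
      ∃ w : H, (x, w) ∈ B.graph ∧ (w, y) ∈ B.graph := by
    intro x y
    rw [hB2 x y]
    constructor
    · rintro ⟨hx, hBx, rfl⟩
      refine ⟨B ⟨x, hx⟩, ?_, ?_⟩
      · exact B.mem_graph ⟨x, hx⟩
      · exact B.mem_graph ⟨B ⟨x, hx⟩, hBx⟩
    · rintro ⟨w, h1, h2⟩
      have hx : x ∈ B.domain := LinearPMap.mem_domain_of_mem_graph h1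
      have hw : B ⟨x, hx⟩ = w := B.mem_graph_snd_inj (B.mem_graph ⟨x, hx⟩) h1 rfl
      have hBx : B ⟨x, hx⟩ ∈ B.domain := by
        rw [hw]; exact LinearPMap.mem_domain_of_mem_graph h2
      refine ⟨hx, hBx, ?_⟩
      refine B.mem_graph_snd_inj ?_ h2 hw
      exact B.mem_graph ⟨B ⟨x, hx⟩, hBx⟩
  -- Graph characterization of `M z`
  have hMg : ∀ (z : ℂ) (x y : H), (x, y) ∈ (M z).graph ↔
      ∃ w u r : H, (x, w) ∈ B.graph ∧ (w, u) ∈ B.graph ∧ (x, r) ∈ R.graph ∧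
        y = u - (Complex.I * z) • r - z ^ 2 • x := by
    intro z x y
    constructor
    · intro hxy
      rw [LinearPMap.mem_graph_iff] at hxy
      obtain ⟨x', hx', hval⟩ := hxy
      subst hx'
      have hx2 : (x' : H) ∈ B2.domain := by rw [← hMdom z]; exact x'.2
      obtain ⟨yB2, hyB2⟩ := LinearPMap.mem_domain_iff.mp hx2
      obtain ⟨w, hw1, hw2⟩ := (hB2g _ _).mp hyB2
      have hx : (x' : H) ∈ B.domain := LinearPMap.mem_domain_of_mem_graph hw1
      have hxR : (x' : H) ∈ R.domain := hRdom hx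
      refine ⟨w, yB2, R ⟨(x' : H), hxR⟩, hw1, hw2, ?_, ?_⟩
      · exact R.mem_graph ⟨(x' : H), hxR⟩
      rw [hMval z x' hx2 hxR] at hval
      have hB2v : B2 ⟨(x' : H), hx2⟩ = yB2 :=
        B2.mem_graph_snd_inj (B2.mem_graph ⟨(x' : H), hx2⟩) hyB2 rfl
      rw [hB2v] at hval
      exact hval.symm
    · rintro ⟨w, u, r, hw, hu, hr, rfl⟩
      have hx : x ∈ B.domain := LinearPMap.mem_domain_of_mem_graph hw
      have hx2 : x ∈ B2.domain :=
        LinearPMap.mem_domain_of_mem_graph ((hB2g x u).mpr ⟨w, hw, hu⟩)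
      have hxM : x ∈ (M z).domain := by rw [hMdom]; exact hx2
      have hxR : x ∈ R.domain := hRdom hx
      refine (LinearPMap.mem_graph_iff (M z)).mpr ⟨⟨x, hxM⟩, rfl, ?_⟩
      rw [hMval z ⟨x, hxM⟩ hx2 hxR]
      have h1 : B2 ⟨x, hx2⟩ = u :=
        B2.mem_graph_snd_inj (B2.mem_graph ⟨x, hx2⟩) ((hB2g x u).mpr ⟨w, hw, hu⟩) rfl
      have h2 : R ⟨x, hxR⟩ = r :=
        R.mem_graph_snd_inj (R.mem_graph ⟨x, hxR⟩) hr rfl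
      rw [h1, h2]
  -- Graph characterization of `Q`
  have hQg : ∀ x y : WithLp 2 (H × H), (x, y) ∈ Q.graph ↔
      ∃ b1 b2 r : H, (x.fst, b1) ∈ B.graph ∧ (x.snd, b2) ∈ B.graph ∧ (x.fst, r) ∈ R.graph ∧
        y = (WithLp.equiv 2 (H × H)).symm (-(Complex.I • r) + b2, b1) := by
    intro x y
    constructor
    · intro hxy
      rw [LinearPMap.mem_graph_iff] at hxy
      obtain ⟨x', hx', hval⟩ := hxy
      subst hx'
      obtain ⟨h1, h2⟩ := (hQdom (x' : WithLp 2 (H × H))).mp x'.2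
      have hR : (x' : WithLp 2 (H × H)).fst ∈ R.domain := hRdom h1
      refine ⟨B ⟨(x' : WithLp 2 (H × H)).fst, h1⟩, B ⟨(x' : WithLp 2 (H × H)).snd, h2⟩,
        R ⟨(x' : WithLp 2 (H × H)).fst, hR⟩, ?_, ?_, ?_, ?_⟩
      · exact B.mem_graph ⟨(x' : WithLp 2 (H × H)).fst, h1⟩
      · exact B.mem_graph ⟨(x' : WithLp 2 (H × H)).snd, h2⟩
      · exact R.mem_graph ⟨(x' : WithLp 2 (H × H)).fst, hR⟩
      · have hval' : Q x' = y := hval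
        rw [← hval']
        exact hQval x' h1 h2 hR
    · rintro ⟨b1, b2, r, hb1, hb2, hr, rfl⟩
      have h1 : x.fst ∈ B.domain := LinearPMap.mem_domain_of_mem_graph hb1
      have h2 : x.snd ∈ B.domain := LinearPMap.mem_domain_of_mem_graph hb2
      have hR : x.fst ∈ R.domain := hRdom h1
      have hx : x ∈ Q.domain := (hQdom x).mpr ⟨h1, h2⟩
      refine (LinearPMap.mem_graph_iff Q).mpr ⟨⟨x, hx⟩, rfl, ?_⟩
      rw [hQval ⟨x, hx⟩ h1 h2 hR]
      have e1 : B ⟨x.fst, h1⟩ = b1 := B.mem_graph_snd_inj (B.mem_graph ⟨x.fst, h1⟩) hb1 rfl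
      have e2 : B ⟨x.snd, h2⟩ = b2 := B.mem_graph_snd_inj (B.mem_graph ⟨x.snd, h2⟩) hb2 rfl
      have e3 : R ⟨x.fst, hR⟩ = r := R.mem_graph_snd_inj (R.mem_graph ⟨x.fst, hR⟩) hr rfl
      rw [e1, e2, e3]
  intro z
  constructor
  · -- `Q - z` invertible → `M z` invertible
    rintro ⟨SQ, hSQ1, hSQ2⟩
    set e : WithLp 2 (H × H) ≃L[ℂ] H × H := WithLp.prodContinuousLinearEquiv 2 ℂ H H with he
    set emb : H →L[ℂ] WithLp 2 (H × H) :=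
      e.symm.toContinuousLinearMap.comp ((0 : H →L[ℂ] H).prod Binv) with hemb
    refine ⟨(ContinuousLinearMap.fst ℂ H H).comp
      (e.toContinuousLinearMap.comp (SQ.comp emb)), ?_, ?_⟩
    · intro w
      simp only [zero_smul, add_zero]
      obtain ⟨b1, b2, r, hfb1, hgb2, hfr, heq⟩ := (hQg _ _).mp (hSQ1 (emb w))
      set v : WithLp 2 (H × H) := emb w with hv
      set f : H := (SQ v).fst with hf
      set g : H := (SQ v).snd with hg
      have hfst : (0 : H) + z • f = -(Complex.I • r) + b2 :=
        congrArg (fun t : WithLp 2 (H × H) => t.fst) heq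
      have hsnd : Binv w + z • g = b1 :=
        congrArg (fun t : WithLp 2 (H × H) => t.snd) heq
      have hb2 : b2 = z • f + Complex.I • r := by
        rw [zero_add] at hfst
        rw [hfst]; abel
      have hb1g : (b1, w + z • b2) ∈ B.graph := by
        rw [← hsnd]
        have := B.graph.add_mem (hBinv w) (B.graph.smul_mem z hgb2)
        simpa using this
      show ((SQ v).fst, w) ∈ (M z).graph
      refine (hMg z f w).mpr ⟨b1, w + z • b2, r, hfb1, hb1g, hfr, ?_⟩
      rw [hb2]
      module
    · intro x y hxy
      rw [zero_smul, sub_zero]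
      obtain ⟨w, u, r, hw, hu, hr, rfl⟩ := (hMg z x y).mp hxy
      set g0 : H := Binv (Complex.I • r + z • x) with hg0
      set p : WithLp 2 (H × H) := e.symm (x, g0) with hp
      have hpQ : (p, (e.symm (z • x, w) : WithLp 2 (H × H))) ∈ Q.graph := by
        refine (hQg p _).mpr ⟨w, Complex.I • r + z • x, r, hw, hBinv _, hr, ?_⟩
        refine (WithLp.ext_iff _).mpr (Prod.ext ?_ ?_)
        · show z • x = -(Complex.I • r) + (Complex.I • r + z • x)
          abel
        · rfl
      have hleft := hSQ2 p _ hpQ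
      have harg : (e.symm (z • x, w) : WithLp 2 (H × H)) - z • p =
          emb (u - (Complex.I * z) • r - z ^ 2 • x) := by
        have hsnd2 : Binv (u - (Complex.I * z) • r - z ^ 2 • x) = w - z • g0 := by
          apply hBinv_left
          have h1 : (w - z • g0, u - z • (Complex.I • r + z • x)) ∈ B.graph := by
            have := B.graph.sub_mem hu (B.graph.smul_mem z (hBinv (Complex.I • r + z • x)))
            simpa only [Prod.smul_mk, Prod.mk_sub_mk] using this
          have h2 : u - z • (Complex.I • r + z • x)
              = u - (Complex.I * z) • r - z ^ 2 • x := by module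
          rwa [h2] at h1
        refine (WithLp.ext_iff _).mpr (Prod.ext ?_ ?_)
        · show z • x - z • x = (0 : H)
          exact sub_self _
        · show w - z • g0 = Binv (u - (Complex.I * z) • r - z ^ 2 • x)
          exact hsnd2.symm
      rw [harg] at hleft
      show (SQ (emb (u - (Complex.I * z) • r - z ^ 2 • x))).fst = x
      rw [hleft]
      rfl
  · -- `M z` invertible → `Q - z` invertible
    rintro ⟨SM, hSM1, hSM2⟩
    have hSM1' : ∀ w : H, (SM w, w) ∈ (M z).graph := by
      intro w; have := hSM1 w; simpa using this
    have hSM2' : ∀ x y : H, (x, y) ∈ (M z).graph → SM y = x := by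
      intro x y h; have := hSM2 x y h; simpa using this
    have hSMdom : ∀ w : H, SM w ∈ B.domain := by
      intro w
      obtain ⟨w', u', r', h1, _, _, _⟩ := (hMg z _ _).mp (hSM1' w)
      exact LinearPMap.mem_domain_of_mem_graph h1
    obtain ⟨BS, hBS⟩ := SpecAux.exists_comp_clm B hBclosed SM hSMdom
    obtain ⟨RS0, hRS0⟩ := SpecAux.exists_comp_clm R.closure hRclosed SM
      (fun w => R.le_closure.1 (hRdom (hSMdom w)))
    have hRS : ∀ w : H, (SM w, RS0 w) ∈ R.graph :=
      fun w => hR_of_Rc _ _ (hRdom (hSMdom w)) (hRS0 w)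
    have hBBS : ∀ w : H, (BS w, w + (Complex.I * z) • RS0 w + z ^ 2 • SM w) ∈ B.graph := by
      intro w
      obtain ⟨w', u', r', h1, h2, h3, heq⟩ := (hMg z _ _).mp (hSM1' w)
      have hw' : w' = BS w := B.mem_graph_snd_inj h1 (hBS w) rfl
      have hr' : r' = RS0 w := R.mem_graph_snd_inj h3 (hRS w) rfl
      subst hw' hr'
      have h' : u' - ((Complex.I * z) • RS0 w + z ^ 2 • SM w) = w := by
        rw [← sub_sub]; exact heq.symm
      have hu' : u' = w + ((Complex.I * z) • RS0 w + z ^ 2 • SM w) :=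
        sub_eq_iff_eq_add.mp h'
      rw [hu'] at h2
      rw [← add_assoc] at h2
      exact h2
    set P1 := ContinuousLinearMap.fst ℂ H H with hP1
    set P2 := ContinuousLinearMap.snd ℂ H H with hP2
    set qC : (H × H) →L[ℂ] H := P1 + Complex.I • (K.comp P2) + z • (Binv.comp P2) with hqC
    set fC : (H × H) →L[ℂ] H := Binv.comp P2 + z • (SM.comp qC) with hfC
    set rC : (H × H) →L[ℂ] H := K.comp P2 + z • (RS0.comp qC) with hrC
    set gC : (H × H) →L[ℂ] H :=
      Binv.comp P1 + Complex.I • (Binv.comp rC) + z • (Binv.comp fC) with hgC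
    set e : WithLp 2 (H × H) ≃L[ℂ] H × H := WithLp.prodContinuousLinearEquiv 2 ℂ H H with he
    refine ⟨e.symm.toContinuousLinearMap.comp ((fC.prod gC).comp e.toContinuousLinearMap),
      ?_, ?_⟩
    · intro w
      set u : H := w.fst with hu
      set v : H := w.snd with hv
      set q : H := u + Complex.I • K v + z • Binv v with hq
      set f : H := Binv v + z • SM q with hfdef
      set r : H := K v + z • RS0 q with hrdef
      have hfg : (f, v + z • BS q) ∈ B.graph := by
        have := B.graph.add_mem (hBinv v) (B.graph.smul_mem z (hBS q))
        simpa only [Prod.smul_mk, Prod.mk_add_mk] using this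
      have hfr : (f, r) ∈ R.graph := by
        have := R.graph.add_mem (hK v) (R.graph.smul_mem z (hRS q))
        simpa only [Prod.smul_mk, Prod.mk_add_mk] using this
      have hkey : Binv (u + Complex.I • r + z • f) = BS q := by
        have ht : u + Complex.I • r + z • f
            = q + (Complex.I * z) • RS0 q + z ^ 2 • SM q := by
          rw [hrdef, hfdef, hq]; module
        exact huniq _ _ _ (ht ▸ hBinv (u + Complex.I • r + z • f)) (hBBS q)
      have hfb1 : (f, v + z • Binv (u + Complex.I • r + z • f)) ∈ B.graph := by
        rw [hkey]; exact hfg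
      have hgval : gC (u, v) = Binv (u + Complex.I • r + z • f) := by
        show Binv u + Complex.I • Binv (rC (u, v)) + z • Binv (fC (u, v))
          = Binv (u + Complex.I • r + z • f)
        rw [show rC (u, v) = r from rfl, show fC (u, v) = f from rfl]
        simp only [map_add, map_smul]
      refine (hQg _ _).mpr ⟨v + z • Binv (u + Complex.I • r + z • f),
        u + Complex.I • r + z • f, r, ?_, ?_, ?_, ?_⟩
      · exact hfb1
      · show (gC (u, v), u + Complex.I • r + z • f) ∈ B.graph
        rw [hgval]
        exact hBinv _
      · exact hfr
      · refine (WithLp.ext_iff _).mpr (Prod.ext ?_ ?_)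
        · show u + z • f = -(Complex.I • r) + (u + Complex.I • r + z • f)
          abel
        · show v + z • gC (u, v) = v + z • Binv (u + Complex.I • r + z • f)
          rw [hgval]
    · intro x y hxy
      obtain ⟨b1, b2, r, hb1, hb2, hr, rfl⟩ := (hQg x y).mp hxy
      set xf : H := x.fst with hxf
      set xg : H := x.snd with hxg
      have hBb1 : Binv b1 = xf := hBinv_left _ _ hb1
      have hBb2 : Binv b2 = xg := hBinv_left _ _ hb2
      set u : H := -(Complex.I • r) + b2 - z • xf with hu
      set v : H := b1 - z • xg with hv
      have hBv : Binv v = xf - z • Binv xg := by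
        rw [hv, map_sub, map_smul, hBb1]
      have hKv : K v = r - z • K xg := by
        have hy : (xf - z • Binv xg, r - z • K xg) ∈ R.graph := by
          have := R.graph.sub_mem hr (R.graph.smul_mem z (hK xg))
          simpa only [Prod.smul_mk, Prod.mk_sub_mk] using this
        exact R.mem_graph_snd_inj (hK v) hy hBv
      set q : H := u + Complex.I • K v + z • Binv v with hq
      have hqval : q = b2 - (Complex.I * z) • K xg - z ^ 2 • Binv xg := by
        rw [hq, hKv, hBv, hu]; module
      have hMq : (Binv xg, q) ∈ (M z).graph :=
        (hMg z _ _).mpr ⟨xg, b2, K xg, hBinv xg, hb2, hK xg, hqval⟩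
      have hSMq : SM q = Binv xg := hSM2' _ _ hMq
      have hRSq : RS0 q = K xg := by
        refine R.mem_graph_snd_inj (hRS q) (hK xg) ?_
        rw [hSMq]
      have hfcomp : fC (u, v) = xf := by
        show Binv v + z • SM (qC (u, v)) = xf
        rw [show qC (u, v) = q from rfl, hSMq, hBv]
        abel
      have hrcomp : rC (u, v) = r := by
        show K v + z • RS0 (qC (u, v)) = r
        rw [show qC (u, v) = q from rfl, hRSq, hKv]
        abel
      have hgcomp : gC (u, v) = xg := by
        show Binv u + Complex.I • Binv (rC (u, v)) + z • Binv (fC (u, v)) = xg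
        rw [hrcomp, hfcomp, ← hBb2, ← map_smul, ← map_smul, ← map_add, ← map_add]
        congr 1
        rw [hu]
        abel
      refine (WithLp.ext_iff _).mpr (Prod.ext ?_ ?_)
      · show fC (u, v) = xf
        exact hfcomp
      · show gC (u, v) = xg
        exact hgcomp
end
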